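/- arXiv:2111.06270 — 10 statements merged into one kernel-verified Lean document; each statement's English description precedes it below -/
import Mathlib

section
/- For every c = (c₁₁,c₁₂,c₂₁,c₂₂) ∈ ℝ⁴, there exist u,v ∈ ℝ such that the matrix C(c,u,v) is positive semidefinite if and only if c ∈ [−1,1]⁴ and (g(c) ≥ 0 or h(c) ≥ 0). -/
open Matrix
set_option maxHeartbeats 1000000

/-- The 4×4 matrix `C(c,u,v)` with rows `(1,u,c₁₁,c₁₂)`, `(u,1,c₂₁,c₂₂)`,
`(c₁₁,c₂₁,1,v)`, `(c₁₂,c₂₂,v,1)`, where `c = (c 0, c 1, c 2, c 3) = (c₁₁,c₁₂,c₂₁,c₂₂)`. -/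
def Cmat (c : Fin 4 → ℝ) (u v : ℝ) : Matrix (Fin 4) (Fin 4) ℝ :=
  !![1, u, c 0, c 1;
     u, 1, c 2, c 3;
     c 0, c 2, 1, v;
     c 1, c 3, v, 1]

/-- The quantum correlation body `Q`. -/
def Qbody : Set (Fin 4 → ℝ) := {c | ∃ u v : ℝ, (Cmat c u v).PosSemidef}

/-- The polynomial `g`. -/
def gpoly (c : Fin 4 → ℝ) : ℝ :=
  2 - (c 0 ^ 2 + c 1 ^ 2 + c 2 ^ 2 + c 3 ^ 2) + 2 * c 0 * c 1 * c 2 * c 3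

/-- The polynomial `h`. -/
def hpoly (c : Fin 4 → ℝ) : ℝ :=
  4 * (1 - c 0 ^ 2) * (1 - c 1 ^ 2) * (1 - c 2 ^ 2) * (1 - c 3 ^ 2) - gpoly c ^ 2

/-- Auxiliary: the Gram-matrix construction showing positive semidefiniteness. -/
lemma cmat_posSemidef_of_gram (c : Fin 4 → ℝ) (u w b1 b2 g1 g2 : ℝ)
    (hw2 : w ^ 2 = 1 - u ^ 2)
    (hb1 : w * b1 = c 2 - u * c 0) (hb2 : w * b2 = c 3 - u * c 1)
    (hg1 : g1 ^ 2 = 1 - c 0 ^ 2 - b1 ^ 2) (hg2 : g2 ^ 2 = 1 - c 1 ^ 2 - b2 ^ 2) :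
    (Cmat c u (c 0 * c 1 + b1 * b2)).PosSemidef := by
  set L : Matrix (Fin 4) (Fin 4) ℝ :=
    !![1, u, c 0, c 1; 0, w, b1, b2; 0, 0, g1, 0; 0, 0, 0, g2] with hL
  have hLH : Lᴴ = !![1, 0, 0, 0; u, w, 0, 0; c 0, b1, g1, 0; c 1, b2, 0, g2] := by
    ext i j
    fin_cases i <;> fin_cases j <;> simp [hL, Matrix.vecHead, Matrix.vecTail]
  have key : Cmat c u (c 0 * c 1 + b1 * b2) = Lᴴ * L := by
    rw [hLH, hL]
    ext i j
    fin_cases i <;> fin_cases j <;>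
      simp [Cmat, Matrix.mul_apply, Fin.sum_univ_four, Matrix.vecHead, Matrix.vecTail] <;>
      first
        | ring1
        | linear_combination hw2 | linear_combination hb1 | linear_combination hb2
        | linear_combination hg1 | linear_combination hg2
        | linear_combination -hw2 | linear_combination -hb1 | linear_combination -hb2
        | linear_combination -hg1 | linear_combination -hg2
  rw [key]
  exact Matrix.posSemidef_conjTranspose_mul_self L

lemma aux_sq_le (x m r : ℝ) (h1 : m - r ≤ x) (h2 : x ≤ m + r) : (x - m) ^ 2 ≤ r ^ 2 := by
  nlinarith

lemma aux_sq_le_one (a : ℝ) (h1 : -1 ≤ a) (h2 : a ≤ 1) : a ^ 2 ≤ 1 := by nlinarith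

lemma aux_deg (u c0 c2 t : ℝ) (hA1 : (u - c0 * c2) ^ 2 ≤ t ^ 2)
    (ht2 : t ^ 2 = (1 - c0 ^ 2) * (1 - c2 ^ 2)) (h1 : 1 - u ^ 2 = 0) :
    (u * c0 - c2) ^ 2 ≤ 0 := by
  have h2 : (1 - u ^ 2) * (1 - c0 ^ 2) = 0 := by rw [h1]; ring
  nlinarith [hA1, ht2, h2]

lemma aux_b (u c0 c2 t : ℝ) (hA1 : (u - c0 * c2) ^ 2 ≤ t ^ 2)
    (ht2 : t ^ 2 = (1 - c0 ^ 2) * (1 - c2 ^ 2)) :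
    (c2 - u * c0) ^ 2 ≤ (1 - c0 ^ 2) * (1 - u ^ 2) := by
  nlinarith [hA1, ht2]

lemma aux_t_le (a b : ℝ) (ha : a ^ 2 ≤ 1) (hb : b ^ 2 ≤ 1) :
    Real.sqrt ((1 - a ^ 2) * (1 - b ^ 2)) ≤ 1 - a * b := by
  have h1 : (1 - a ^ 2) * (1 - b ^ 2) ≤ (1 - a * b) ^ 2 := by nlinarith [sq_nonneg (a - b)]
  calc Real.sqrt ((1 - a ^ 2) * (1 - b ^ 2)) ≤ Real.sqrt ((1 - a * b) ^ 2) :=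
        Real.sqrt_le_sqrt h1
    _ = |1 - a * b| := Real.sqrt_sq_eq_abs _
    _ = 1 - a * b := abs_of_nonneg (by nlinarith)

lemma aux_t_le' (a b : ℝ) (ha : a ^ 2 ≤ 1) (hb : b ^ 2 ≤ 1) :
    Real.sqrt ((1 - a ^ 2) * (1 - b ^ 2)) ≤ 1 + a * b := by
  have h1 : (1 - a ^ 2) * (1 - b ^ 2) ≤ (1 + a * b) ^ 2 := by nlinarith [sq_nonneg (a + b)]
  calc Real.sqrt ((1 - a ^ 2) * (1 - b ^ 2)) ≤ Real.sqrt ((1 + a * b) ^ 2) :=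
        Real.sqrt_le_sqrt h1
    _ = |1 + a * b| := Real.sqrt_sq_eq_abs _
    _ = 1 + a * b := abs_of_nonneg (by nlinarith)

theorem stmt0 (c : Fin 4 → ℝ) :
    (∃ u v : ℝ, (Cmat c u v).PosSemidef) ↔
      (∀ i, c i ∈ Set.Icc (-1 : ℝ) 1) ∧ (0 ≤ gpoly c ∨ 0 ≤ hpoly c) := by
  constructor
  · rintro ⟨u, v, hpsd⟩
    have hq := (Matrix.posSemidef_iff_dotProduct_mulVec.mp hpsd).2
    have e0p := hq ![1, 0, 1, 0]
    have e0m := hq ![1, 0, -1, 0]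
    have e1p := hq ![1, 0, 0, 1]
    have e1m := hq ![1, 0, 0, -1]
    have e2p := hq ![0, 1, 1, 0]
    have e2m := hq ![0, 1, -1, 0]
    have e3p := hq ![0, 1, 0, 1]
    have e3m := hq ![0, 1, 0, -1]
    have eup := hq ![1, 1, 0, 0]
    have eum := hq ![1, -1, 0, 0]
    have exA1 := hq ![u * c 2 - c 0, u * c 0 - c 2, 1 - u ^ 2, 0]
    have exE1 := hq ![1, -u, u * c 2 - c 0, 0]
    have exA2 := hq ![u * c 3 - c 1, u * c 1 - c 3, 0, 1 - u ^ 2]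
    have exE2 := hq ![1, -u, 0, u * c 3 - c 1]
    simp [Cmat, dotProduct, Matrix.mulVec, Fin.sum_univ_four] at e0p e0m e1p e1m e2p e2m e3p e3m eup eum exA1 exE1 exA2 exE2
    have hu2 : u ^ 2 ≤ 1 := by nlinarith
    -- A1 := 1 - c0² - c2² - u² + 2 u c0 c2 ≥ 0
    have hA1 : 0 ≤ 1 - c 0 ^ 2 - c 2 ^ 2 - u ^ 2 + 2 * u * c 0 * c 2 := by
      rcases lt_or_eq_of_le hu2 with h | h
      · by_contra hcon
        push_neg at hcon
        nlinarith [mul_pos (by linarith : (0:ℝ) < 1 - u ^ 2) (by linarith : (0:ℝ) <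
          -(1 - c 0 ^ 2 - c 2 ^ 2 - u ^ 2 + 2 * u * c 0 * c 2))]
      · have h2 : (c 0 - u * c 2) ^ 2 = 0 := le_antisymm (by nlinarith) (sq_nonneg _)
        have h3 : c 0 - u * c 2 = 0 := by
          exact (pow_eq_zero_iff two_ne_zero).mp h2
        nlinarith [h3, h]
    have hA2 : 0 ≤ 1 - c 1 ^ 2 - c 3 ^ 2 - u ^ 2 + 2 * u * c 1 * c 3 := by
      rcases lt_or_eq_of_le hu2 with h | h
      · by_contra hcon
        push_neg at hcon
        nlinarith [mul_pos (by linarith : (0:ℝ) < 1 - u ^ 2) (by linarith : (0:ℝ) <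
          -(1 - c 1 ^ 2 - c 3 ^ 2 - u ^ 2 + 2 * u * c 1 * c 3))]
      · have h2 : (c 1 - u * c 3) ^ 2 = 0 := le_antisymm (by nlinarith) (sq_nonneg _)
        have h3 : c 1 - u * c 3 = 0 := by
          exact (pow_eq_zero_iff two_ne_zero).mp h2
        nlinarith [h3, h]
    refine ⟨fun i => ?_, ?_⟩
    · have hi : i = 0 ∨ i = 1 ∨ i = 2 ∨ i = 3 := by omega
      rcases hi with h | h | h | h <;> subst h <;>
        exact ⟨by linarith, by linarith⟩
    · rcases le_or_gt 0 (gpoly c) with hg | hg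
      · exact Or.inl hg
      · right
        unfold hpoly gpoly at *
        nlinarith [hA1, hA2, hg, mul_nonneg hA1 hA2,
          sq_nonneg (u - c 0 * c 2), sq_nonneg (u - c 1 * c 3),
          mul_nonneg hA1 (sq_nonneg (u - c 1 * c 3)),
          mul_nonneg hA2 (sq_nonneg (u - c 0 * c 2)),
          mul_nonneg hA1 (le_of_lt (neg_pos.mpr hg)),
          mul_nonneg hA2 (le_of_lt (neg_pos.mpr hg))]
  · rintro ⟨hbox, hgh⟩
    obtain ⟨h0l, h0r⟩ := hbox 0
    obtain ⟨h1l, h1r⟩ := hbox 1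
    obtain ⟨h2l, h2r⟩ := hbox 2
    obtain ⟨h3l, h3r⟩ := hbox 3
    have hs02 : (0:ℝ) ≤ (1 - c 0 ^ 2) * (1 - c 2 ^ 2) :=
      mul_nonneg (by nlinarith) (by nlinarith)
    have hs13 : (0:ℝ) ≤ (1 - c 1 ^ 2) * (1 - c 3 ^ 2) :=
      mul_nonneg (by nlinarith) (by nlinarith)
    set t : ℝ := Real.sqrt ((1 - c 0 ^ 2) * (1 - c 2 ^ 2)) with htdef
    set t' : ℝ := Real.sqrt ((1 - c 1 ^ 2) * (1 - c 3 ^ 2)) with htdef'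
    have ht0 : 0 ≤ t := Real.sqrt_nonneg _
    have ht0' : 0 ≤ t' := Real.sqrt_nonneg _
    have ht2 : t ^ 2 = (1 - c 0 ^ 2) * (1 - c 2 ^ 2) := Real.sq_sqrt hs02
    have ht2' : t' ^ 2 = (1 - c 1 ^ 2) * (1 - c 3 ^ 2) := Real.sq_sqrt hs13
    -- key inequality : |c0c2 - c1c3| ≤ t + t'
    have key : (c 0 * c 2 - c 1 * c 3) ^ 2 ≤ (t + t') ^ 2 := by
      rcases hgh with hg | hh
      · unfold gpoly at hg
        nlinarith [mul_nonneg ht0 ht0']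
      · unfold hpoly gpoly at hh
        nlinarith [mul_nonneg ht0 ht0', ht2, ht2',
          sq_nonneg (2 * t * t' + (2 - (c 0 ^ 2 + c 1 ^ 2 + c 2 ^ 2 + c 3 ^ 2)
            + 2 * c 0 * c 1 * c 2 * c 3))]
    have key1 : c 0 * c 2 - c 1 * c 3 ≤ t + t' := by nlinarith [add_nonneg ht0 ht0']
    have key2 : c 1 * c 3 - c 0 * c 2 ≤ t + t' := by nlinarith [add_nonneg ht0 ht0']
    set u : ℝ := max (c 0 * c 2 - t) (c 1 * c 3 - t') with hudef
    have hu1 : c 0 * c 2 - t ≤ u := le_max_left _ _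
    have hu3 : c 1 * c 3 - t' ≤ u := le_max_right _ _
    have hu2 : u ≤ c 0 * c 2 + t := max_le (by linarith) (by linarith)
    have hu4 : u ≤ c 1 * c 3 + t' := max_le (by linarith) (by linarith)
    have hA1 : (u - c 0 * c 2) ^ 2 ≤ t ^ 2 := aux_sq_le u (c 0 * c 2) t hu1 hu2
    have hA2 : (u - c 1 * c 3) ^ 2 ≤ t' ^ 2 := aux_sq_le u (c 1 * c 3) t' hu3 hu4
    have hc0sq : c 0 ^ 2 ≤ 1 := aux_sq_le_one _ h0l h0r
    have hc1sq : c 1 ^ 2 ≤ 1 := aux_sq_le_one _ h1l h1r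
    have hc2sq : c 2 ^ 2 ≤ 1 := aux_sq_le_one _ h2l h2r
    have hc3sq : c 3 ^ 2 ≤ 1 := aux_sq_le_one _ h3l h3r
    have htle1 : t ≤ 1 - c 0 * c 2 := htdef ▸ aux_t_le (c 0) (c 2) hc0sq hc2sq
    have htle2 : t ≤ 1 + c 0 * c 2 := htdef ▸ aux_t_le' (c 0) (c 2) hc0sq hc2sq
    have husq : u ^ 2 ≤ 1 := aux_sq_le_one u (by linarith) (by linarith)
    set w : ℝ := Real.sqrt (1 - u ^ 2) with hwdef
    have hw0 : 0 ≤ w := Real.sqrt_nonneg _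
    have hw2 : w ^ 2 = 1 - u ^ 2 := Real.sq_sqrt (by linarith)
    have hdeg : w = 0 → c 2 = u * c 0 ∧ c 3 = u * c 1 := by
      intro h
      have h1 : 1 - u ^ 2 = 0 := by rw [← hw2, h]; ring
      constructor
      · have h2 : (u * c 0 - c 2) ^ 2 = 0 :=
          le_antisymm (aux_deg u (c 0) (c 2) t hA1 ht2 h1) (sq_nonneg _)
        have h3 := (pow_eq_zero_iff two_ne_zero).mp h2
        linarith
      · have h2 : (u * c 1 - c 3) ^ 2 = 0 :=
          le_antisymm (aux_deg u (c 1) (c 3) t' hA2 ht2' h1) (sq_nonneg _)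
        have h3 := (pow_eq_zero_iff two_ne_zero).mp h2
        linarith
    set b1 : ℝ := (c 2 - u * c 0) / w with hb1def
    set b2 : ℝ := (c 3 - u * c 1) / w with hb2def
    have hb1 : w * b1 = c 2 - u * c 0 := by
      by_cases hw : w = 0
      · rw [hw, (hdeg hw).1]; ring
      · rw [hb1def, mul_div_cancel₀ _ hw]
    have hb2 : w * b2 = c 3 - u * c 1 := by
      by_cases hw : w = 0
      · rw [hw, (hdeg hw).2]; ring
      · rw [hb2def, mul_div_cancel₀ _ hw]
    have hb1sq : b1 ^ 2 ≤ 1 - c 0 ^ 2 := by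
      by_cases hw : w = 0
      · have hb10 : b1 = 0 := by rw [hb1def, (hdeg hw).1]; simp
        rw [hb10]
        have h00 : (0:ℝ) ^ 2 = 0 := by norm_num
        rw [h00]
        linarith [hc0sq]
      · have hwpos : 0 < w ^ 2 := pow_pos (lt_of_le_of_ne hw0 (Ne.symm hw)) 2
        rw [hb1def, div_pow, div_le_iff₀ hwpos, hw2]
        exact aux_b u (c 0) (c 2) t hA1 ht2
    have hb2sq : b2 ^ 2 ≤ 1 - c 1 ^ 2 := by
      by_cases hw : w = 0
      · have hb20 : b2 = 0 := by rw [hb2def, (hdeg hw).2]; simp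
        rw [hb20]
        have h00 : (0:ℝ) ^ 2 = 0 := by norm_num
        rw [h00]
        linarith [hc1sq]
      · have hwpos : 0 < w ^ 2 := pow_pos (lt_of_le_of_ne hw0 (Ne.symm hw)) 2
        rw [hb2def, div_pow, div_le_iff₀ hwpos, hw2]
        exact aux_b u (c 1) (c 3) t' hA2 ht2'
    set g1 : ℝ := Real.sqrt (1 - c 0 ^ 2 - b1 ^ 2) with hg1def
    set g2 : ℝ := Real.sqrt (1 - c 1 ^ 2 - b2 ^ 2) with hg2def
    have hg1 : g1 ^ 2 = 1 - c 0 ^ 2 - b1 ^ 2 := Real.sq_sqrt (by linarith)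
    have hg2 : g2 ^ 2 = 1 - c 1 ^ 2 - b2 ^ 2 := Real.sq_sqrt (by linarith)
    exact ⟨u, c 0 * c 1 + b1 * b2,
      cmat_posSemidef_of_gram c u w b1 b2 g1 g2 hw2 hb1 hb2 hg1 hg2⟩
end

section
/- The quantum correlation body Q equals the convex hull in ℝ⁴ of the set {(cos α, cos β, cos γ, cos δ) : α,β,γ,δ ∈ ℝ with α+β+γ+δ = 0}. -/
set_option maxHeartbeats 1000000

open Real Matrix

def Sset : Set (Fin 4 → ℝ) := {x : Fin 4 → ℝ | ∃ α β γ δ : ℝ, α + β + γ + δ = 0 ∧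
      x = ![Real.cos α, Real.cos β, Real.cos γ, Real.cos δ]}

lemma circle_param (x y : ℝ) (h : x^2 + y^2 = 1) : ∃ θ : ℝ, cos θ = x ∧ sin θ = y := by
  have hx1 : x ≤ 1 := by nlinarith [sq_nonneg y]
  have hx2 : -1 ≤ x := by nlinarith [sq_nonneg y]
  rcases le_or_gt 0 y with hy | hy
  · refine ⟨arccos x, Real.cos_arccos hx2 hx1, ?_⟩
    rw [Real.sin_arccos]
    rw [show 1 - x^2 = y^2 by linarith, Real.sqrt_sq hy]
  · refine ⟨-arccos x, by rw [Real.cos_neg, Real.cos_arccos hx2 hx1], ?_⟩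
    rw [Real.sin_neg, Real.sin_arccos, show 1 - x^2 = y^2 by linarith, Real.sqrt_sq_eq_abs,
      abs_of_neg hy, neg_neg]

lemma disk_decomp (p q : ℝ) (h : p^2 + q^2 ≤ 1) :
    ∃ μ τ₁ τ₂ : ℝ, 0 ≤ μ ∧ μ ≤ 1 ∧ p = μ * cos τ₁ + (1-μ) * cos τ₂ ∧
      q = μ * sin τ₁ + (1-μ) * sin τ₂ := by
  rcases eq_or_lt_of_le (by positivity : (0:ℝ) ≤ p^2 + q^2) with h0 | h0
  · have hp : p = 0 := by nlinarith [sq_nonneg p, sq_nonneg q]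
    have hq : q = 0 := by nlinarith [sq_nonneg p, sq_nonneg q]
    exact ⟨1/2, 0, π, by norm_num, by norm_num, by simp [hp]; norm_num, by simp [hq]⟩
  · set r := Real.sqrt (p^2 + q^2) with hr
    have hrpos : 0 < r := Real.sqrt_pos.mpr h0
    have hr2 : r^2 = p^2 + q^2 := Real.sq_sqrt (le_of_lt h0)
    have hr1 : r ≤ 1 := by nlinarith
    obtain ⟨θ, hc, hs⟩ := circle_param (p/r) (q/r) (by field_simp; linarith)
    refine ⟨(1+r)/2, θ, θ + π, by linarith, by linarith, ?_, ?_⟩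
    · rw [Real.cos_add_pi, hc]; field_simp; ring
    · rw [Real.sin_add_pi, hs]; field_simp; ring

lemma cs4 (a b c d x y z w : ℝ) :
    (a*x + b*y + c*z + d*w)^2 ≤ (a^2+b^2+c^2+d^2) * (x^2+y^2+z^2+w^2) := by
  nlinarith [sq_nonneg (a*y - b*x), sq_nonneg (a*z - c*x), sq_nonneg (a*w - d*x),
    sq_nonneg (b*z - c*y), sq_nonneg (b*w - d*y), sq_nonneg (c*w - d*z)]

lemma P_mem (σ₁ σ₂ τ₁ τ₂ : ℝ) :
    ![cos (σ₁-τ₁), cos (σ₁-τ₂), cos (σ₂-τ₁), cos (σ₂-τ₂)] ∈ Sset := by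
  refine ⟨σ₁-τ₁, τ₂-σ₁, τ₁-σ₂, σ₂-τ₂, by ring, ?_⟩
  funext i
  fin_cases i <;> simp
  · rw [show σ₁ - τ₂ = -(τ₂ - σ₁) by ring, Real.cos_neg]
  · rw [show σ₂ - τ₁ = -(τ₁ - σ₂) by ring, Real.cos_neg]

lemma mem_hull (σ₁ σ₂ p₁ q₁ p₂ q₂ : ℝ) (h1 : p₁^2 + q₁^2 ≤ 1) (h2 : p₂^2 + q₂^2 ≤ 1) :
    ![cos σ₁ * p₁ + sin σ₁ * q₁, cos σ₁ * p₂ + sin σ₁ * q₂,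
      cos σ₂ * p₁ + sin σ₂ * q₁, cos σ₂ * p₂ + sin σ₂ * q₂] ∈ convexHull ℝ Sset := by
  obtain ⟨μ, a, b, hμ0, hμ1, hp1, hq1⟩ := disk_decomp p₁ q₁ h1
  obtain ⟨ν, s, t, hν0, hν1, hp2, hq2⟩ := disk_decomp p₂ q₂ h2
  have hK : Convex ℝ (convexHull ℝ Sset) := convex_convexHull ℝ Sset
  have m : ∀ τ₁ τ₂, ![cos (σ₁-τ₁), cos (σ₁-τ₂), cos (σ₂-τ₁), cos (σ₂-τ₂)] ∈ convexHull ℝ Sset :=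
    fun τ₁ τ₂ => subset_convexHull ℝ Sset (P_mem σ₁ σ₂ τ₁ τ₂)
  have A : ν • ![cos (σ₁-a), cos (σ₁-s), cos (σ₂-a), cos (σ₂-s)]
      + (1-ν) • ![cos (σ₁-a), cos (σ₁-t), cos (σ₂-a), cos (σ₂-t)] ∈ convexHull ℝ Sset :=
    hK (m a s) (m a t) hν0 (by linarith : (0:ℝ) ≤ 1-ν) (by ring)
  have B : ν • ![cos (σ₁-b), cos (σ₁-s), cos (σ₂-b), cos (σ₂-s)]
      + (1-ν) • ![cos (σ₁-b), cos (σ₁-t), cos (σ₂-b), cos (σ₂-t)] ∈ convexHull ℝ Sset :=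
    hK (m b s) (m b t) hν0 (by linarith : (0:ℝ) ≤ 1-ν) (by ring)
  have hfin := hK A B hμ0 (by linarith : (0:ℝ) ≤ 1-μ) (by ring)
  convert hfin using 1
  funext i
  fin_cases i <;>
    simp [Real.cos_sub, Pi.smul_apply, smul_eq_mul, hp1, hq1, hp2, hq2] <;> ring

lemma mem_hull' (u r p₁ q₁ p₂ q₂ : ℝ) (hur : u^2 + r^2 = 1)
    (h1 : p₁^2 + q₁^2 ≤ 1) (h2 : p₂^2 + q₂^2 ≤ 1) :
    ![p₁, p₂, u*p₁ + r*q₁, u*p₂ + r*q₂] ∈ convexHull ℝ Sset := by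
  obtain ⟨σ, hc, hs⟩ := circle_param u r hur
  have h := mem_hull 0 σ p₁ q₁ p₂ q₂ h1 h2
  simpa [hc, hs] using h

lemma key_alg (c : Fin 4 → ℝ) (u : ℝ)
    (a0 a1 a2 a3 b0 b1 b2 b3 x0 x1 x2 x3 y0 y1 y2 y3 : ℝ)
    (ha : a0^2+a1^2+a2^2+a3^2 = 1) (hb : b0^2+b1^2+b2^2+b3^2 = 1)
    (hx : x0^2+x1^2+x2^2+x3^2 = 1) (hy : y0^2+y1^2+y2^2+y3^2 = 1)
    (hab : a0*b0+a1*b1+a2*b2+a3*b3 = u)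
    (hax : a0*x0+a1*x1+a2*x2+a3*x3 = c 0)
    (hay : a0*y0+a1*y1+a2*y2+a3*y3 = c 1)
    (hbx : b0*x0+b1*x1+b2*x2+b3*x3 = c 2)
    (hby : b0*y0+b1*y1+b2*y2+b3*y3 = c 3) :
    c ∈ convexHull ℝ Sset := by
  have hu2 : u^2 ≤ 1 := by
    have h := cs4 a0 a1 a2 a3 b0 b1 b2 b3
    rw [hab, ha, hb] at h
    linarith
  have hwt : (b0-u*a0)*(x0-c 0*a0) + (b1-u*a1)*(x1-c 0*a1) + (b2-u*a2)*(x2-c 0*a2)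
      + (b3-u*a3)*(x3-c 0*a3) = c 2 - u * c 0 := by
    linear_combination hbx - c 0 * hab - u * hax + (u * c 0) * ha
  have hww : (b0-u*a0)^2 + (b1-u*a1)^2 + (b2-u*a2)^2 + (b3-u*a3)^2 = 1 - u^2 := by
    linear_combination hb - 2*u*hab + u^2*ha
  have htt : (x0-c 0*a0)^2 + (x1-c 0*a1)^2 + (x2-c 0*a2)^2 + (x3-c 0*a3)^2 = 1 - (c 0)^2 := by
    linear_combination hx - 2*(c 0)*hax + (c 0)^2*ha
  have B1 := cs4 (b0-u*a0) (b1-u*a1) (b2-u*a2) (b3-u*a3)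
    (x0-c 0*a0) (x1-c 0*a1) (x2-c 0*a2) (x3-c 0*a3)
  rw [hwt, hww, htt] at B1
  have hwt' : (b0-u*a0)*(y0-c 1*a0) + (b1-u*a1)*(y1-c 1*a1) + (b2-u*a2)*(y2-c 1*a2)
      + (b3-u*a3)*(y3-c 1*a3) = c 3 - u * c 1 := by
    linear_combination hby - c 1 * hab - u * hay + (u * c 1) * ha
  have htt' : (y0-c 1*a0)^2 + (y1-c 1*a1)^2 + (y2-c 1*a2)^2 + (y3-c 1*a3)^2 = 1 - (c 1)^2 := by
    linear_combination hy - 2*(c 1)*hay + (c 1)^2*ha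
  have B2 := cs4 (b0-u*a0) (b1-u*a1) (b2-u*a2) (b3-u*a3)
    (y0-c 1*a0) (y1-c 1*a1) (y2-c 1*a2) (y3-c 1*a3)
  rw [hwt', hww, htt'] at B2
  rcases lt_or_ge (u^2) 1 with hu | hu
  · -- nondegenerate case
    set r := Real.sqrt (1 - u^2) with hrdef
    have hr2 : r^2 = 1 - u^2 := Real.sq_sqrt (by linarith)
    have hrpos : 0 < r := Real.sqrt_pos.mpr (by linarith)
    have hrne : r ≠ 0 := ne_of_gt hrpos
    have key1 : ((c 2 - u * c 0)/r)^2 ≤ 1 - (c 0)^2 := by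
      rw [div_pow, hr2, div_le_iff₀ (by linarith : (0:ℝ) < 1 - u^2)]
      linarith [B1]
    have key2 : ((c 3 - u * c 1)/r)^2 ≤ 1 - (c 1)^2 := by
      rw [div_pow, hr2, div_le_iff₀ (by linarith : (0:ℝ) < 1 - u^2)]
      linarith [B2]
    have h1 : (c 0)^2 + ((c 2 - u * c 0)/r)^2 ≤ 1 := by linarith
    have h2 : (c 1)^2 + ((c 3 - u * c 1)/r)^2 ≤ 1 := by linarith
    have hmem := mem_hull' u r (c 0) ((c 2 - u * c 0)/r) (c 1) ((c 3 - u * c 1)/r)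
      (by linarith) h1 h2
    have hceq : c = ![c 0, c 1, u * c 0 + r * ((c 2 - u * c 0)/r),
        u * c 1 + r * ((c 3 - u * c 1)/r)] := by
      funext i
      fin_cases i <;> simp [Matrix.vecHead, Matrix.vecTail]
      · field_simp; ring
      · field_simp; ring
    rw [hceq]; exact hmem
  · -- degenerate case : u^2 = 1
    have hu1 : u^2 = 1 := le_antisymm hu2 hu
    have hz : (b0-u*a0)^2 + (b1-u*a1)^2 + (b2-u*a2)^2 + (b3-u*a3)^2 = 0 := by
      rw [hww, hu1]; ring
    have hb0 : b0 = u*a0 := by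
      have : (b0-u*a0)^2 = 0 := by
        linarith [sq_nonneg (b0-u*a0), sq_nonneg (b1-u*a1), sq_nonneg (b2-u*a2), sq_nonneg (b3-u*a3), hz]
      have := (pow_eq_zero_iff two_ne_zero).mp this
      linarith
    have hb1 : b1 = u*a1 := by
      have : (b1-u*a1)^2 = 0 := by
        linarith [sq_nonneg (b1-u*a1), sq_nonneg (b0-u*a0), sq_nonneg (b2-u*a2), sq_nonneg (b3-u*a3), hz]
      have := (pow_eq_zero_iff two_ne_zero).mp this
      linarith
    have hb2 : b2 = u*a2 := by
      have : (b2-u*a2)^2 = 0 := by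
        linarith [sq_nonneg (b2-u*a2), sq_nonneg (b0-u*a0), sq_nonneg (b1-u*a1), sq_nonneg (b3-u*a3), hz]
      have := (pow_eq_zero_iff two_ne_zero).mp this
      linarith
    have hb3 : b3 = u*a3 := by
      have : (b3-u*a3)^2 = 0 := by
        linarith [sq_nonneg (b3-u*a3), sq_nonneg (b0-u*a0), sq_nonneg (b1-u*a1), sq_nonneg (b2-u*a2), hz]
      have := (pow_eq_zero_iff two_ne_zero).mp this
      linarith
    have hc2 : c 2 = u * c 0 := by
      linear_combination -hbx + u*hax + x0*hb0 + x1*hb1 + x2*hb2 + x3*hb3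
    have hc3 : c 3 = u * c 1 := by
      linear_combination -hby + u*hay + y0*hb0 + y1*hb1 + y2*hb2 + y3*hb3
    have hax2 := cs4 a0 a1 a2 a3 x0 x1 x2 x3
    rw [hax, ha, hx] at hax2
    have hay2 := cs4 a0 a1 a2 a3 y0 y1 y2 y3
    rw [hay, ha, hy] at hay2
    have hmem := mem_hull' u 0 (c 0) 0 (c 1) 0 (by simpa using hu1)
      (by simpa using hax2) (by simpa using hay2)
    have hceq : c = ![c 0, c 1, u * c 0 + 0*0, u * c 1 + 0*0] := by
      funext i
      fin_cases i <;> simp [Matrix.vecHead, Matrix.vecTail]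
      · linarith [hc2]
      · linarith [hc3]
    rw [hceq]; exact hmem

lemma Q_sub_hull : Qbody ⊆ convexHull ℝ Sset := by
  rintro c ⟨u, v, hc⟩
  obtain ⟨B, hB⟩ : ∃ B : Matrix (Fin 4) (Fin 4) ℝ, Cmat c u v = Bᴴ * B := by
    open scoped MatrixOrder in exact CStarAlgebra.nonneg_iff_eq_star_mul_self.mp hc.nonneg
  have E : ∀ i j, Cmat c u v i j = B 0 i * B 0 j + B 1 i * B 1 j + B 2 i * B 2 j + B 3 i * B 3 j := by
    intro i j
    rw [hB]
    simp [Matrix.mul_apply, Fin.sum_univ_four, Matrix.conjTranspose_apply]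
  have e00 := E 0 0; have e11 := E 1 1; have e22 := E 2 2; have e33 := E 3 3
  have e01 := E 0 1; have e02 := E 0 2; have e03 := E 0 3
  have e12 := E 1 2; have e13 := E 1 3
  simp [Cmat, Matrix.vecHead, Matrix.vecTail] at e00 e11 e22 e33 e01 e02 e03 e12 e13
  exact key_alg c u (B 0 0) (B 1 0) (B 2 0) (B 3 0) (B 0 1) (B 1 1) (B 2 1) (B 3 1)
    (B 0 2) (B 1 2) (B 2 2) (B 3 2) (B 0 3) (B 1 3) (B 2 3) (B 3 3)
    (by linarith [e00]) (by linarith [e11]) (by linarith [e22]) (by linarith [e33])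
    (by linarith [e01]) (by linarith [e02]) (by linarith [e03])
    (by linarith [e12]) (by linarith [e13])

lemma psd_smul {M : Matrix (Fin 4) (Fin 4) ℝ} (hM : M.PosSemidef) {a : ℝ} (ha : 0 ≤ a) :
    (a • M).PosSemidef := by
  constructor
  · unfold Matrix.IsHermitian
    rw [Matrix.conjTranspose_smul, hM.1]
    simp
  · intro x
    exact (hM.smul ha).2 x

lemma Q_convex : Convex ℝ Qbody := by
  rintro c ⟨u, v, hc⟩ c' ⟨u', v', hc'⟩ a b ha hb hab
  refine ⟨a*u + b*u', a*v + b*v', ?_⟩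
  have key : Cmat (a • c + b • c') (a*u+b*u') (a*v+b*v') =
      a • Cmat c u v + b • Cmat c' u' v' := by
    ext i j
    fin_cases i <;> fin_cases j <;>
      simp [Cmat, Matrix.smul_apply, Pi.smul_apply, smul_eq_mul, Matrix.vecHead,
        Matrix.vecTail] <;> linarith
  rw [key]
  exact (psd_smul hc ha).add (psd_smul hc' hb)

lemma S_sub_Q : Sset ⊆ Qbody := by
  rintro x ⟨α, β, γ, δ, hsum, rfl⟩
  refine ⟨Real.cos (α+γ), Real.cos (α+β), ?_⟩
  have h12 : Real.cos γ = cos (α+γ) * cos α + sin (α+γ) * sin α := by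
    rw [← Real.cos_sub]; ring_nf
  have h13 : Real.cos δ = cos (α+γ) * cos β - sin (α+γ) * sin β := by
    have hδ : δ = -((α+γ)+β) := by linarith
    rw [hδ, Real.cos_neg, Real.cos_add]
  have h23 : Real.cos (α+β) = cos α * cos β - sin α * sin β := Real.cos_add α β
  have p1 := Real.sin_sq_add_cos_sq (α+γ)
  have p2 := Real.sin_sq_add_cos_sq α
  have p3 := Real.sin_sq_add_cos_sq β
  set R : Matrix (Fin 4) (Fin 4) ℝ :=
    !![1, cos (α+γ), cos α, cos β; 0, sin (α+γ), sin α, -sin β; 0,0,0,0; 0,0,0,0] with hR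
  have hLR : (!![1,0,0,0; cos (α+γ), sin (α+γ),0,0; cos α, sin α,0,0; cos β, -sin β,0,0]
      : Matrix (Fin 4) (Fin 4) ℝ) = Rᴴ := by
    ext i j
    fin_cases i <;> fin_cases j <;>
      simp [hR, Matrix.conjTranspose_apply, Matrix.vecHead, Matrix.vecTail]
  have key : Cmat ![cos α, cos β, cos γ, cos δ] (cos (α+γ)) (cos (α+β)) =
      (!![1,0,0,0; cos (α+γ), sin (α+γ),0,0; cos α, sin α,0,0; cos β, -sin β,0,0]
      : Matrix (Fin 4) (Fin 4) ℝ) * R := by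
    ext i j
    fin_cases i <;> fin_cases j <;>
      simp [Cmat, hR, Matrix.mul_apply, Fin.sum_univ_four, Matrix.vecHead, Matrix.vecTail] <;>
      nlinarith [h12, h13, h23, p1, p2, p3]
  rw [key, hLR]
  exact Matrix.posSemidef_conjTranspose_mul_self _


theorem stmt1 :
    Qbody = convexHull ℝ {x : Fin 4 → ℝ | ∃ α β γ δ : ℝ, α + β + γ + δ = 0 ∧
      x = ![Real.cos α, Real.cos β, Real.cos γ, Real.cos δ]} :=
  Set.Subset.antisymm Q_sub_hull (convexHull_min S_sub_Q Q_convex)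
end

section
/- Let f = (f₁₁,f₁₂,f₂₁,f₂₂) ∈ ℝ⁴ satisfy p(f) < 0 and m(f) > 2, where p(f) := f₁₁f₁₂f₂₁f₂₂ and m(f) := (min_{i,j} |f_{ij}|) · (Σ_{i,j} |f_{ij}|⁻¹). Then the support function of Q at f satisfies sup { f·c : c ∈ Q } = √( k(f) / p(f) ), where k(f) := (f₁₁f₂₂ − f₁₂f₂₁)(f₁₁f₁₂ − f₂₁f₂₂)(f₁₁f₂₁ − f₁₂f₂₂) and f·c denotes Σ_{i,j} f_{ij} c_{ij}. -/
/-- `p(f) = f₁₁ f₁₂ f₂₁ f₂₂`. -/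
def ppoly (f : Fin 4 → ℝ) : ℝ := f 0 * f 1 * f 2 * f 3

/-- `k(f) = (f₁₁f₂₂ − f₁₂f₂₁)(f₁₁f₁₂ − f₂₁f₂₂)(f₁₁f₂₁ − f₁₂f₂₂)`. -/
def kpoly (f : Fin 4 → ℝ) : ℝ :=
  (f 0 * f 3 - f 1 * f 2) * (f 0 * f 1 - f 2 * f 3) * (f 0 * f 2 - f 1 * f 3)

/-- `m(f) = (min |f_ij|) · Σ |f_ij|⁻¹`. -/
noncomputable def mfun (f : Fin 4 → ℝ) : ℝ :=
  (min (min |f 0| |f 1|) (min |f 2| |f 3|)) * (∑ i, |f i|⁻¹)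

open Matrix

set_option maxHeartbeats 1000000 in
lemma gram (a b c e t x y s : ℝ)
    (hx0 : x ≠ 0) (hy0 : y ≠ 0)
    (hx2 : x^2 = a^2+c^2+2*a*c*t)
    (hy2 : y^2 = b^2+e^2+2*b*(-e)*t)
    (hs2 : s^2 = 1 - t^2) :
    Cmat ![(a+c*t)/x, (b-e*t)/y, (c+a*t)/x, (-e+b*t)/y] t
        (((a+c*t)*(b-e*t) + c*(-e)*s^2)/(x*y))
      = (!![1, 0, 0, 0;
            t, s, 0, 0;
            (a+c*t)/x, c*s/x, 0, 0;
            (b-e*t)/y, (-e)*s/y, 0, 0] : Matrix (Fin 4) (Fin 4) ℝ)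
        * !![1, t, (a+c*t)/x, (b-e*t)/y;
           0, s, c*s/x, (-e)*s/y;
           0, 0, 0, 0;
           0, 0, 0, 0] := by
  ext i j
  fin_cases i <;> fin_cases j <;>
    simp [Cmat, Matrix.mul_apply, Fin.sum_univ_four] <;>
    (try field_simp)
  all_goals try ring1
  all_goals try linear_combination -hs2
  all_goals try linear_combination -c*hs2
  all_goals try linear_combination e*hs2
  all_goals try linear_combination hx2 - c^2*hs2
  all_goals try linear_combination hy2 - e^2*hs2

set_option maxHeartbeats 1000000 in
lemma canonical (a b c e : ℝ) (ha : 0 < a) (hb : 0 < b) (hc : 0 < c) (he : 0 < e)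
    (T1 : b*c*e < a*c*e + a*b*e + a*b*c)
    (T2 : a*c*e < b*c*e + a*b*e + a*b*c)
    (T3 : a*b*e < b*c*e + a*c*e + a*b*c)
    (T4 : a*b*c < b*c*e + a*c*e + a*b*e) :
    ∃ cc ∈ Qbody, ∑ i, (![a,b,c,-e]) i * cc i
        = Real.sqrt (kpoly ![a,b,c,-e] / ppoly ![a,b,c,-e])
      ∧ 0 ≤ kpoly ![a,b,c,-e] / ppoly ![a,b,c,-e] := by
  have hden : (0:ℝ) < (2*a*c)*(-2*b*e)*((-2*b*e)-(2*a*c)) := by nlinarith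
  have hden' : ((2*a*c)*(-2*b*e)*((-2*b*e)-(2*a*c))) ≠ 0 := ne_of_gt hden
  obtain ⟨t, ht⟩ : ∃ t : ℝ,
      t * ((2*a*c)*(-2*b*e)*((-2*b*e)-(2*a*c)))
        = (2*a*c)^2*(b^2+e^2) - (-2*b*e)^2*(a^2+c^2) :=
    ⟨_, div_mul_cancel₀ _ hden'⟩
  have ht1 : t < 1 := by
    have h := mul_pos (show 0 < a*b*e+b*c*e+a*b*c-a*c*e by linarith)
      (show 0 < a*b*e+b*c*e+a*c*e-a*b*c by linarith)
    nlinarith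
  have ht2 : -1 < t := by
    have h := mul_pos (show 0 < a*b*c+a*c*e+a*b*e-b*c*e by linarith)
      (show 0 < a*b*c+a*c*e+b*c*e-a*b*e by linarith)
    nlinarith
  have hXden : (a^2+c^2+2*a*c*t) * ((2*a*c)*(-2*b*e)*((-2*b*e)-(2*a*c)))
      = (2*a*c)^2*(2*(a*c*(b^2+e^2)+b*e*(a^2+c^2))) := by
    linear_combination (2*a*c) * ht
  have hYden : (b^2+e^2+2*b*(-e)*t) * ((2*a*c)*(-2*b*e)*((-2*b*e)-(2*a*c)))
      = (-2*b*e)^2*(2*(a*c*(b^2+e^2)+b*e*(a^2+c^2))) := by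
    linear_combination (-2*b*e) * ht
  have hX : 0 < a^2+c^2+2*a*c*t := by
    have h := (eq_div_iff hden').mpr hXden
    rw [h]; positivity
  have hY : 0 < b^2+e^2+2*b*(-e)*t := by
    have h := (eq_div_iff hden').mpr hYden
    rw [h]; positivity
  have hDXBY : (-2*b*e)^2 * (a^2+c^2+2*a*c*t) = (2*a*c)^2 * (b^2+e^2+2*b*(-e)*t) := by
    have h0 : ((-2*b*e)^2 * (a^2+c^2+2*a*c*t) - (2*a*c)^2 * (b^2+e^2+2*b*(-e)*t))
        * ((2*a*c)*(-2*b*e)*((-2*b*e)-(2*a*c))) = 0 := by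
      linear_combination ((-2*b*e)^2*(2*a*c) - (2*a*c)^2*(-2*b*e)) * ht
    have h1 := (mul_eq_zero.mp h0).resolve_right hden'
    linarith
  obtain ⟨x, hxpos, hx2⟩ : ∃ x : ℝ, 0 < x ∧ x^2 = a^2+c^2+2*a*c*t :=
    ⟨Real.sqrt _, Real.sqrt_pos.mpr hX, Real.sq_sqrt hX.le⟩
  obtain ⟨y, hypos, hy2⟩ : ∃ y : ℝ, 0 < y ∧ y^2 = b^2+e^2+2*b*(-e)*t :=
    ⟨Real.sqrt _, Real.sqrt_pos.mpr hY, Real.sq_sqrt hY.le⟩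
  obtain ⟨s, hs2⟩ : ∃ s : ℝ, s^2 = 1 - t^2 :=
    ⟨Real.sqrt _, Real.sq_sqrt (by nlinarith)⟩
  have hx0 : x ≠ 0 := ne_of_gt hxpos
  have hy0 : y ≠ 0 := ne_of_gt hypos
  have hsum0 : (-2*b*e)*x + (2*a*c)*y = 0 := by
    have h1 : ((-2*b*e)*x + (2*a*c)*y) * ((-2*b*e)*x - (2*a*c)*y) = 0 := by
      linear_combination (-2*b*e)^2 * hx2 - (2*a*c)^2 * hy2 + hDXBY
    rcases mul_eq_zero.mp h1 with h | h
    · exact h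
    · exfalso
      nlinarith [mul_pos (mul_pos hb he) hxpos, mul_pos (mul_pos ha hc) hypos]
  have hkval : kpoly ![a,b,c,-e] = (a*(-e) - b*c)*(a*b - c*(-e))*(a*c - b*(-e)) := by
    simp [kpoly]
  have hpval : ppoly ![a,b,c,-e] = a*b*c*(-e) := by simp [ppoly]
  have hpp0 : a*b*c*(-e) ≠ 0 := by
    have : 0 < a*b*c*e := by positivity
    intro h; nlinarith
  have key : (a*(-e) - b*c)*(a*b - c*(-e))*(a*c - b*(-e)) = (x+y)^2 * (a*b*c*(-e)) := by
    linear_combination (-(((-2*b*e)*x + (2*a*c)*y)/4)) * hsum0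
      + (((2*b*(-e))*(2*b*(-e) - 2*a*c))/4) * hx2
      + (((2*a*c)*(2*a*c - 2*b*(-e)))/4) * hy2
  have hsq : kpoly ![a,b,c,-e] / ppoly ![a,b,c,-e] = (x+y)^2 := by
    rw [hkval, hpval, div_eq_iff hpp0]; exact key
  have hK : 0 ≤ kpoly ![a,b,c,-e] / ppoly ![a,b,c,-e] := by rw [hsq]; positivity
  refine ⟨![(a+c*t)/x, (b-e*t)/y, (c+a*t)/x, (-e+b*t)/y], ⟨t,
      ((a+c*t)*(b-e*t) + c*(-e)*s^2)/(x*y), ?_⟩, ?_, hK⟩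
  · rw [gram a b c e t x y s hx0 hy0 hx2 hy2 hs2]
    have hGH : (!![1, 0, 0, 0;
            t, s, 0, 0;
            (a+c*t)/x, c*s/x, 0, 0;
            (b-e*t)/y, (-e)*s/y, 0, 0] : Matrix (Fin 4) (Fin 4) ℝ)
        = (!![1, t, (a+c*t)/x, (b-e*t)/y;
           0, s, c*s/x, (-e)*s/y;
           0, 0, 0, 0;
           0, 0, 0, 0] : Matrix (Fin 4) (Fin 4) ℝ)ᴴ := by
      ext i j
      fin_cases i <;> fin_cases j <;> simp [Matrix.conjTranspose_apply, Matrix.vecHead, Matrix.vecTail]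
    rw [hGH]
    exact Matrix.posSemidef_conjTranspose_mul_self _
  · rw [hsq, Real.sqrt_sq (by positivity), Fin.sum_univ_four]
    simp only [Matrix.cons_val_zero, Matrix.cons_val_one, Matrix.head_cons,
      Matrix.cons_val_two, Matrix.tail_cons, Matrix.cons_val_three]
    have h1 : a*((a+c*t)/x) + c*((c+a*t)/x) = x := by
      field_simp; linear_combination -hx2
    have h2 : b*((b-e*t)/y) + (-e)*((-e+b*t)/y) = y := by
      field_simp; linear_combination -hy2
    linear_combination h1 + h2

lemma core_ineq (a b c d x y u : ℝ) (hp : a*b*c*d < 0)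
    (hx2 : x^2 = a^2+c^2+2*a*c*u) (hy2 : y^2 = b^2+d^2+2*b*d*u) :
    (x+y)^2 ≤ (a*d-b*c)*(a*b-c*d)*(a*c-b*d)/(a*b*c*d) := by
  rw [le_div_iff_of_neg hp]
  have key : 4*((a*d-b*c)*(a*b-c*d)*(a*c-b*d) - (x+y)^2*(a*b*c*d))
      = -((2*b*d*x + 2*a*c*y)^2) := by
    linear_combination ((2*b*d)*(2*b*d - 2*a*c))*hx2 + ((2*a*c)*(2*a*c - 2*b*d))*hy2
  nlinarith [sq_nonneg (2*b*d*x + 2*a*c*y)]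

lemma cs_helper (w g : Fin 4 → ℝ) (hg : ∑ k, (g k)^2 = 1) :
    ∑ k, w k * g k ≤ Real.sqrt (∑ k, (w k)^2) := by
  have h := Finset.sum_mul_sq_le_sq_mul_sq Finset.univ w g
  rw [hg, mul_one] at h
  have hnn : (0:ℝ) ≤ ∑ k, (w k)^2 := Finset.sum_nonneg fun i _ => sq_nonneg _
  nlinarith [Real.sq_sqrt hnn, Real.sqrt_nonneg (∑ k, (w k)^2),
    Finset.sum_nonneg (fun i (_ : i ∈ Finset.univ) => sq_nonneg (w i))]

open scoped MatrixOrder in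
lemma upper (f : Fin 4 → ℝ) (hp : ppoly f < 0) (hK : 0 ≤ kpoly f / ppoly f)
    (c : Fin 4 → ℝ) (hc : c ∈ Qbody) :
    ∑ i, f i * c i ≤ Real.sqrt (kpoly f / ppoly f) := by
  obtain ⟨u, v, hpsd⟩ := hc
  obtain ⟨B, hB⟩ := CStarAlgebra.nonneg_iff_eq_star_mul_self.mp hpsd.nonneg
  have hent : ∀ i j, (Cmat c u v) i j = ∑ k, B k i * B k j := by
    intro i j
    rw [hB]
    simp [Matrix.mul_apply, Matrix.conjTranspose_apply]
  have h00 : ∑ k, B k 0 * B k 0 = 1 := by rw [← hent]; simp [Cmat]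
  have h11 : ∑ k, B k 1 * B k 1 = 1 := by rw [← hent]; simp [Cmat]
  have h22 : ∑ k, B k 2 * B k 2 = 1 := by rw [← hent]; simp [Cmat]
  have h33 : ∑ k, B k 3 * B k 3 = 1 := by rw [← hent]; simp [Cmat]
  have h01 : ∑ k, B k 0 * B k 1 = u := by rw [← hent]; simp [Cmat]
  have h02 : ∑ k, B k 0 * B k 2 = c 0 := by rw [← hent]; simp [Cmat]
  have h03 : ∑ k, B k 0 * B k 3 = c 1 := by rw [← hent]; simp [Cmat]
  have h12 : ∑ k, B k 1 * B k 2 = c 2 := by rw [← hent]; simp [Cmat]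
  have h13 : ∑ k, B k 1 * B k 3 = c 3 := by rw [← hent]; simp [Cmat]
  set w1 : Fin 4 → ℝ := fun k => f 0 * B k 0 + f 2 * B k 1 with hw1
  set w2 : Fin 4 → ℝ := fun k => f 1 * B k 0 + f 3 * B k 1 with hw2
  set x := Real.sqrt (∑ k, (w1 k)^2) with hxdef
  set y := Real.sqrt (∑ k, (w2 k)^2) with hydef
  have hx2 : x^2 = (f 0)^2 + (f 2)^2 + 2*(f 0)*(f 2)*u := by
    rw [hxdef, Real.sq_sqrt (Finset.sum_nonneg fun i _ => sq_nonneg _)]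
    calc ∑ k, (w1 k)^2
        = (f 0)^2 * (∑ k, B k 0 * B k 0) + 2*(f 0)*(f 2)*(∑ k, B k 0 * B k 1)
          + (f 2)^2 * (∑ k, B k 1 * B k 1) := by
          simp only [Finset.mul_sum, ← Finset.sum_add_distrib]
          exact Finset.sum_congr rfl fun i _ => by simp [hw1]; ring
      _ = _ := by rw [h00, h01, h11]; ring
  have hy2 : y^2 = (f 1)^2 + (f 3)^2 + 2*(f 1)*(f 3)*u := by
    rw [hydef, Real.sq_sqrt (Finset.sum_nonneg fun i _ => sq_nonneg _)]
    calc ∑ k, (w2 k)^2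
        = (f 1)^2 * (∑ k, B k 0 * B k 0) + 2*(f 1)*(f 3)*(∑ k, B k 0 * B k 1)
          + (f 3)^2 * (∑ k, B k 1 * B k 1) := by
          simp only [Finset.mul_sum, ← Finset.sum_add_distrib]
          exact Finset.sum_congr rfl fun i _ => by simp [hw2]; ring
      _ = _ := by rw [h00, h01, h11]; ring
  have hcs1 : ∑ k, w1 k * B k 2 ≤ x :=
    cs_helper w1 (fun k => B k 2) (by simpa [sq] using h22)
  have hcs2 : ∑ k, w2 k * B k 3 ≤ y :=
    cs_helper w2 (fun k => B k 3) (by simpa [sq] using h33)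
  have hval : ∑ i, f i * c i = (∑ k, w1 k * B k 2) + (∑ k, w2 k * B k 3) := by
    rw [Fin.sum_univ_four, ← h02, ← h03, ← h12, ← h13]
    simp only [Finset.mul_sum, ← Finset.sum_add_distrib]
    exact Finset.sum_congr rfl fun i _ => by simp [hw1, hw2]; ring
  have hcore := core_ineq (f 0) (f 1) (f 2) (f 3) x y u (by simpa [ppoly] using hp) hx2 hy2
  have hle : x + y ≤ Real.sqrt (kpoly f / ppoly f) := by
    rw [Real.le_sqrt (by positivity) hK]
    simpa [kpoly, ppoly] using hcore
  linarith

lemma recip_lt (μ x S : ℝ) (hμ : 0 < μ) (hμx : μ ≤ x) (hx : 0 < x)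
    (h : 2 < μ * (x⁻¹ + S)) : x⁻¹ < S := by
  have h1 : μ * x⁻¹ ≤ 1 := by
    rw [← mul_inv_cancel₀ (ne_of_gt hx)]
    exact mul_le_mul_of_nonneg_right hμx (by positivity)
  have h2 : μ * x⁻¹ < μ * S := by nlinarith
  exact lt_of_mul_lt_mul_left h2 hμ.le

lemma tri_helper (p q r s : ℝ) (hp : 0 < p) (hq : 0 < q) (hr : 0 < r) (hs : 0 < s)
    (h : p⁻¹ < q⁻¹ + r⁻¹ + s⁻¹) : q*r*s < p*r*s + p*q*s + p*q*r := by
  have hP : 0 < p*q*r*s := by positivity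
  have h2 := mul_lt_mul_of_pos_left h hP
  have e0 : (p*q*r*s) * p⁻¹ = q*r*s := by field_simp
  have e1 : (p*q*r*s) * (q⁻¹ + r⁻¹ + s⁻¹) = p*r*s + p*q*s + p*q*r := by field_simp
  rw [e0, e1] at h2
  exact h2

set_option maxHeartbeats 1000000 in
lemma Qbody_flip (e1 e2 d1 d2 : ℝ) (h1 : e1*e1 = 1) (h2 : e2*e2 = 1)
    (h3 : d1*d1 = 1) (h4 : d2*d2 = 1)
    (c : Fin 4 → ℝ) (hc : c ∈ Qbody) :
    (fun i => ![e1*d1, e1*d2, e2*d1, e2*d2] i * c i) ∈ Qbody := by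
  obtain ⟨u, v, hpsd⟩ := hc
  refine ⟨e1*e2*u, d1*d2*v, ?_⟩
  have hmat : Cmat (fun i => ![e1*d1, e1*d2, e2*d1, e2*d2] i * c i) (e1*e2*u) (d1*d2*v)
      = (Matrix.diagonal ![e1, e2, d1, d2]) * Cmat c u v
        * (Matrix.diagonal ![e1, e2, d1, d2])ᴴ := by
    ext i j
    fin_cases i <;> fin_cases j <;>
      simp [Cmat, Matrix.mul_apply, Fin.sum_univ_four, Matrix.diagonal,
        Matrix.conjTranspose_apply] <;>
      first
        | ring1
        | linear_combination -h1
        | linear_combination -h2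
        | linear_combination -h3
        | linear_combination -h4
  rw [hmat]
  exact hpsd.mul_mul_conjTranspose_same _
set_option maxHeartbeats 1000000 in
lemma achieve (f : Fin 4 → ℝ) (hp : ppoly f < 0) (hm : 2 < mfun f) :
    ∃ cc ∈ Qbody, ∑ i, f i * cc i = Real.sqrt (kpoly f / ppoly f)
      ∧ 0 ≤ kpoly f / ppoly f := by
  have hp' : f 0 * f 1 * f 2 * f 3 < 0 := by simpa [ppoly] using hp
  have hf0 : f 0 ≠ 0 := by intro h; simp [ppoly, h] at hp
  have hf1 : f 1 ≠ 0 := by intro h; simp [ppoly, h] at hp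
  have hf2 : f 2 ≠ 0 := by intro h; simp [ppoly, h] at hp
  have hf3 : f 3 ≠ 0 := by intro h; simp [ppoly, h] at hp
  have hb0 : 0 < |f 0| := abs_pos.mpr hf0
  have hb1 : 0 < |f 1| := abs_pos.mpr hf1
  have hb2 : 0 < |f 2| := abs_pos.mpr hf2
  have hb3 : 0 < |f 3| := abs_pos.mpr hf3
  simp only [mfun, Fin.sum_univ_four] at hm
  have hmin : 0 < min (min |f 0| |f 1|) (min |f 2| |f 3|) :=
    lt_min (lt_min hb0 hb1) (lt_min hb2 hb3)
  have hm0 : min (min |f 0| |f 1|) (min |f 2| |f 3|) ≤ |f 0| :=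
    le_trans (min_le_left _ _) (min_le_left _ _)
  have hm1 : min (min |f 0| |f 1|) (min |f 2| |f 3|) ≤ |f 1| :=
    le_trans (min_le_left _ _) (min_le_right _ _)
  have hm2 : min (min |f 0| |f 1|) (min |f 2| |f 3|) ≤ |f 2| :=
    le_trans (min_le_right _ _) (min_le_left _ _)
  have hm3 : min (min |f 0| |f 1|) (min |f 2| |f 3|) ≤ |f 3| :=
    le_trans (min_le_right _ _) (min_le_right _ _)
  have r0 : |f 0|⁻¹ < |f 1|⁻¹ + |f 2|⁻¹ + |f 3|⁻¹ :=
    recip_lt _ _ _ hmin hm0 hb0 (by nlinarith [hm])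
  have r1 : |f 1|⁻¹ < |f 0|⁻¹ + |f 2|⁻¹ + |f 3|⁻¹ :=
    recip_lt _ _ _ hmin hm1 hb1 (by nlinarith [hm])
  have r2 : |f 2|⁻¹ < |f 0|⁻¹ + |f 1|⁻¹ + |f 3|⁻¹ :=
    recip_lt _ _ _ hmin hm2 hb2 (by nlinarith [hm])
  have r3 : |f 3|⁻¹ < |f 0|⁻¹ + |f 1|⁻¹ + |f 2|⁻¹ :=
    recip_lt _ _ _ hmin hm3 hb3 (by nlinarith [hm])
  have R1 := tri_helper |f 0| |f 1| |f 2| |f 3| hb0 hb1 hb2 hb3 r0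
  have R2 := tri_helper |f 1| |f 0| |f 2| |f 3| hb1 hb0 hb2 hb3 r1
  have R3 := tri_helper |f 2| |f 0| |f 1| |f 3| hb2 hb0 hb1 hb3 r2
  have R4 := tri_helper |f 3| |f 0| |f 1| |f 2| hb3 hb0 hb1 hb2 r3
  rcases hf0.lt_or_gt with h0 | h0 <;> rcases hf1.lt_or_gt with h1 | h1 <;>
    rcases hf2.lt_or_gt with h2 | h2 <;> rcases hf3.lt_or_gt with h3 | h3
  · -- signs: ----
    exfalso
    nlinarith [hp', mul_pos (mul_pos (mul_pos (neg_pos.2 h0) (neg_pos.2 h1)) (neg_pos.2 h2)) (neg_pos.2 h3)]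
  · -- signs: ---+
    have A0 : |f 0| = -f 0 := abs_of_neg h0
    have A1 : |f 1| = -f 1 := abs_of_neg h1
    have A2 : |f 2| = -f 2 := abs_of_neg h2
    have A3 : |f 3| = f 3 := abs_of_pos h3
    rw [A0, A1, A2, A3] at R1 R2 R3 R4
    obtain ⟨cc, hccQ, hval, hK⟩ :=
      canonical (-f 0) (-f 1) (-f 2) (f 3) (by linarith) (by linarith) (by linarith) (by linarith)
        (by linarith [R1]) (by linarith [R2]) (by linarith [R3]) (by linarith [R4])
    have hkp : kpoly ![(-f 0), (-f 1), (-f 2), -(f 3)] = kpoly f := by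
      simp only [kpoly, Matrix.cons_val_zero, Matrix.cons_val_one, Matrix.head_cons,
    Matrix.cons_val_two, Matrix.tail_cons, Matrix.cons_val_three]; ring
    have hpp : ppoly ![(-f 0), (-f 1), (-f 2), -(f 3)] = ppoly f := by
      simp only [ppoly, Matrix.cons_val_zero, Matrix.cons_val_one, Matrix.head_cons,
    Matrix.cons_val_two, Matrix.tail_cons, Matrix.cons_val_three]; ring
    rw [hkp, hpp] at hval hK
    refine ⟨fun i => ![(1:ℝ)*(-1:ℝ), (1:ℝ)*(-1:ℝ), (1:ℝ)*(-1:ℝ), (1:ℝ)*(-1:ℝ)] i * cc i,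
      Qbody_flip (1:ℝ) (1:ℝ) (-1:ℝ) (-1:ℝ) (by norm_num) (by norm_num) (by norm_num) (by norm_num) cc hccQ, ?_, hK⟩
    rw [← hval, Fin.sum_univ_four, Fin.sum_univ_four]
    simp
    try ring
  · -- signs: --+-
    have A0 : |f 0| = -f 0 := abs_of_neg h0
    have A1 : |f 1| = -f 1 := abs_of_neg h1
    have A2 : |f 2| = f 2 := abs_of_pos h2
    have A3 : |f 3| = -f 3 := abs_of_neg h3
    rw [A0, A1, A2, A3] at R1 R2 R3 R4
    obtain ⟨cc, hccQ, hval, hK⟩ :=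
      canonical (-f 0) (-f 1) (f 2) (-f 3) (by linarith) (by linarith) (by linarith) (by linarith)
        (by linarith [R1]) (by linarith [R2]) (by linarith [R3]) (by linarith [R4])
    have hkp : kpoly ![(-f 0), (-f 1), (f 2), -(-f 3)] = kpoly f := by
      simp only [kpoly, Matrix.cons_val_zero, Matrix.cons_val_one, Matrix.head_cons,
    Matrix.cons_val_two, Matrix.tail_cons, Matrix.cons_val_three]; ring
    have hpp : ppoly ![(-f 0), (-f 1), (f 2), -(-f 3)] = ppoly f := by
      simp only [ppoly, Matrix.cons_val_zero, Matrix.cons_val_one, Matrix.head_cons,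
    Matrix.cons_val_two, Matrix.tail_cons, Matrix.cons_val_three]; ring
    rw [hkp, hpp] at hval hK
    refine ⟨fun i => ![(1:ℝ)*(-1:ℝ), (1:ℝ)*(-1:ℝ), (-1:ℝ)*(-1:ℝ), (-1:ℝ)*(-1:ℝ)] i * cc i,
      Qbody_flip (1:ℝ) (-1:ℝ) (-1:ℝ) (-1:ℝ) (by norm_num) (by norm_num) (by norm_num) (by norm_num) cc hccQ, ?_, hK⟩
    rw [← hval, Fin.sum_univ_four, Fin.sum_univ_four]
    simp
    try ring
  · -- signs: --++
    exfalso
    nlinarith [hp', mul_pos (mul_pos (mul_pos (neg_pos.2 h0) (neg_pos.2 h1)) h2) h3]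
  · -- signs: -+--
    have A0 : |f 0| = -f 0 := abs_of_neg h0
    have A1 : |f 1| = f 1 := abs_of_pos h1
    have A2 : |f 2| = -f 2 := abs_of_neg h2
    have A3 : |f 3| = -f 3 := abs_of_neg h3
    rw [A0, A1, A2, A3] at R1 R2 R3 R4
    obtain ⟨cc, hccQ, hval, hK⟩ :=
      canonical (-f 0) (f 1) (-f 2) (-f 3) (by linarith) (by linarith) (by linarith) (by linarith)
        (by linarith [R1]) (by linarith [R2]) (by linarith [R3]) (by linarith [R4])
    have hkp : kpoly ![(-f 0), (f 1), (-f 2), -(-f 3)] = kpoly f := by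
      simp only [kpoly, Matrix.cons_val_zero, Matrix.cons_val_one, Matrix.head_cons,
    Matrix.cons_val_two, Matrix.tail_cons, Matrix.cons_val_three]; ring
    have hpp : ppoly ![(-f 0), (f 1), (-f 2), -(-f 3)] = ppoly f := by
      simp only [ppoly, Matrix.cons_val_zero, Matrix.cons_val_one, Matrix.head_cons,
    Matrix.cons_val_two, Matrix.tail_cons, Matrix.cons_val_three]; ring
    rw [hkp, hpp] at hval hK
    refine ⟨fun i => ![(1:ℝ)*(-1:ℝ), (1:ℝ)*(1:ℝ), (1:ℝ)*(-1:ℝ), (1:ℝ)*(1:ℝ)] i * cc i,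
      Qbody_flip (1:ℝ) (1:ℝ) (-1:ℝ) (1:ℝ) (by norm_num) (by norm_num) (by norm_num) (by norm_num) cc hccQ, ?_, hK⟩
    rw [← hval, Fin.sum_univ_four, Fin.sum_univ_four]
    simp
    try ring
  · -- signs: -+-+
    exfalso
    nlinarith [hp', mul_pos (mul_pos (mul_pos (neg_pos.2 h0) h1) (neg_pos.2 h2)) h3]
  · -- signs: -++-
    exfalso
    nlinarith [hp', mul_pos (mul_pos (mul_pos (neg_pos.2 h0) h1) h2) (neg_pos.2 h3)]
  · -- signs: -+++
    have A0 : |f 0| = -f 0 := abs_of_neg h0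
    have A1 : |f 1| = f 1 := abs_of_pos h1
    have A2 : |f 2| = f 2 := abs_of_pos h2
    have A3 : |f 3| = f 3 := abs_of_pos h3
    rw [A0, A1, A2, A3] at R1 R2 R3 R4
    obtain ⟨cc, hccQ, hval, hK⟩ :=
      canonical (-f 0) (f 1) (f 2) (f 3) (by linarith) (by linarith) (by linarith) (by linarith)
        (by linarith [R1]) (by linarith [R2]) (by linarith [R3]) (by linarith [R4])
    have hkp : kpoly ![(-f 0), (f 1), (f 2), -(f 3)] = kpoly f := by
      simp only [kpoly, Matrix.cons_val_zero, Matrix.cons_val_one, Matrix.head_cons,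
    Matrix.cons_val_two, Matrix.tail_cons, Matrix.cons_val_three]; ring
    have hpp : ppoly ![(-f 0), (f 1), (f 2), -(f 3)] = ppoly f := by
      simp only [ppoly, Matrix.cons_val_zero, Matrix.cons_val_one, Matrix.head_cons,
    Matrix.cons_val_two, Matrix.tail_cons, Matrix.cons_val_three]; ring
    rw [hkp, hpp] at hval hK
    refine ⟨fun i => ![(1:ℝ)*(-1:ℝ), (1:ℝ)*(1:ℝ), (-1:ℝ)*(-1:ℝ), (-1:ℝ)*(1:ℝ)] i * cc i,
      Qbody_flip (1:ℝ) (-1:ℝ) (-1:ℝ) (1:ℝ) (by norm_num) (by norm_num) (by norm_num) (by norm_num) cc hccQ, ?_, hK⟩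
    rw [← hval, Fin.sum_univ_four, Fin.sum_univ_four]
    simp
    try ring
  · -- signs: +---
    have A0 : |f 0| = f 0 := abs_of_pos h0
    have A1 : |f 1| = -f 1 := abs_of_neg h1
    have A2 : |f 2| = -f 2 := abs_of_neg h2
    have A3 : |f 3| = -f 3 := abs_of_neg h3
    rw [A0, A1, A2, A3] at R1 R2 R3 R4
    obtain ⟨cc, hccQ, hval, hK⟩ :=
      canonical (f 0) (-f 1) (-f 2) (-f 3) (by linarith) (by linarith) (by linarith) (by linarith)
        (by linarith [R1]) (by linarith [R2]) (by linarith [R3]) (by linarith [R4])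
    have hkp : kpoly ![(f 0), (-f 1), (-f 2), -(-f 3)] = kpoly f := by
      simp only [kpoly, Matrix.cons_val_zero, Matrix.cons_val_one, Matrix.head_cons,
    Matrix.cons_val_two, Matrix.tail_cons, Matrix.cons_val_three]; ring
    have hpp : ppoly ![(f 0), (-f 1), (-f 2), -(-f 3)] = ppoly f := by
      simp only [ppoly, Matrix.cons_val_zero, Matrix.cons_val_one, Matrix.head_cons,
    Matrix.cons_val_two, Matrix.tail_cons, Matrix.cons_val_three]; ring
    rw [hkp, hpp] at hval hK
    refine ⟨fun i => ![(1:ℝ)*(1:ℝ), (1:ℝ)*(-1:ℝ), (-1:ℝ)*(1:ℝ), (-1:ℝ)*(-1:ℝ)] i * cc i,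
      Qbody_flip (1:ℝ) (-1:ℝ) (1:ℝ) (-1:ℝ) (by norm_num) (by norm_num) (by norm_num) (by norm_num) cc hccQ, ?_, hK⟩
    rw [← hval, Fin.sum_univ_four, Fin.sum_univ_four]
    simp
    try ring
  · -- signs: +--+
    exfalso
    nlinarith [hp', mul_pos (mul_pos (mul_pos h0 (neg_pos.2 h1)) (neg_pos.2 h2)) h3]
  · -- signs: +-+-
    exfalso
    nlinarith [hp', mul_pos (mul_pos (mul_pos h0 (neg_pos.2 h1)) h2) (neg_pos.2 h3)]
  · -- signs: +-++
    have A0 : |f 0| = f 0 := abs_of_pos h0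
    have A1 : |f 1| = -f 1 := abs_of_neg h1
    have A2 : |f 2| = f 2 := abs_of_pos h2
    have A3 : |f 3| = f 3 := abs_of_pos h3
    rw [A0, A1, A2, A3] at R1 R2 R3 R4
    obtain ⟨cc, hccQ, hval, hK⟩ :=
      canonical (f 0) (-f 1) (f 2) (f 3) (by linarith) (by linarith) (by linarith) (by linarith)
        (by linarith [R1]) (by linarith [R2]) (by linarith [R3]) (by linarith [R4])
    have hkp : kpoly ![(f 0), (-f 1), (f 2), -(f 3)] = kpoly f := by
      simp only [kpoly, Matrix.cons_val_zero, Matrix.cons_val_one, Matrix.head_cons,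
    Matrix.cons_val_two, Matrix.tail_cons, Matrix.cons_val_three]; ring
    have hpp : ppoly ![(f 0), (-f 1), (f 2), -(f 3)] = ppoly f := by
      simp only [ppoly, Matrix.cons_val_zero, Matrix.cons_val_one, Matrix.head_cons,
    Matrix.cons_val_two, Matrix.tail_cons, Matrix.cons_val_three]; ring
    rw [hkp, hpp] at hval hK
    refine ⟨fun i => ![(1:ℝ)*(1:ℝ), (1:ℝ)*(-1:ℝ), (1:ℝ)*(1:ℝ), (1:ℝ)*(-1:ℝ)] i * cc i,
      Qbody_flip (1:ℝ) (1:ℝ) (1:ℝ) (-1:ℝ) (by norm_num) (by norm_num) (by norm_num) (by norm_num) cc hccQ, ?_, hK⟩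
    rw [← hval, Fin.sum_univ_four, Fin.sum_univ_four]
    simp
    try ring
  · -- signs: ++--
    exfalso
    nlinarith [hp', mul_pos (mul_pos (mul_pos h0 h1) (neg_pos.2 h2)) (neg_pos.2 h3)]
  · -- signs: ++-+
    have A0 : |f 0| = f 0 := abs_of_pos h0
    have A1 : |f 1| = f 1 := abs_of_pos h1
    have A2 : |f 2| = -f 2 := abs_of_neg h2
    have A3 : |f 3| = f 3 := abs_of_pos h3
    rw [A0, A1, A2, A3] at R1 R2 R3 R4
    obtain ⟨cc, hccQ, hval, hK⟩ :=
      canonical (f 0) (f 1) (-f 2) (f 3) (by linarith) (by linarith) (by linarith) (by linarith)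
        (by linarith [R1]) (by linarith [R2]) (by linarith [R3]) (by linarith [R4])
    have hkp : kpoly ![(f 0), (f 1), (-f 2), -(f 3)] = kpoly f := by
      simp only [kpoly, Matrix.cons_val_zero, Matrix.cons_val_one, Matrix.head_cons,
    Matrix.cons_val_two, Matrix.tail_cons, Matrix.cons_val_three]; ring
    have hpp : ppoly ![(f 0), (f 1), (-f 2), -(f 3)] = ppoly f := by
      simp only [ppoly, Matrix.cons_val_zero, Matrix.cons_val_one, Matrix.head_cons,
    Matrix.cons_val_two, Matrix.tail_cons, Matrix.cons_val_three]; ring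
    rw [hkp, hpp] at hval hK
    refine ⟨fun i => ![(1:ℝ)*(1:ℝ), (1:ℝ)*(1:ℝ), (-1:ℝ)*(1:ℝ), (-1:ℝ)*(1:ℝ)] i * cc i,
      Qbody_flip (1:ℝ) (-1:ℝ) (1:ℝ) (1:ℝ) (by norm_num) (by norm_num) (by norm_num) (by norm_num) cc hccQ, ?_, hK⟩
    rw [← hval, Fin.sum_univ_four, Fin.sum_univ_four]
    simp
    try ring
  · -- signs: +++-
    have A0 : |f 0| = f 0 := abs_of_pos h0
    have A1 : |f 1| = f 1 := abs_of_pos h1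
    have A2 : |f 2| = f 2 := abs_of_pos h2
    have A3 : |f 3| = -f 3 := abs_of_neg h3
    rw [A0, A1, A2, A3] at R1 R2 R3 R4
    obtain ⟨cc, hccQ, hval, hK⟩ :=
      canonical (f 0) (f 1) (f 2) (-f 3) (by linarith) (by linarith) (by linarith) (by linarith)
        (by linarith [R1]) (by linarith [R2]) (by linarith [R3]) (by linarith [R4])
    have hkp : kpoly ![(f 0), (f 1), (f 2), -(-f 3)] = kpoly f := by
      simp only [kpoly, Matrix.cons_val_zero, Matrix.cons_val_one, Matrix.head_cons,
    Matrix.cons_val_two, Matrix.tail_cons, Matrix.cons_val_three]; ring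
    have hpp : ppoly ![(f 0), (f 1), (f 2), -(-f 3)] = ppoly f := by
      simp only [ppoly, Matrix.cons_val_zero, Matrix.cons_val_one, Matrix.head_cons,
    Matrix.cons_val_two, Matrix.tail_cons, Matrix.cons_val_three]; ring
    rw [hkp, hpp] at hval hK
    refine ⟨fun i => ![(1:ℝ)*(1:ℝ), (1:ℝ)*(1:ℝ), (1:ℝ)*(1:ℝ), (1:ℝ)*(1:ℝ)] i * cc i,
      Qbody_flip (1:ℝ) (1:ℝ) (1:ℝ) (1:ℝ) (by norm_num) (by norm_num) (by norm_num) (by norm_num) cc hccQ, ?_, hK⟩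
    rw [← hval, Fin.sum_univ_four, Fin.sum_univ_four]
    simp
    try ring
  · -- signs: ++++
    exfalso
    nlinarith [hp', mul_pos (mul_pos (mul_pos h0 h1) h2) h3]


theorem stmt4 (f : Fin 4 → ℝ) (hp : ppoly f < 0) (hm : 2 < mfun f) :
    sSup ((fun c : Fin 4 → ℝ => ∑ i, f i * c i) '' Qbody)
      = Real.sqrt (kpoly f / ppoly f) := by
  obtain ⟨cc, hccQ, hval, hK⟩ := achieve f hp hm
  apply IsGreatest.csSup_eq
  constructor
  · exact ⟨cc, hccQ, hval⟩
  · rintro z ⟨c, hcQ, rfl⟩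
    exact upper f hp hK c hcQ
end

section
/- Let α, β, γ, δ ∈ ℝ satisfy α+β+γ+δ = 0 and sin α · sin β · sin γ · sin δ < 0, and set c := (cos α, cos β, cos γ, cos δ). Then c is an extreme point of the quantum correlation body Q. -/
open Matrix

lemma form_expand (c : Fin 4 → ℝ) (u v w x y z : ℝ) :
    ![w,x,y,z] ⬝ᵥ (Cmat c u v) *ᵥ ![w,x,y,z] =
      w^2 + x^2 + y^2 + z^2 + 2*w*x*u + 2*y*z*v + 2*w*y*(c 0) + 2*w*z*(c 1)
        + 2*x*y*(c 2) + 2*x*z*(c 3) := by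
  simp [Cmat, dotProduct, Matrix.mulVec, Fin.sum_univ_succ]
  ring

lemma mulVec_expand (c : Fin 4 → ℝ) (u v w x y z : ℝ) :
    (Cmat c u v) *ᵥ ![w,x,y,z] =
      ![w + u*x + c 0 * y + c 1 * z, u*w + x + c 2 * y + c 3 * z,
        c 0 * w + c 2 * x + y + v*z, c 1 * w + c 3 * x + v*y + z] := by
  funext i
  fin_cases i <;> simp [Cmat, Matrix.mulVec, dotProduct, Fin.sum_univ_succ] <;> ring

lemma formid3 (a A b B T V w : ℝ)
    (ha : a^2 + A^2 = 1) (hb : b^2 + B^2 = 1)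
    (hT : T = a*B + A*b) (hV : V = A*B - a*b) :
    T^2 + b^2 + a^2 + 2*a*b*w - 2*T*b*A - 2*T*a*B = 2*a*b*(w - V) := by
  have idT : T^2 = a^2 + b^2 + 2*a*b*V := by
    linear_combination (T + a*B + A*b)*hT - 2*a*b*hV + a^2*hb + b^2*ha
  linear_combination 2*T*hT - idT

lemma formid4 (a A b B g G d D T V w : ℝ)
    (ha : a^2 + A^2 = 1) (hb : b^2 + B^2 = 1) (hg : g^2 + G^2 = 1)
    (hT : T = a*B + A*b) (hV : V = A*B - a*b)
    (hd : d = -(T*G + V*g)) (hD : D = V*G - T*g) :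
    T^2 + d^2 + g^2 + 2*d*g*w + 2*T*d*G + 2*T*g*D = 2*d*g*(w - V) := by
  have hTV : T^2 + V^2 = 1 := by
    linear_combination (T + a*B + A*b)*hT + (V + A*B - a*b)*hV + (b^2+B^2)*ha + hb
  have hd2 : d^2 + D^2 = 1 := by
    linear_combination (d - (T*G+V*g))*hd + (D + V*G - T*g)*hD + (G^2+g^2)*hTV + hg
  have id0 : T + g*D + G*d = 0 := by
    linear_combination g*hD + G*hd - T*hg
  have idV : G*D - g*d = V := by
    linear_combination G*hD - g*hd + V*hg
  have idT' : T^2 = d^2 + g^2 + 2*d*g*V := by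
    linear_combination (T - g*D - G*d)*id0 + 2*d*g*idV + d^2*hg + g^2*hd2
  linear_combination 2*T*id0 - idT'

lemma pin (a A b B g G d D T V u v p q r s : ℝ)
    (ha : a^2 + A^2 = 1) (hb : b^2 + B^2 = 1) (hg : g^2 + G^2 = 1)
    (hT : T = a*B + A*b) (hV : V = A*B - a*b)
    (hd : d = -(T*G + V*g)) (hD : D = V*G - T*g)
    (ha0 : a ≠ 0) (hb0 : b ≠ 0) (hg0 : g ≠ 0)
    (hneg : a*b*g*d < 0)
    (e30 : T - p*b - q*a = 0) (e32 : p*T - b - v*a = 0) (e33 : q*T - v*b - a = 0)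
    (e42 : r*T + d + v*g = 0) (e43 : s*T + v*d + g = 0) :
    p = A ∧ q = B ∧ r = G ∧ s = D := by
  have hTV : T^2 + V^2 = 1 := by
    linear_combination (T + a*B + A*b)*hT + (V + A*B - a*b)*hV + (b^2+B^2)*ha + hb
  have idT : T^2 = a^2 + b^2 + 2*a*b*V := by
    linear_combination (T + a*B + A*b)*hT - 2*a*b*hV + a^2*hb + b^2*ha
  have hT0 : T ≠ 0 := by
    intro h
    rw [h] at hT
    have habV : a*b*V = -(b^2) := by
      linear_combination a*b*hV - A*b*hT - b^2*ha
    have hcontr : a*b*g*d = b^2*g^2 := by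
      linear_combination a*b*g*hd - a*b*g*G*h - g^2*habV
    have hbg : b*g ≠ 0 := mul_ne_zero hb0 hg0
    have : (0:ℝ) < (b*g)^2 := lt_of_le_of_ne (sq_nonneg _) (Ne.symm (pow_ne_zero 2 hbg))
    nlinarith
  have hcan : ∀ x y : ℝ, (x - y)*T = 0 → x = y := by
    intro x y h
    rcases mul_eq_zero.mp h with h' | h'
    · linarith
    · exact absurd h' hT0
  have h2 : 2*a*b*(v - V) = 0 := by
    linear_combination (-T)*e30 - b*e32 - a*e33 + idT
  have hv : v = V := by
    have hab : (2*a*b) ≠ 0 := mul_ne_zero (mul_ne_zero two_ne_zero ha0) hb0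
    have := (mul_eq_zero.mp h2).resolve_left hab
    linarith
  refine ⟨hcan p A ?_, hcan q B ?_, hcan r G ?_, hcan s D ?_⟩
  · linear_combination e32 + a*hv - b*ha - A*hT + a*hV
  · linear_combination e33 + b*hv - a*hb - B*hT + b*hV
  · linear_combination e42 - hd - g*hv
  · linear_combination e43 + g*hTV - V*hd - d*hv - T*hD

lemma sign_cancel (P Q x : ℝ) (h1 : 0 ≤ P*x) (h2 : 0 ≤ Q*x) (hPQ : P*Q < 0) : x = 0 := by
  by_contra hx
  have hx2 : (0:ℝ) < x^2 := lt_of_le_of_ne (sq_nonneg x) (Ne.symm (pow_ne_zero 2 hx))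
  nlinarith [mul_nonneg h1 h2]

lemma neg4 (a b g d : ℝ) (h : a*b*g*d < 0) : (2*a*b)*(2*d*g) < 0 := by nlinarith

lemma cvxzero (t s X Y : ℝ) (ht : 0 < t) (hs : 0 < s) (hX : 0 ≤ X) (hY : 0 ≤ Y)
    (hXY : t*X + s*Y = 0) : X = 0 ∧ Y = 0 := by
  constructor
  · have h1 : t*X = 0 := le_antisymm (by linarith [mul_nonneg hs.le hY]) (mul_nonneg ht.le hX)
    rcases mul_eq_zero.mp h1 with h | h
    · exact absurd h ht.ne'
    · exact h
  · have h1 : s*Y = 0 := le_antisymm (by linarith [mul_nonneg ht.le hX]) (mul_nonneg hs.le hY)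
    rcases mul_eq_zero.mp h1 with h | h
    · exact absurd h hs.ne'
    · exact h

set_option maxHeartbeats 1000000 in
lemma key_step (a A b B g G d D T V t s u1 v1 u2 v2 : ℝ) (c1 c2 : Fin 4 → ℝ)
    (ha : a^2 + A^2 = 1) (hb : b^2 + B^2 = 1) (hg : g^2 + G^2 = 1)
    (hT : T = a*B + A*b) (hV : V = A*B - a*b)
    (hd : d = -(T*G + V*g)) (hD : D = V*G - T*g)
    (ha0 : a ≠ 0) (hb0 : b ≠ 0) (hg0 : g ≠ 0)
    (hneg : a*b*g*d < 0)
    (ht : 0 < t) (hs : 0 < s) (hts : t + s = 1)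
    (hc0 : t*c1 0 + s*c2 0 = A) (hc1 : t*c1 1 + s*c2 1 = B)
    (hc2 : t*c1 2 + s*c2 2 = G) (hc3 : t*c1 3 + s*c2 3 = D)
    (hC1 : (Cmat c1 u1 v1).PosSemidef) (hC2 : (Cmat c2 u2 v2).PosSemidef) :
    c1 = ![A,B,G,D] ∧ c2 = ![A,B,G,D] := by
  have hP13 : 0 ≤ ![T,0,-b,-a] ⬝ᵥ (Cmat c1 u1 v1) *ᵥ ![T,0,-b,-a] := hC1.dotProduct_mulVec_nonneg _
  have hP23 : 0 ≤ ![T,0,-b,-a] ⬝ᵥ (Cmat c2 u2 v2) *ᵥ ![T,0,-b,-a] := hC2.dotProduct_mulVec_nonneg _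
  have hP14 : 0 ≤ ![0,T,d,g] ⬝ᵥ (Cmat c1 u1 v1) *ᵥ ![0,T,d,g] := hC1.dotProduct_mulVec_nonneg _
  have hP24 : 0 ≤ ![0,T,d,g] ⬝ᵥ (Cmat c2 u2 v2) *ᵥ ![0,T,d,g] := hC2.dotProduct_mulVec_nonneg _
  have hval3 : t * (![T,0,-b,-a] ⬝ᵥ (Cmat c1 u1 v1) *ᵥ ![T,0,-b,-a])
      + s * (![T,0,-b,-a] ⬝ᵥ (Cmat c2 u2 v2) *ᵥ ![T,0,-b,-a])
      = 2*a*b*((t*v1+s*v2) - V) := by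
    rw [form_expand, form_expand]
    linear_combination (T^2+b^2+a^2)*hts - 2*T*b*hc0 - 2*T*a*hc1
      + formid3 a A b B T V 0 ha hb hT hV
  have hval4 : t * (![0,T,d,g] ⬝ᵥ (Cmat c1 u1 v1) *ᵥ ![0,T,d,g])
      + s * (![0,T,d,g] ⬝ᵥ (Cmat c2 u2 v2) *ᵥ ![0,T,d,g])
      = 2*d*g*((t*v1+s*v2) - V) := by
    rw [form_expand, form_expand]
    linear_combination (T^2+d^2+g^2)*hts + 2*T*d*hc2 + 2*T*g*hc3
      + formid4 a A b B g G d D T V 0 ha hb hg hT hV hd hD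
  have hI3 : 0 ≤ 2*a*b*((t*v1+s*v2) - V) := by
    rw [← hval3]
    exact add_nonneg (mul_nonneg ht.le hP13) (mul_nonneg hs.le hP23)
  have hI4 : 0 ≤ 2*d*g*((t*v1+s*v2) - V) := by
    rw [← hval4]
    exact add_nonneg (mul_nonneg ht.le hP14) (mul_nonneg hs.le hP24)
  have hvV : t*v1+s*v2 = V := by
    have := sign_cancel (2*a*b) (2*d*g) ((t*v1+s*v2) - V) hI3 hI4 (neg4 a b g d hneg)
    linarith
  have hz3 := cvxzero t s _ _ ht hs hP13 hP23 (by rw [hval3]; linear_combination (2*a*b)*hvV)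
  have hz4 := cvxzero t s _ _ ht hs hP14 hP24 (by rw [hval4]; linear_combination (2*d*g)*hvV)
  have hk13 : (Cmat c1 u1 v1) *ᵥ ![T,0,-b,-a] = 0 :=
    (hC1.dotProduct_mulVec_zero_iff _).mp hz3.1
  have hk23 : (Cmat c2 u2 v2) *ᵥ ![T,0,-b,-a] = 0 :=
    (hC2.dotProduct_mulVec_zero_iff _).mp hz3.2
  have hk14 : (Cmat c1 u1 v1) *ᵥ ![0,T,d,g] = 0 :=
    (hC1.dotProduct_mulVec_zero_iff _).mp hz4.1
  have hk24 : (Cmat c2 u2 v2) *ᵥ ![0,T,d,g] = 0 :=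
    (hC2.dotProduct_mulVec_zero_iff _).mp hz4.2
  rw [mulVec_expand] at hk13 hk23 hk14 hk24
  have E10 := congrFun hk13 0
  have E12 := congrFun hk13 2
  have E13 := congrFun hk13 3
  have E42 := congrFun hk14 2
  have E43 := congrFun hk14 3
  have F10 := congrFun hk23 0
  have F12 := congrFun hk23 2
  have F13 := congrFun hk23 3
  have F42 := congrFun hk24 2
  have F43 := congrFun hk24 3
  simp only [Matrix.cons_val_zero, Matrix.cons_val_one, Matrix.head_cons,
    Matrix.cons_val_two, Matrix.tail_cons, Matrix.cons_val_three, Pi.zero_apply]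
    at E10 E12 E13 E42 E43 F10 F12 F13 F42 F43
  obtain ⟨hp1, hq1, hr1, hs1⟩ := pin a A b B g G d D T V u1 v1 (c1 0) (c1 1) (c1 2) (c1 3)
    ha hb hg hT hV hd hD ha0 hb0 hg0 hneg
    (by linear_combination E10) (by linear_combination E12) (by linear_combination E13)
    (by linear_combination E42) (by linear_combination E43)
  obtain ⟨hp2, hq2, hr2, hs2⟩ := pin a A b B g G d D T V u2 v2 (c2 0) (c2 1) (c2 2) (c2 3)
    ha hb hg hT hV hd hD ha0 hb0 hg0 hneg
    (by linear_combination F10) (by linear_combination F12) (by linear_combination F13)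
    (by linear_combination F42) (by linear_combination F43)
  constructor
  · funext i
    fin_cases i
    · simpa using hp1
    · simpa using hq1
    · simpa using hr1
    · simpa using hs1
  · funext i
    fin_cases i
    · simpa using hp2
    · simpa using hq2
    · simpa using hr2
    · simpa using hs2


lemma mem_Q (α β γ δ : ℝ) (hsum : α + β + γ + δ = 0) :
    ![Real.cos α, Real.cos β, Real.cos γ, Real.cos δ] ∈ Qbody := by
  set tv : Fin 4 → ℝ := ![0, α+γ, α, -β] with htv
  set L : Matrix (Fin 2) (Fin 4) ℝ :=
    Matrix.of ![fun j => Real.cos (tv j), fun j => Real.sin (tv j)] with hL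
  refine ⟨Real.cos (α+γ), Real.cos (α+β), ?_⟩
  have hLL : ∀ i j, (Lᴴ * L) i j = Real.cos (tv i - tv j) := by
    intro i j
    simp [hL, Matrix.mul_apply, Fin.sum_univ_succ, Matrix.conjTranspose_apply]
    rw [← Real.cos_sub]
  have key : Cmat ![Real.cos α, Real.cos β, Real.cos γ, Real.cos δ]
      (Real.cos (α+γ)) (Real.cos (α+β)) = Lᴴ * L := by
    ext i j
    rw [hLL]
    fin_cases i <;> fin_cases j <;> simp [Cmat, htv]
    · rw [show -γ + -α = -(α+γ) by ring, Real.cos_neg]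
    · rw [show α+γ+β = -δ by linarith, Real.cos_neg]
    · rw [show -β-(α+γ) = δ by linarith]
    · rw [show -β-α = -(α+β) by ring, Real.cos_neg]

  rw [key]
  exact Matrix.posSemidef_conjTranspose_mul_self L


theorem stmt8 (α β γ δ : ℝ) (hsum : α + β + γ + δ = 0)
    (hneg : Real.sin α * Real.sin β * Real.sin γ * Real.sin δ < 0) :
    ![Real.cos α, Real.cos β, Real.cos γ, Real.cos δ] ∈ Set.extremePoints ℝ Qbody := by
  have haP := Real.sin_sq_add_cos_sq α
  have hbP := Real.sin_sq_add_cos_sq β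
  have hgP := Real.sin_sq_add_cos_sq γ
  have hT : Real.sin (α+β) = Real.sin α * Real.cos β + Real.cos α * Real.sin β :=
    Real.sin_add α β
  have hV : Real.cos (α+β) = Real.cos α * Real.cos β - Real.sin α * Real.sin β :=
    Real.cos_add α β
  have hdd : Real.sin δ = -(Real.sin (α+β) * Real.cos γ + Real.cos (α+β) * Real.sin γ) := by
    rw [show δ = -(α+β+γ) by linarith, Real.sin_neg, Real.sin_add]
  have hDD : Real.cos δ = Real.cos (α+β) * Real.cos γ - Real.sin (α+β) * Real.sin γ := by
    rw [show δ = -(α+β+γ) by linarith, Real.cos_neg, Real.cos_add]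
  have ha0 : Real.sin α ≠ 0 := by intro h; rw [h] at hneg; simp at hneg
  have hb0 : Real.sin β ≠ 0 := by intro h; rw [h] at hneg; simp at hneg
  have hg0 : Real.sin γ ≠ 0 := by intro h; rw [h] at hneg; simp at hneg
  refine ⟨mem_Q α β γ δ hsum, ?_⟩
  rintro c1 ⟨u1, v1, hC1⟩ c2 ⟨u2, v2, hC2⟩ hseg
  obtain ⟨t, s, ht, hs, hts, hE⟩ := hseg
  have hc0 : t * c1 0 + s * c2 0 = Real.cos α := by simpa using congrFun hE 0
  have hc1 : t * c1 1 + s * c2 1 = Real.cos β := by simpa using congrFun hE 1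
  have hc2 : t * c1 2 + s * c2 2 = Real.cos γ := by simpa using congrFun hE 2
  have hc3 : t * c1 3 + s * c2 3 = Real.cos δ := by simpa using congrFun hE 3
  exact (key_step (Real.sin α) (Real.cos α) (Real.sin β) (Real.cos β) (Real.sin γ) (Real.cos γ)
    (Real.sin δ) (Real.cos δ) (Real.sin (α+β)) (Real.cos (α+β)) t s u1 v1 u2 v2 c1 c2
    haP hbP hgP hT hV hdd hDD ha0 hb0 hg0 hneg ht hs hts hc0 hc1 hc2 hc3 hC1 hC2).1
end

section
/- Let α, β, γ, δ ∈ ℝ satisfy α+β+γ+δ = 0 and sin α · sin β · sin γ · sin δ < 0, set c := (cos α, cos β, cos γ, cos δ), let K := cot α + cot β + cot γ + cot δ, and define f := (1/K)·(1/sin α, 1/sin β, 1/sin γ, 1/sin δ) ∈ ℝ⁴. Then f·c′ ≤ 1 for all c′ ∈ Q, with equality if and only if c′ = c; moreover f is the unique vector in ℝ⁴ with this property (so c is an exposed extreme point of Q with unique exposing functional f). -/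
set_option maxHeartbeats 1000000 in
lemma gram_mem (a b g d : ℝ) (h : a + b + g + d = 0) :
    ![Real.cos a, Real.cos b, Real.cos g, Real.cos d] ∈ Qbody := by
  refine ⟨Real.cos (a+g), Real.cos (a+b), ?_⟩
  have hd : d = -(a+b+g) := by linarith
  subst hd
  have hB : Cmat ![Real.cos a, Real.cos b, Real.cos g, Real.cos (-(a+b+g))]
      (Real.cos (a+g)) (Real.cos (a+b)) =
      (!![1, Real.cos (a+g), Real.cos a, Real.cos b;
       0, Real.sin (a+g), Real.sin a, -Real.sin b] : Matrix (Fin 2) (Fin 4) ℝ).conjTranspose *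
      (!![1, Real.cos (a+g), Real.cos a, Real.cos b;
       0, Real.sin (a+g), Real.sin a, -Real.sin b] : Matrix (Fin 2) (Fin 4) ℝ) := by
    ext i j
    fin_cases i <;> fin_cases j <;>
      simp [Cmat, Matrix.mul_apply, Fin.sum_univ_two, Matrix.conjTranspose_apply,
        Matrix.vecHead, Matrix.vecTail, Real.cos_add, Real.sin_add,
        Real.cos_neg, Real.sin_neg] <;>
      first
        | ring1
        | linear_combination (-1 : ℝ) * Real.sin_sq_add_cos_sq a
        | linear_combination (-1 : ℝ) * Real.sin_sq_add_cos_sq b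
        | linear_combination (-(Real.cos g)) * Real.sin_sq_add_cos_sq a
        | linear_combination (-(Real.cos g ^ 2 + Real.sin g ^ 2)) * Real.sin_sq_add_cos_sq a -
            Real.sin_sq_add_cos_sq g
  rw [hB]
  exact Matrix.posSemidef_conjTranspose_mul_self _

lemma zeroB (A B : ℝ) (h : ∀ t : ℝ, A * (Real.cos t - 1) + B * Real.sin t ≤ 0) : B = 0 := by
  by_contra hB
  set t := min 1 (|B| / (2 * (|A| + 1))) with ht
  have hBpos : 0 < |B| := abs_pos.mpr hB
  have ht0 : 0 < t := lt_min one_pos (by positivity)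
  have ht1 : t ≤ 1 := min_le_left _ _
  have htB : t ≤ |B| / (2 * (|A| + 1)) := min_le_right _ _
  have hsin : t / 2 < Real.sin t := by
    have h5 := Real.sin_gt_sub_cube ht0
    have ht2 : t ^ 2 ≤ 1 := by nlinarith
    have h6 : t ^ 3 ≤ t := by nlinarith
    linarith
  have hcos : 1 - Real.cos t ≤ t ^ 2 / 2 := by
    have h1 : Real.cos t = 1 - 2 * Real.sin (t / 2) ^ 2 := by
      have h2 := Real.cos_two_mul (t / 2)
      have hp := Real.sin_sq_add_cos_sq (t / 2)
      rw [show 2 * (t / 2) = t by ring] at h2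
      linarith
    have h2 : Real.sin (t / 2) ≤ t / 2 := Real.sin_le (by linarith)
    have h3 : 0 ≤ Real.sin (t / 2) := Real.sin_nonneg_of_nonneg_of_le_pi (by linarith)
      (by nlinarith [Real.pi_gt_three])
    nlinarith
  have h1c : 0 ≤ 1 - Real.cos t := by nlinarith [Real.cos_le_one t]
  have hb1 := h t
  have hb2 := h (-t)
  rw [Real.cos_neg, Real.sin_neg] at hb2
  have hBs : |B| * Real.sin t ≤ |A| * (1 - Real.cos t) := by
    rcases abs_cases B with ⟨hB', _⟩ | ⟨hB', _⟩ <;> rw [hB'] <;>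
      nlinarith [mul_nonneg (by linarith [le_abs_self A] : (0:ℝ) ≤ |A| - A) h1c,
        mul_nonneg (by linarith [neg_abs_le A] : (0:ℝ) ≤ |A| + A) h1c]
  have hBs' : |B| * Real.sin t ≤ |A| * (t ^ 2 / 2) :=
    hBs.trans (mul_le_mul_of_nonneg_left hcos (abs_nonneg A))
  have s1 : |B| * (t / 2) < |B| * Real.sin t := mul_lt_mul_of_pos_left hsin hBpos
  have hden : (0:ℝ) < 2 * (|A| + 1) := by positivity
  have hq : |B| / (2 * (|A| + 1)) * (2 * (|A| + 1)) = |B| := div_mul_cancel₀ _ (ne_of_gt hden)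
  have s3 : |A| * t ≤ |A| * (|B| / (2 * (|A| + 1))) := mul_le_mul_of_nonneg_left htB (abs_nonneg A)
  have s4 : |A| * (|B| / (2 * (|A| + 1))) ≤ |B| / 2 := by
    nlinarith [hq, div_nonneg (abs_nonneg B) hden.le, abs_nonneg A]
  have s5 : (|A| * t) * (t / 2) ≤ (|B| / 2) * (t / 2) :=
    mul_le_mul_of_nonneg_right (s3.trans s4) (by linarith)
  nlinarith [mul_pos hBpos ht0]

lemma ineqlemma (X Y S M : ℝ) (hX : 0 ≤ X) (hY : 0 ≤ Y) (hM : 0 < M)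
    (h : X + Y = -2*((S - 1)*M)) : S ≤ 1 := by nlinarith

lemma eqlemma (X Y S M : ℝ) (hX : 0 ≤ X) (hY : 0 ≤ Y) (hM : 0 < M)
    (h : X + Y = -2*((S - 1)*M)) (h2 : S = 1) : X = 0 ∧ Y = 0 := by
  constructor <;> nlinarith

lemma signlemma (P Q A B K2 : ℝ) (hP : 0 < P) (hQ : 0 < Q) (hAB : A*B < 0)
    (h : P*B - Q*A = 2*K2*(A*B)) : 0 < K2*A ∧ 0 < K2*(-B) := by
  have hBne : B ≠ 0 := fun hb => by rw [hb] at hAB; simp at hAB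
  have hAne : A ≠ 0 := fun ha => by rw [ha] at hAB; simp at hAB
  have hB2 : 0 < B^2 := lt_of_le_of_ne (sq_nonneg _) (Ne.symm (pow_ne_zero 2 hBne))
  have hA2 : 0 < A^2 := lt_of_le_of_ne (sq_nonneg _) (Ne.symm (pow_ne_zero 2 hAne))
  have h' : P*B^2 - Q*(A*B) = 2*((K2*A)*B^2) := by linear_combination B*h
  have key : 0 < (K2*A)*B^2 := by nlinarith [mul_pos hP hB2, mul_pos hQ (neg_pos.mpr hAB), h']
  have h1 : 0 < K2*A := by nlinarith [key, hB2]
  refine ⟨h1, ?_⟩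
  have key2 : 0 < (K2*(-B))*A^2 := by nlinarith [mul_pos h1 (neg_pos.mpr hAB)]
  nlinarith [key2, hA2]

set_option maxHeartbeats 2000000 in
theorem stmt9 (α β γ δ : ℝ) (hsum : α + β + γ + δ = 0)
    (hneg : Real.sin α * Real.sin β * Real.sin γ * Real.sin δ < 0)
    (c : Fin 4 → ℝ) (hc : c = ![Real.cos α, Real.cos β, Real.cos γ, Real.cos δ])
    (K : ℝ) (hK : K = Real.cos α / Real.sin α + Real.cos β / Real.sin β +
      Real.cos γ / Real.sin γ + Real.cos δ / Real.sin δ)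
    (f : Fin 4 → ℝ)
    (hf : f = (1 / K) • ![(Real.sin α)⁻¹, (Real.sin β)⁻¹, (Real.sin γ)⁻¹, (Real.sin δ)⁻¹]) :
    (∀ c' ∈ Qbody, ∑ i, f i * c' i ≤ 1) ∧
    (∀ c' ∈ Qbody, (∑ i, f i * c' i = 1 ↔ c' = c)) ∧
    (∀ f' : Fin 4 → ℝ,
      ((∀ c' ∈ Qbody, ∑ i, f' i * c' i ≤ 1) ∧
        (∀ c' ∈ Qbody, (∑ i, f' i * c' i = 1 ↔ c' = c))) → f' = f) := by
  have hδ : δ = -(α+β+γ) := by linarith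
  have hsd' : Real.sin δ = -((Real.sin α*Real.cos β + Real.cos α*Real.sin β)*Real.cos γ +
      (Real.cos α*Real.cos β - Real.sin α*Real.sin β)*Real.sin γ) := by
    rw [hδ]; simp [Real.sin_add, Real.cos_add, Real.sin_neg, Real.cos_neg]; ring
  have hcd' : Real.cos δ = (Real.cos α*Real.cos β - Real.sin α*Real.sin β)*Real.cos γ -
      (Real.sin α*Real.cos β + Real.cos α*Real.sin β)*Real.sin γ := by
    rw [hδ]; simp [Real.sin_add, Real.cos_add, Real.sin_neg, Real.cos_neg]; ring
  set sa := Real.sin α with hsa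
  set ca := Real.cos α with hca
  set sb := Real.sin β with hsb
  set cb := Real.cos β with hcb
  set sg := Real.sin γ with hsg
  set cg := Real.cos γ with hcg
  set sd := Real.sin δ with hsdv
  set cd := Real.cos δ with hcdv
  have pa : sa^2 + ca^2 = 1 := Real.sin_sq_add_cos_sq α
  have pb : sb^2 + cb^2 = 1 := Real.sin_sq_add_cos_sq β
  have pg : sg^2 + cg^2 = 1 := Real.sin_sq_add_cos_sq γ
  have hsa0 : sa ≠ 0 := fun h => by rw [h] at hneg; simp at hneg
  have hsb0 : sb ≠ 0 := fun h => by rw [h] at hneg; simp at hneg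
  have hsg0 : sg ≠ 0 := fun h => by rw [h] at hneg; simp at hneg
  have hsd0 : sd ≠ 0 := fun h => by rw [h] at hneg; simp at hneg
  have hS0 : sa*cb + ca*sb ≠ 0 := by
    intro h
    have h1 : sb = -(ca*cb - sa*sb)*sa := by linear_combination (-sb)*pa + ca*h
    have h2 : sd = -(ca*cb - sa*sb)*sg := by linear_combination hsd' - cg*h
    rw [h1, h2] at hneg
    nlinarith [sq_nonneg (sa*sg*(ca*cb - sa*sb))]
  have hKp : K * (sa*sb*sg*sd) = ca*sb*sg*sd + sa*cb*sg*sd + sa*sb*cg*sd + sa*sb*sg*cd := by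
    rw [hK]; field_simp
  have hconst : ((sa*cb+ca*sb)^2 + sa^2 + sb^2) * (sg*sd) - ((sa*cb+ca*sb)^2 + sg^2 + sd^2) * (sa*sb)
      = 2*K*(sa*sb*sg*sd)*(sa*cb+ca*sb) := by
    linear_combination (-2*ca*sb - 2*cb*sa) * hKp + (-ca*cb*sa*sb*sg - ca*cg*sa*sb^2 - ca^2*sb^2*sg - cb*cg*sa^2*sb - cb^2*sa^2*sg - sa*sb*sd - sa^2*sb^2*sg + sa^2*sg + sb^2*sg) * hsd' + (-2*ca*sa*sb^2*sg - 2*cb*sa^2*sb*sg) * hcd' + (ca*cb*sb^2*sg^2 + ca*cg*sb^3*sg + cb*cg*sa*sb^2*sg + cb^2*sa*sb*sg^2 + cg^2*sa*sb^3 - sa*sb^3 + sa*sb^3*sg^2) * pa + (ca*cb*sa^2*sg^2 + ca*cg*sa^2*sb*sg + cb*cg*sa^3*sg + cg^2*sa^3*sb + sa*sb*sg^2 - sa^3*sb) * pb + (2*ca*cb*sa^2*sb^2 + sa*sb^3 + sa^3*sb - 2*sa^3*sb^3) * pg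
  have hAB : (sa*sb*(sa*cb+ca*sb)) * (sg*sd*(sa*cb+ca*sb)) < 0 := by
    have hS2 : 0 < (sa*cb+ca*sb)^2 := lt_of_le_of_ne (sq_nonneg _) (Ne.symm (pow_ne_zero 2 hS0))
    nlinarith [mul_pos (neg_pos.mpr hneg) hS2]
  have hsa2 : 0 < sa^2 := lt_of_le_of_ne (sq_nonneg _) (Ne.symm (pow_ne_zero 2 hsa0))
  have hsg2 : 0 < sg^2 := lt_of_le_of_ne (sq_nonneg _) (Ne.symm (pow_ne_zero 2 hsg0))
  have hP : 0 < (sa*cb+ca*sb)^2 + sa^2 + sb^2 := by nlinarith [sq_nonneg (sa*cb+ca*sb), sq_nonneg sb]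
  have hQ : 0 < (sa*cb+ca*sb)^2 + sg^2 + sd^2 := by nlinarith [sq_nonneg (sa*cb+ca*sb), sq_nonneg sd]
  have hsign := signlemma ((sa*cb+ca*sb)^2 + sa^2 + sb^2) ((sa*cb+ca*sb)^2 + sg^2 + sd^2)
      (sa*sb*(sa*cb+ca*sb)) (sg*sd*(sa*cb+ca*sb)) K hP hQ hAB
      (by linear_combination (sa*cb+ca*sb) * hconst)
  have hKA : 0 < K * (sa*sb*(sa*cb+ca*sb)) := hsign.1
  have hKB : 0 < K * (-(sg*sd*(sa*cb+ca*sb))) := hsign.2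
  have hK0 : K ≠ 0 := by
    intro h; rw [h] at hKA; simp at hKA
  have hprod0 : sa*sb*sg*sd ≠ 0 :=
    mul_ne_zero (mul_ne_zero (mul_ne_zero hsa0 hsb0) hsg0) hsd0
  have hKprod0 : K*(sa*sb*sg*sd) ≠ 0 := mul_ne_zero hK0 hprod0
  -- basic f facts
  have hf0K : f 0 * (K * sa) = 1 := by
    rw [hf]; simp only [Pi.smul_apply, Matrix.cons_val_zero, smul_eq_mul]; field_simp
  have hf1K : f 1 * (K * sb) = 1 := by
    rw [hf]; simp only [Pi.smul_apply, Matrix.cons_val_one, Matrix.head_cons, smul_eq_mul]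
    field_simp
    simp [hsb0]
  have hf2K : f 2 * (K * sg) = 1 := by
    rw [hf]; simp only [Pi.smul_apply, smul_eq_mul]; norm_num; field_simp
    simp [hsg0]
  have hf3K : f 3 * (K * sd) = 1 := by
    rw [hf]; simp only [Pi.smul_apply, smul_eq_mul]; norm_num; field_simp
    simp [hsd0]
  -- sum at c equals 1
  have hsum1 : ∑ i, f i * c i = 1 := by
    have h1 : (∑ i, f i * c i - 1)*(K*(sa*sb*sg*sd)) = 0 := by
      rw [hc, Fin.sum_univ_four]
      simp only [Matrix.cons_val_zero, Matrix.cons_val_one, Matrix.head_cons,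
        Matrix.cons_val_two, Matrix.tail_cons, Matrix.cons_val_three]
      linear_combination (ca*(sb*sg*sd))*hf0K + (cb*(sa*sg*sd))*hf1K + (cg*(sa*sb*sd))*hf2K +
        (cd*(sa*sb*sg))*hf3K - hKp
    rcases mul_eq_zero.mp h1 with h | h
    · linarith
    · exact absurd h hKprod0
  -- main inequality/equality analysis for arbitrary members
  have main : ∀ c' ∈ Qbody, (∑ i, f i * c' i ≤ 1 ∧ (∑ i, f i * c' i = 1 → c' = c)) := by
    rintro c' ⟨u, v, hC⟩
    have er : dotProduct (star ![(sa*cb+ca*sb), 0, -sb, -sa])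
        ((Cmat c' u v).mulVec ![(sa*cb+ca*sb), 0, -sb, -sa]) =
        (sa*cb+ca*sb)^2 + sa^2 + sb^2 - 2*(sa*cb+ca*sb)*(sb*c' 0 + sa*c' 1) + 2*sa*sb*v := by
      simp [Cmat, dotProduct, Matrix.mulVec, Fin.sum_univ_four]
      ring
    have es : dotProduct (star ![0, (sa*cb+ca*sb), sd, sg])
        ((Cmat c' u v).mulVec ![0, (sa*cb+ca*sb), sd, sg]) =
        (sa*cb+ca*sb)^2 + sg^2 + sd^2 + 2*(sa*cb+ca*sb)*(sd*c' 2 + sg*c' 3) + 2*sg*sd*v := by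
      simp [Cmat, dotProduct, Matrix.mulVec, Fin.sum_univ_four]
      ring
    have hQr : 0 ≤ (sa*cb+ca*sb)^2 + sa^2 + sb^2 - 2*(sa*cb+ca*sb)*(sb*c' 0 + sa*c' 1) + 2*sa*sb*v := by
      have h := hC.dotProduct_mulVec_nonneg ![(sa*cb+ca*sb), 0, -sb, -sa]; rw [er] at h; exact h
    have hQs : 0 ≤ (sa*cb+ca*sb)^2 + sg^2 + sd^2 + 2*(sa*cb+ca*sb)*(sd*c' 2 + sg*c' 3) + 2*sg*sd*v := by
      have h := hC.dotProduct_mulVec_nonneg ![0, (sa*cb+ca*sb), sd, sg]; rw [es] at h; exact h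
    have hSum2 : (∑ i, f i * c' i) * (K*(sa*sb*sg*sd)) =
        c' 0*(sb*sg*sd) + c' 1*(sa*sg*sd) + c' 2*(sa*sb*sd) + c' 3*(sa*sb*sg) := by
      rw [Fin.sum_univ_four]
      linear_combination (c' 0*(sb*sg*sd))*hf0K + (c' 1*(sa*sg*sd))*hf1K +
        (c' 2*(sa*sb*sd))*hf2K + (c' 3*(sa*sb*sg))*hf3K
    have hI2 : (sa*sb*(sa*cb+ca*sb)) *
          ((sa*cb+ca*sb)^2 + sg^2 + sd^2 + 2*(sa*cb+ca*sb)*(sd*c' 2 + sg*c' 3) + 2*sg*sd*v)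
        - (sg*sd*(sa*cb+ca*sb)) *
          ((sa*cb+ca*sb)^2 + sa^2 + sb^2 - 2*(sa*cb+ca*sb)*(sb*c' 0 + sa*c' 1) + 2*sa*sb*v)
        = 2*(sa*cb+ca*sb)^2*((∑ i, f i * c' i - 1) * (K*(sa*sb*sg*sd))) := by
      linear_combination (-2*(sa*cb+ca*sb)^2) * hSum2 +
        (4*ca*cb*sa*sb + 2*ca^2*sb^2 + 2*cb^2*sa^2) * hKp +
        (2*ca*cb*cg*sa^2*sb^2 + 2*ca*cb^2*sa^2*sb*sg + ca*sa*sb^2*sd - ca*sa^2*sb*sg + ca*sa^2*sb^3*sg - ca*sb^3*sg + 2*ca^2*cb*sa*sb^2*sg + ca^2*cg*sa*sb^3 + ca^3*sb^3*sg - cb*sa*sb^2*sg + cb*sa^2*sb*sd + cb*sa^3*sb^2*sg - cb*sa^3*sg + cb^2*cg*sa^3*sb + cb^3*sa^3*sg) * hsd' +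
        (4*ca*cb*sa^2*sb^2*sg + 2*ca^2*sa*sb^3*sg + 2*cb^2*sa^3*sb*sg) * hcd' +
        (-2*ca*cb*cg*sa*sb^3*sg - 2*ca*cb^2*sa*sb^2*sg^2 - ca*cg^2*sa*sb^4 + ca*sa*sb^4 - ca*sa*sb^4*sg^2 - ca^2*cb*sb^3*sg^2 - ca^2*cg*sb^4*sg - 3*cb*cg^2*sa^2*sb^3 + cb*sa^2*sb*sg^2 + 3*cb*sa^2*sb^3 - 4*cb*sa^2*sb^3*sg^2 - 2*cb^2*cg*sa^2*sb^2*sg - 2*cb^3*sa^2*sb*sg^2 + cg*sa^2*sb^2*sg - cg*sa^2*sb^4*sg) * pa +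
        (-2*ca*cb*cg*sa^3*sb*sg - ca*cb^2*sa^3*sg^2 - 3*ca*cg^2*sa^3*sb^2 - ca*sa*sb^2*sg^2 + 3*ca*sa^3*sb^2 - 2*ca*sa^3*sb^2*sg^2 - cb*cg^2*sa^4*sb - 2*cb*sa^2*sb*sg^2 + cb*sa^4*sb + cb*sa^4*sb*sg^2 - cb^2*cg*sa^4*sg - cg*sa^2*sb^2*sg + cg*sa^4*sb^2*sg) * pb +
        (-ca*sa*sb^4 - 3*ca*sa^3*sb^2 + 4*ca*sa^3*sb^4 - 3*cb*sa^2*sb^3 - cb*sa^4*sb + 4*cb*sa^4*sb^3) * pg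
    have hI3 : (K*(sa*sb*(sa*cb+ca*sb))) *
          ((sa*cb+ca*sb)^2 + sg^2 + sd^2 + 2*(sa*cb+ca*sb)*(sd*c' 2 + sg*c' 3) + 2*sg*sd*v)
        + (K*(-(sg*sd*(sa*cb+ca*sb)))) *
          ((sa*cb+ca*sb)^2 + sa^2 + sb^2 - 2*(sa*cb+ca*sb)*(sb*c' 0 + sa*c' 1) + 2*sa*sb*v)
        = -2*((∑ i, f i * c' i - 1) * ((K*(sa*sb*(sa*cb+ca*sb))) * (K*(-(sg*sd*(sa*cb+ca*sb)))))) := by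
      linear_combination K * hI2
    constructor
    · exact ineqlemma _ _ _ _ (mul_nonneg hKA.le hQs) (mul_nonneg hKB.le hQr)
        (mul_pos hKA hKB) hI3
    · intro heq
      obtain ⟨hX0, hY0⟩ := eqlemma _ _ _ _ (mul_nonneg hKA.le hQs) (mul_nonneg hKB.le hQr)
        (mul_pos hKA hKB) hI3 heq
      have hQs0 : (sa*cb+ca*sb)^2 + sg^2 + sd^2 + 2*(sa*cb+ca*sb)*(sd*c' 2 + sg*c' 3) + 2*sg*sd*v = 0 :=
        (mul_eq_zero.mp hX0).resolve_left (ne_of_gt hKA)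
      have hQr0 : (sa*cb+ca*sb)^2 + sa^2 + sb^2 - 2*(sa*cb+ca*sb)*(sb*c' 0 + sa*c' 1) + 2*sa*sb*v = 0 :=
        (mul_eq_zero.mp hY0).resolve_left (ne_of_gt hKB)
      have hCr := (hC.dotProduct_mulVec_zero_iff ![(sa*cb+ca*sb), 0, -sb, -sa]).mp
        (by rw [er]; exact hQr0)
      have hCs := (hC.dotProduct_mulVec_zero_iff ![0, (sa*cb+ca*sb), sd, sg]).mp
        (by rw [es]; exact hQs0)
      have he0 : (sa*cb+ca*sb) - sb*c' 0 - sa*c' 1 = 0 := by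
        have h := congrFun hCr 0
        simp [Cmat, Matrix.mulVec, dotProduct, Fin.sum_univ_four] at h
        linear_combination h
      have he2 : (sa*cb+ca*sb)*c' 0 - sb - sa*v = 0 := by
        have h := congrFun hCr 2
        simp [Cmat, Matrix.mulVec, dotProduct, Fin.sum_univ_four] at h
        linear_combination h
      have he3 : (sa*cb+ca*sb)*c' 1 - sb*v - sa = 0 := by
        have h := congrFun hCr 3
        simp [Cmat, Matrix.mulVec, dotProduct, Fin.sum_univ_four] at h
        linear_combination h
      have hf2 : (sa*cb+ca*sb)*c' 2 + sd + sg*v = 0 := by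
        have h := congrFun hCs 2
        simp [Cmat, Matrix.mulVec, dotProduct, Fin.sum_univ_four] at h
        linear_combination h
      have hf3 : (sa*cb+ca*sb)*c' 3 + sd*v + sg = 0 := by
        have h := congrFun hCs 3
        simp [Cmat, Matrix.mulVec, dotProduct, Fin.sum_univ_four] at h
        linear_combination h
      have hveq : v = ca*cb - sa*sb := by
        have hv' : (sa*sb)*(v - (ca*cb - sa*sb)) = 0 := by
          linear_combination (-(1/2)*(sa*cb+ca*sb)) * he0 +
            (-(1/2)*sb) * he2 +
            (-(1/2)*sa) * he3 +
            ((1/2)*sb^2) * pa +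
            ((1/2)*sa^2) * pb
        rcases mul_eq_zero.mp hv' with h | h
        · exact absurd h (mul_ne_zero hsa0 hsb0)
        · linarith
      have hx0 : c' 0 = ca := by
        have h' : (sa*cb+ca*sb)*(c' 0 - ca) = 0 := by
          linear_combination he2 + sa * hveq + (-sb) * pa
        rcases mul_eq_zero.mp h' with h | h
        · exact absurd h hS0
        · linarith
      have hx1 : c' 1 = cb := by
        have h' : (sa*cb+ca*sb)*(c' 1 - cb) = 0 := by
          linear_combination he3 + sb * hveq + (-sa) * pb
        rcases mul_eq_zero.mp h' with h | h
        · exact absurd h hS0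
        · linarith
      have hx2 : c' 2 = cg := by
        have h' : (sa*cb+ca*sb)*(c' 2 - cg) = 0 := by
          linear_combination hf2 + (-sg) * hveq + (-1) * hsd'
        rcases mul_eq_zero.mp h' with h | h
        · exact absurd h hS0
        · linarith
      have hx3 : c' 3 = cd := by
        have h' : (sa*cb+ca*sb)*(c' 3 - cd) = 0 := by
          linear_combination hf3 + (-sd) * hveq + (-ca*cb + sa*sb) * hsd' +
            (-ca*sb - cb*sa) * hcd' + (cb^2*sg + sb^2*sg) * pa + (sg) * pb
        rcases mul_eq_zero.mp h' with h | h
        · exact absurd h hS0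
        · linarith
      funext i
      fin_cases i
      · simpa [hc] using hx0
      · simpa [hc] using hx1
      · simpa [hc] using hx2
      · simpa [hc] using hx3
  refine ⟨fun c' hc' => (main c' hc').1,
    fun c' hc' => ⟨(main c' hc').2, fun h => by rw [h]; exact hsum1⟩, ?_⟩
  -- uniqueness
  intro f' ⟨hle, hiff⟩
  have hcQ : c ∈ Qbody := by rw [hc]; exact gram_mem α β γ δ hsum
  have hfc : f' 0*ca + f' 1*cb + f' 2*cg + f' 3*cd = 1 := by
    have h := (hiff c hcQ).mpr rfl
    rw [hc, Fin.sum_univ_four] at h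
    simp only [Matrix.cons_val_zero, Matrix.cons_val_one, Matrix.head_cons,
      Matrix.cons_val_two, Matrix.tail_cons, Matrix.cons_val_three] at h
    linear_combination h
  have hB0 : f' 3 * sd - f' 0 * sa = 0 := by
    apply zeroB (f' 0 * ca + f' 3 * cd)
    intro t
    have hm := hle ![Real.cos (α+t), Real.cos β, Real.cos γ, Real.cos (δ-t)]
      (gram_mem (α+t) β γ (δ-t) (by linarith))
    rw [Fin.sum_univ_four] at hm
    simp only [Matrix.cons_val_zero, Matrix.cons_val_one, Matrix.head_cons,
      Matrix.cons_val_two, Matrix.tail_cons, Matrix.cons_val_three] at hm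
    have hex : f' 0 * Real.cos (α+t) + f' 1 * Real.cos β + f' 2 * Real.cos γ +
        f' 3 * Real.cos (δ-t) =
        (f' 0*ca + f' 3*cd)*(Real.cos t - 1) + (f' 3*sd - f' 0*sa)*Real.sin t +
        (f' 0*ca + f' 1*cb + f' 2*cg + f' 3*cd) := by
      simp only [hsa, hca, hsb, hcb, hsg, hcg, hsdv, hcdv, Real.cos_add, Real.cos_sub]
      ring
    rw [hex] at hm
    linarith
  have hB1 : f' 3 * sd - f' 1 * sb = 0 := by
    apply zeroB (f' 1 * cb + f' 3 * cd)
    intro t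
    have hm := hle ![Real.cos α, Real.cos (β+t), Real.cos γ, Real.cos (δ-t)]
      (gram_mem α (β+t) γ (δ-t) (by linarith))
    rw [Fin.sum_univ_four] at hm
    simp only [Matrix.cons_val_zero, Matrix.cons_val_one, Matrix.head_cons,
      Matrix.cons_val_two, Matrix.tail_cons, Matrix.cons_val_three] at hm
    have hex : f' 0 * Real.cos α + f' 1 * Real.cos (β+t) + f' 2 * Real.cos γ +
        f' 3 * Real.cos (δ-t) =
        (f' 1*cb + f' 3*cd)*(Real.cos t - 1) + (f' 3*sd - f' 1*sb)*Real.sin t +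
        (f' 0*ca + f' 1*cb + f' 2*cg + f' 3*cd) := by
      simp only [hsa, hca, hsb, hcb, hsg, hcg, hsdv, hcdv, Real.cos_add, Real.cos_sub]
      ring
    rw [hex] at hm
    linarith
  have hB2 : f' 3 * sd - f' 2 * sg = 0 := by
    apply zeroB (f' 2 * cg + f' 3 * cd)
    intro t
    have hm := hle ![Real.cos α, Real.cos β, Real.cos (γ+t), Real.cos (δ-t)]
      (gram_mem α β (γ+t) (δ-t) (by linarith))
    rw [Fin.sum_univ_four] at hm
    simp only [Matrix.cons_val_zero, Matrix.cons_val_one, Matrix.head_cons,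
      Matrix.cons_val_two, Matrix.tail_cons, Matrix.cons_val_three] at hm
    have hex : f' 0 * Real.cos α + f' 1 * Real.cos β + f' 2 * Real.cos (γ+t) +
        f' 3 * Real.cos (δ-t) =
        (f' 2*cg + f' 3*cd)*(Real.cos t - 1) + (f' 3*sd - f' 2*sg)*Real.sin t +
        (f' 0*ca + f' 1*cb + f' 2*cg + f' 3*cd) := by
      simp only [hsa, hca, hsb, hcb, hsg, hcg, hsdv, hcdv, Real.cos_add, Real.cos_sub]
      ring
    rw [hex] at hm
    linarith
  have hT' : (f' 3 * sd * K - 1) * (sa*sb*sg*sd) = 0 := by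
    linear_combination (f' 3 * sd) * hKp +
      (ca*sg*sd*sb) * hB0 +
      (cb*sa*sg*sd) * hB1 +
      (cg*sa*sb*sd) * hB2 +
      (sa*sb*sg*sd) * hfc
  have hT : f' 3 * sd * K = 1 := by
    rcases mul_eq_zero.mp hT' with h | h
    · linarith
    · exact absurd h hprod0
  funext i
  fin_cases i
  · show f' 0 = f 0
    rw [hf]
    simp only [Pi.smul_apply, Matrix.cons_val_zero, smul_eq_mul]
    field_simp
    linear_combination (-K) * hB0 + hT
  · show f' 1 = f 1
    rw [hf]
    simp only [Pi.smul_apply, Matrix.cons_val_one, Matrix.head_cons, smul_eq_mul]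
    simp only [Matrix.cons_val_zero]
    field_simp
    linear_combination (-K) * hB1 + hT
  · show f' 2 = f 2
    rw [hf]
    simp only [Pi.smul_apply, smul_eq_mul]
    norm_num
    simp only [Matrix.cons_val]
    field_simp
    linear_combination (-K) * hB2 + hT
  · show f' 3 = f 3
    rw [hf]
    simp only [Pi.smul_apply, smul_eq_mul]
    norm_num
    simp only [Matrix.cons_val]
    field_simp
    linear_combination hT
end

section
/- For a point c ∈ Q, the following are equivalent: (1) c lies in the topological boundary of Q; (2) there is exactly one pair (u,v) ∈ ℝ² such that the matrix C(c,u,v) is positive semidefinite. -/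
open Matrix

theorem quantn {n : ℕ} (hn : 0 < n) (f : (Fin n → ℝ) → ℝ) (hf : Continuous f)
    (hom : ∀ (r : ℝ) (x : Fin n → ℝ), f (r • x) = r^2 * f x)
    (hpos : ∀ x : Fin n → ℝ, x ≠ 0 → 0 < f x) :
    ∃ δ : ℝ, 0 < δ ∧ ∀ x : Fin n → ℝ, δ * (∑ i, (x i)^2) ≤ f x := by
  have hne : (Metric.sphere (0 : Fin n → ℝ) 1).Nonempty := by
    refine ⟨fun _ => 1, ?_⟩
    have : Nonempty (Fin n) := ⟨⟨0, hn⟩⟩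
    simp [mem_sphere_zero_iff_norm, pi_norm_const]
  obtain ⟨x₀, hx₀m, hmin⟩ :=
    (isCompact_sphere (0 : Fin n → ℝ) 1).exists_isMinOn hne hf.continuousOn
  have hx₀norm : ‖x₀‖ = 1 := by simpa [mem_sphere_zero_iff_norm] using hx₀m
  have hx₀ne : x₀ ≠ 0 := by
    intro h; rw [h] at hx₀norm; simp at hx₀norm
  have hm : 0 < f x₀ := hpos x₀ hx₀ne
  have hnr : (0:ℝ) < n := by exact_mod_cast hn
  refine ⟨f x₀ / n, div_pos hm hnr, ?_⟩
  intro x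
  by_cases hx : x = 0
  · subst hx
    have : f 0 = 0 := by
      have := hom 0 0; simpa using this
    simp [this]
  · have hxn : (0:ℝ) < ‖x‖ := norm_pos_iff.mpr hx
    set y : Fin n → ℝ := ‖x‖⁻¹ • x with hy
    have hyn : ‖y‖ = 1 := by
      rw [hy, norm_smul]; simp [abs_of_nonneg (le_of_lt (inv_pos.mpr hxn))]
      field_simp
    have hymem : y ∈ Metric.sphere (0 : Fin n → ℝ) 1 := by
      simp [mem_sphere_zero_iff_norm, hyn]
    have hfy : f x₀ ≤ f y := hmin hymem
    have hxy : x = ‖x‖ • y := by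
      rw [hy, smul_smul]; field_simp; simp
    have hfx : f x = ‖x‖^2 * f y := by
      calc f x = f (‖x‖ • y) := by rw [← hxy]
        _ = ‖x‖^2 * f y := hom _ _
    have hsum : ∑ i, (x i)^2 ≤ n * ‖x‖^2 := by
      have : ∀ i, (x i)^2 ≤ ‖x‖^2 := by
        intro i
        have h1 : ‖x i‖ ≤ ‖x‖ := norm_le_pi_norm x i
        rw [Real.norm_eq_abs] at h1
        nlinarith [abs_nonneg (x i), norm_nonneg x, sq_abs (x i)]
      calc ∑ i, (x i)^2 ≤ ∑ _i : Fin n, ‖x‖^2 := Finset.sum_le_sum (fun i _ => this i)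
        _ = n * ‖x‖^2 := by simp [Finset.sum_const, mul_comm]
    have h1 : f x₀ / n * (∑ i, (x i)^2) ≤ f x₀ / n * (n * ‖x‖^2) := by
      apply mul_le_mul_of_nonneg_left hsum; positivity
    have h2 : f x₀ / n * (n * ‖x‖^2) = ‖x‖^2 * f x₀ := by
      field_simp
    have h3 : ‖x‖^2 * f x₀ ≤ ‖x‖^2 * f y := by nlinarith
    linarith [hfx ▸ h3, h1, h2 ▸ h1]

def Pq (a b d e u v x0 x1 x2 x3 : ℝ) : ℝ :=
  x0^2+x1^2+x2^2+x3^2+2*u*x0*x1+2*v*x2*x3+2*a*x0*x2+2*b*x0*x3+2*d*x1*x2+2*e*x1*x3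

def PSDq (a b d e u v : ℝ) : Prop := ∀ x0 x1 x2 x3 : ℝ, 0 ≤ Pq a b d e u v x0 x1 x2 x3

def Posq (a b d e u v : ℝ) : Prop :=
  ∀ x0 x1 x2 x3 : ℝ, ¬(x0 = 0 ∧ x1 = 0 ∧ x2 = 0 ∧ x3 = 0) → 0 < Pq a b d e u v x0 x1 x2 x3

def F3 (u a b x y z : ℝ) : ℝ := x^2+y^2+z^2+2*u*x*y+2*a*x*z+2*b*y*z

def PSD3 (u a b : ℝ) : Prop := ∀ x y z : ℝ, 0 ≤ F3 u a b x y z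

def Pos3 (u a b : ℝ) : Prop := ∀ x y z : ℝ, ¬(x = 0 ∧ y = 0 ∧ z = 0) → 0 < F3 u a b x y z

-- kernel helper
lemma lin_zero {L : ℝ} (h : ∀ t : ℝ, 0 ≤ 2*t*L + t^2) : L = 0 := by
  have := h (-L); nlinarith

-- 4x4 kernel equations
lemma ker0 {a b d e u v x0 x1 x2 x3 : ℝ} (h : PSDq a b d e u v)
    (hx : Pq a b d e u v x0 x1 x2 x3 = 0) : x0 + u*x1 + a*x2 + b*x3 = 0 := by
  apply lin_zero; intro t
  have key : Pq a b d e u v (x0+t) x1 x2 x3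
      = Pq a b d e u v x0 x1 x2 x3 + (2*t*(x0 + u*x1 + a*x2 + b*x3) + t^2) := by
    simp only [Pq]; ring
  have := h (x0+t) x1 x2 x3
  linarith [key ▸ this]

lemma ker1 {a b d e u v x0 x1 x2 x3 : ℝ} (h : PSDq a b d e u v)
    (hx : Pq a b d e u v x0 x1 x2 x3 = 0) : u*x0 + x1 + d*x2 + e*x3 = 0 := by
  apply lin_zero; intro t
  have key : Pq a b d e u v x0 (x1+t) x2 x3
      = Pq a b d e u v x0 x1 x2 x3 + (2*t*(u*x0 + x1 + d*x2 + e*x3) + t^2) := by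
    simp only [Pq]; ring
  have := h x0 (x1+t) x2 x3
  linarith [key ▸ this]

lemma ker2 {a b d e u v x0 x1 x2 x3 : ℝ} (h : PSDq a b d e u v)
    (hx : Pq a b d e u v x0 x1 x2 x3 = 0) : a*x0 + d*x1 + x2 + v*x3 = 0 := by
  apply lin_zero; intro t
  have key : Pq a b d e u v x0 x1 (x2+t) x3
      = Pq a b d e u v x0 x1 x2 x3 + (2*t*(a*x0 + d*x1 + x2 + v*x3) + t^2) := by
    simp only [Pq]; ring
  have := h x0 x1 (x2+t) x3
  linarith [key ▸ this]

lemma ker3 {a b d e u v x0 x1 x2 x3 : ℝ} (h : PSDq a b d e u v)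
    (hx : Pq a b d e u v x0 x1 x2 x3 = 0) : b*x0 + e*x1 + v*x2 + x3 = 0 := by
  apply lin_zero; intro t
  have key : Pq a b d e u v x0 x1 x2 (x3+t)
      = Pq a b d e u v x0 x1 x2 x3 + (2*t*(b*x0 + e*x1 + v*x2 + x3) + t^2) := by
    simp only [Pq]; ring
  have := h x0 x1 x2 (x3+t)
  linarith [key ▸ this]

-- 3x3 kernel equations
lemma k3_0 {u a b x y z : ℝ} (h : PSD3 u a b) (hx : F3 u a b x y z = 0) :
    x + u*y + a*z = 0 := by
  apply lin_zero; intro t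
  have key : F3 u a b (x+t) y z = F3 u a b x y z + (2*t*(x + u*y + a*z) + t^2) := by
    simp only [F3]; ring
  have := h (x+t) y z
  linarith [key ▸ this]

lemma k3_1 {u a b x y z : ℝ} (h : PSD3 u a b) (hx : F3 u a b x y z = 0) :
    u*x + y + b*z = 0 := by
  apply lin_zero; intro t
  have key : F3 u a b x (y+t) z = F3 u a b x y z + (2*t*(u*x + y + b*z) + t^2) := by
    simp only [F3]; ring
  have := h x (y+t) z
  linarith [key ▸ this]

lemma k3_2 {u a b x y z : ℝ} (h : PSD3 u a b) (hx : F3 u a b x y z = 0) :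
    a*x + b*y + z = 0 := by
  apply lin_zero; intro t
  have key : F3 u a b x y (z+t) = F3 u a b x y z + (2*t*(a*x + b*y + z) + t^2) := by
    simp only [F3]; ring
  have := h x y (z+t)
  linarith [key ▸ this]

-- bounds on v and u
lemma v_le_one {a b d e u v : ℝ} (h : PSDq a b d e u v) : v ≤ 1 := by
  have := h 0 0 1 (-1); simp only [Pq] at this; linarith

lemma neg_one_le_v {a b d e u v : ℝ} (h : PSDq a b d e u v) : -1 ≤ v := by
  have := h 0 0 1 1; simp only [Pq] at this; linarith

-- symmetries
lemma psd_flip {a b d e u v : ℝ} (h : PSDq a b d e u v) : PSDq a (-b) d (-e) u (-v) := by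
  intro x0 x1 x2 x3
  have key : Pq a (-b) d (-e) u (-v) x0 x1 x2 x3 = Pq a b d e u v x0 x1 x2 (-x3) := by
    simp only [Pq]; ring
  rw [key]; exact h x0 x1 x2 (-x3)

lemma pos_flip {a b d e u v : ℝ} (h : Posq a b d e u v) : Posq a (-b) d (-e) u (-v) := by
  intro x0 x1 x2 x3 hne
  have key : Pq a (-b) d (-e) u (-v) x0 x1 x2 x3 = Pq a b d e u v x0 x1 x2 (-x3) := by
    simp only [Pq]; ring
  rw [key]
  apply h
  intro ⟨h0,h1,h2,h3⟩
  exact hne ⟨h0, h1, h2, by simpa using h3⟩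

lemma psd_swap {a b d e u v : ℝ} (h : PSDq a b d e u v) : PSDq a d b e v u := by
  intro x0 x1 x2 x3
  have key : Pq a d b e v u x0 x1 x2 x3 = Pq a b d e u v x2 x3 x0 x1 := by
    simp only [Pq]; ring
  rw [key]; exact h x2 x3 x0 x1

lemma pos_swap {a b d e u v : ℝ} (h : Posq a b d e u v) : Posq a d b e v u := by
  intro x0 x1 x2 x3 hne
  have key : Pq a d b e v u x0 x1 x2 x3 = Pq a b d e u v x2 x3 x0 x1 := by
    simp only [Pq]; ring
  rw [key]
  apply h
  tauto

lemma posq_quant {a b d e U V : ℝ} (h : Posq a b d e U V) :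
    ∃ δ : ℝ, 0 < δ ∧ ∀ x0 x1 x2 x3 : ℝ,
      δ * (x0^2+x1^2+x2^2+x3^2) ≤ Pq a b d e U V x0 x1 x2 x3 := by
  have := quantn (n := 4) (by norm_num)
    (fun x : Fin 4 → ℝ => Pq a b d e U V (x 0) (x 1) (x 2) (x 3))
    (by simp only [Pq]; fun_prop)
    (by intro r x; simp only [Pq, Pi.smul_apply, smul_eq_mul]; ring)
    (by
      intro x hx
      apply h
      intro hall
      apply hx
      funext i
      fin_cases i <;> simp [hall.1, hall.2.1, hall.2.2.1, hall.2.2.2])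
  obtain ⟨δ, hδ, hq⟩ := this
  refine ⟨δ, hδ, ?_⟩
  intro x0 x1 x2 x3
  have := hq ![x0,x1,x2,x3]
  simpa [Fin.sum_univ_four] using this

lemma pos3_quant {U A B : ℝ} (h : Pos3 U A B) :
    ∃ δ : ℝ, 0 < δ ∧ ∀ x y z : ℝ, δ * (x^2+y^2+z^2) ≤ F3 U A B x y z := by
  have := quantn (n := 3) (by norm_num)
    (fun w : Fin 3 → ℝ => F3 U A B (w 0) (w 1) (w 2))
    (by simp only [F3]; fun_prop)
    (by intro r x; simp only [F3, Pi.smul_apply, smul_eq_mul]; ring)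
    (by
      intro x hx
      apply h
      intro hall
      apply hx
      funext i
      fin_cases i <;> simp [hall.1, hall.2.1, hall.2.2])
  obtain ⟨δ, hδ, hq⟩ := this
  refine ⟨δ, hδ, ?_⟩
  intro x y z
  have := hq ![x,y,z]
  simpa [Fin.sum_univ_three] using this

lemma deg_v1 {a b d e u u' : ℝ} (h : PSDq a b d e u 1) (h' : PSDq a b d e u' 1)
    (huu : u ≠ u') : ∃ U V : ℝ, Posq a b d e U V := by
  -- the vector (0,0,1,-1) is in the kernel
  have hq0 : Pq a b d e u 1 0 0 1 (-1) = 0 := by simp only [Pq]; ring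
  have hab : a = b := by have := ker0 h hq0; linarith
  have hde : d = e := by have := ker1 h hq0; linarith
  subst hab; subst hde
  -- 3x3 forms
  have hF : PSD3 u a d := by
    intro x y z
    have key : F3 u a d x y z = Pq a a d d u 1 x y z 0 := by simp only [F3, Pq]; ring
    rw [key]; exact h x y z 0
  have hF' : PSD3 u' a d := by
    intro x y z
    have key : F3 u' a d x y z = Pq a a d d u' 1 x y z 0 := by simp only [F3, Pq]; ring
    rw [key]; exact h' x y z 0
  set U := (u+u')/2 with hU
  have hFm : PSD3 U a d := by
    intro x y z
    have key : F3 u a d x y z + F3 u' a d x y z = 2 * F3 U a d x y z := by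
      simp only [F3, hU]; ring
    have := hF x y z; have := hF' x y z
    linarith
  have hPos3 : Pos3 U a d := by
    intro x y z hne
    rcases lt_or_eq_of_le (hFm x y z) with hlt | heq
    · exact hlt
    exfalso
    have hFz : F3 U a d x y z = 0 := heq.symm
    have hsum : F3 u a d x y z + F3 u' a d x y z = 2 * F3 U a d x y z := by
      simp only [F3, hU]; ring
    have hz1 : F3 u a d x y z = 0 := by
      have := hF x y z; have := hF' x y z; linarith [hFz]
    have hz2 : F3 u' a d x y z = 0 := by
      have := hF x y z; have := hF' x y z; linarith [hFz]
    have e1 := k3_0 hF hz1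
    have e1' := k3_0 hF' hz2
    have e2 := k3_1 hF hz1
    have e2' := k3_1 hF' hz2
    have hy : y = 0 := by
      have hd : (u - u') * y = 0 := by linarith
      rcases mul_eq_zero.mp hd with h | h
      · exact absurd (by linarith : u = u') huu
      · exact h
    have hx : x = 0 := by
      have hd : (u - u') * x = 0 := by linarith
      rcases mul_eq_zero.mp hd with h | h
      · exact absurd (by linarith : u = u') huu
      · exact h
    have e3 := k3_2 hFm hFz
    have hzz : z = 0 := by rw [hx, hy] at e3; linarith
    exact hne ⟨hx, hy, hzz⟩
  obtain ⟨δ, hδ, hquant⟩ := pos3_quant hPos3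
  set δ' := min δ 2 with hδ'
  have hδ'pos : 0 < δ' := lt_min hδ (by norm_num)
  have hδ'le : δ' ≤ δ := min_le_left _ _
  refine ⟨U, 1 - δ'/2, ?_⟩
  intro x0 x1 x2 x3 hne
  have key := hquant x0 x1 (x2 + x3)
  have iden : Pq a a d d U (1 - δ'/2) x0 x1 x2 x3
      = F3 U a d x0 x1 (x2+x3) - (δ'/4)*(x2+x3)^2 + (δ'/4)*(x2-x3)^2 := by
    simp only [Pq, F3]; ring
  have main : δ' * (x0^2 + x1^2) + (δ'/2) * (x2^2 + x3^2)
      ≤ Pq a a d d U (1 - δ'/2) x0 x1 x2 x3 := by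
    rw [iden]
    nlinarith [key, sq_nonneg (x2+x3), sq_nonneg (x2-x3), sq_nonneg x0, sq_nonneg x1,
      mul_le_mul_of_nonneg_right hδ'le (sq_nonneg (x2+x3)),
      mul_le_mul_of_nonneg_right hδ'le (sq_nonneg x0),
      mul_le_mul_of_nonneg_right hδ'le (sq_nonneg x1)]
  rcases not_and_or.mp hne with h0 | hrest
  · nlinarith [main, sq_nonneg x1, sq_nonneg x2, sq_nonneg x3, mul_pos hδ'pos (by positivity : (0:ℝ) < x0^2)]
  rcases not_and_or.mp hrest with h1 | hrest2
  · nlinarith [main, sq_nonneg x0, sq_nonneg x2, sq_nonneg x3, mul_pos hδ'pos (by positivity : (0:ℝ) < x1^2)]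
  rcases not_and_or.mp hrest2 with h2 | h3
  · nlinarith [main, sq_nonneg x0, sq_nonneg x1, sq_nonneg x3, mul_pos hδ'pos (by positivity : (0:ℝ) < x2^2)]
  · nlinarith [main, sq_nonneg x0, sq_nonneg x1, sq_nonneg x2, mul_pos hδ'pos (by positivity : (0:ℝ) < x3^2)]

lemma two_to_pos_u {a b d e u v u' v' : ℝ} (h : PSDq a b d e u v) (h' : PSDq a b d e u' v')
    (huu : u ≠ u') : ∃ U V : ℝ, Posq a b d e U V := by
  set U := (u+u')/2 with hU
  set V := (v+v')/2 with hV
  have hsum : ∀ x0 x1 x2 x3 : ℝ, Pq a b d e u v x0 x1 x2 x3 + Pq a b d e u' v' x0 x1 x2 x3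
      = 2 * Pq a b d e U V x0 x1 x2 x3 := by
    intro x0 x1 x2 x3; simp only [Pq, hU, hV]; ring
  have hmid : PSDq a b d e U V := by
    intro x0 x1 x2 x3
    have := h x0 x1 x2 x3; have := h' x0 x1 x2 x3; linarith [hsum x0 x1 x2 x3]
  by_cases hstrict : Posq a b d e U V
  · exact ⟨U, V, hstrict⟩
  -- there is a nonzero kernel vector
  simp only [Posq, not_forall] at hstrict
  obtain ⟨x0, x1, x2, x3, hne, hng⟩ := hstrict
  have hx : Pq a b d e U V x0 x1 x2 x3 = 0 := le_antisymm (not_lt.mp hng) (hmid x0 x1 x2 x3)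
  have hz1 : Pq a b d e u v x0 x1 x2 x3 = 0 := by
    have := h x0 x1 x2 x3; have := h' x0 x1 x2 x3; linarith [hsum x0 x1 x2 x3, hx]
  have hz2 : Pq a b d e u' v' x0 x1 x2 x3 = 0 := by
    have := h x0 x1 x2 x3; have := h' x0 x1 x2 x3; linarith [hsum x0 x1 x2 x3, hx]
  have e0 := ker0 h hz1
  have e0' := ker0 h' hz2
  have e1 := ker1 h hz1
  have e1' := ker1 h' hz2
  have hx1 : x1 = 0 := by
    have hd : (u - u') * x1 = 0 := by linarith
    rcases mul_eq_zero.mp hd with hh | hh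
    · exact absurd (by linarith : u = u') huu
    · exact hh
  have hx0 : x0 = 0 := by
    have hd : (u - u') * x0 = 0 := by linarith
    rcases mul_eq_zero.mp hd with hh | hh
    · exact absurd (by linarith : u = u') huu
    · exact hh
  have e2 := ker2 hmid hx
  have e3 := ker3 hmid hx
  rw [hx0, hx1] at e2 e3
  -- e2 : x2 + V*x3 = 0, e3 : V*x2 + x3 = 0 (up to ring)
  have hVle : V ≤ 1 := by
    have := v_le_one h; have := v_le_one h'; simp only [hV]; linarith
  have hVge : -1 ≤ V := by
    have := neg_one_le_v h; have := neg_one_le_v h'; simp only [hV]; linarith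
  rcases eq_or_lt_of_le hVle with hV1 | hVlt
  · -- V = 1, so v = v' = 1
    have hv1 : v = 1 := by
      have := v_le_one h; have := v_le_one h'; simp only [hV] at hV1; linarith
    have hv'1 : v' = 1 := by
      have := v_le_one h; have := v_le_one h'; simp only [hV] at hV1; linarith
    rw [hv1] at h
    rw [hv'1] at h'
    exact deg_v1 h h' huu
  rcases eq_or_lt_of_le hVge with hVm1 | hVgt
  · -- V = -1, so v = v' = -1; flip
    have hv1 : v = -1 := by
      have := neg_one_le_v h; have := neg_one_le_v h'; simp only [hV] at hVm1; linarith
    have hv'1 : v' = -1 := by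
      have := neg_one_le_v h; have := neg_one_le_v h'; simp only [hV] at hVm1; linarith
    rw [hv1] at h
    rw [hv'1] at h'
    have hf := psd_flip h
    have hf' := psd_flip h'
    norm_num at hf hf'
    obtain ⟨U', V', hP⟩ := deg_v1 hf hf' huu
    have := pos_flip hP
    refine ⟨U', -V', ?_⟩
    simpa using this
  -- |V| < 1 : contradiction
  exfalso
  have hf2 : (1 - V^2) * x2 = 0 := by linear_combination e2 - V * e3
  have hf3 : (1 - V^2) * x3 = 0 := by linear_combination e3 - V * e2
  have hVne : 1 - V^2 ≠ 0 := by nlinarith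
  have hx2 : x2 = 0 := by
    rcases mul_eq_zero.mp hf2 with hh | hh
    · exact absurd hh hVne
    · exact hh
  have hx3 : x3 = 0 := by
    rcases mul_eq_zero.mp hf3 with hh | hh
    · exact absurd hh hVne
    · exact hh
  exact hne ⟨hx0, hx1, hx2, hx3⟩

lemma two_to_pos {a b d e u v u' v' : ℝ} (h : PSDq a b d e u v) (h' : PSDq a b d e u' v')
    (hd : u ≠ u' ∨ v ≠ v') : ∃ U V : ℝ, Posq a b d e U V := by
  rcases hd with huu | hvv
  · exact two_to_pos_u h h' huu
  · obtain ⟨U, V, hP⟩ := two_to_pos_u (psd_swap h) (psd_swap h') hvv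
    exact ⟨V, U, pos_swap hP⟩

theorem psd_iff (c : Fin 4 → ℝ) (u v : ℝ) :
    (Cmat c u v).PosSemidef ↔ PSDq (c 0) (c 1) (c 2) (c 3) u v := by
  constructor
  · intro h x0 x1 x2 x3
    have := h.dotProduct_mulVec_nonneg ![x0,x1,x2,x3]
    simp [Cmat, Matrix.mulVec, dotProduct, Fin.sum_univ_four] at this
    simp only [Pq]
    nlinarith [this]
  · intro h
    refine Matrix.PosSemidef.of_dotProduct_mulVec_nonneg ?_ ?_
    · ext i j
      fin_cases i <;> fin_cases j <;> simp [Cmat, Matrix.conjTranspose_apply]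
    · intro x
      have h' := h (x 0) (x 1) (x 2) (x 3)
      simp only [Pq] at h'
      simp [Cmat, Matrix.mulVec, dotProduct, Fin.sum_univ_four]
      nlinarith [h']

lemma quant_interior (c : Fin 4 → ℝ) (U V δ : ℝ) (hδ : 0 < δ)
    (hq : ∀ x0 x1 x2 x3 : ℝ,
      δ * (x0^2+x1^2+x2^2+x3^2) ≤ Pq (c 0) (c 1) (c 2) (c 3) U V x0 x1 x2 x3) :
    c ∈ interior Qbody := by
  have hball : Metric.ball c (δ/4) ⊆ Qbody := by
    intro w hw
    rw [Metric.mem_ball] at hw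
    have hbd : ∀ i, |w i - c i| < δ/4 := by
      intro i
      have h1 := dist_le_pi_dist w c i
      rw [Real.dist_eq] at h1
      linarith
    refine ⟨U, V, (psd_iff w U V).mpr ?_⟩
    intro x0 x1 x2 x3
    obtain ⟨a0, b0⟩ := abs_lt.mp (hbd 0)
    obtain ⟨a1, b1⟩ := abs_lt.mp (hbd 1)
    obtain ⟨a2, b2⟩ := abs_lt.mp (hbd 2)
    obtain ⟨a3, b3⟩ := abs_lt.mp (hbd 3)
    have iden : Pq (w 0) (w 1) (w 2) (w 3) U V x0 x1 x2 x3
        = Pq (c 0) (c 1) (c 2) (c 3) U V x0 x1 x2 x3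
          + 2*(w 0 - c 0)*x0*x2 + 2*(w 1 - c 1)*x0*x3
          + 2*(w 2 - c 2)*x1*x2 + 2*(w 3 - c 3)*x1*x3 := by
      simp only [Pq]; ring
    rw [iden]
    nlinarith [hq x0 x1 x2 x3,
      mul_nonneg (by linarith : (0:ℝ) ≤ δ/4 + (w 0 - c 0)) (sq_nonneg (x0+x2)),
      mul_nonneg (by linarith : (0:ℝ) ≤ δ/4 - (w 0 - c 0)) (sq_nonneg (x0-x2)),
      mul_nonneg (by linarith : (0:ℝ) ≤ δ/4 + (w 1 - c 1)) (sq_nonneg (x0+x3)),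
      mul_nonneg (by linarith : (0:ℝ) ≤ δ/4 - (w 1 - c 1)) (sq_nonneg (x0-x3)),
      mul_nonneg (by linarith : (0:ℝ) ≤ δ/4 + (w 2 - c 2)) (sq_nonneg (x1+x2)),
      mul_nonneg (by linarith : (0:ℝ) ≤ δ/4 - (w 2 - c 2)) (sq_nonneg (x1-x2)),
      mul_nonneg (by linarith : (0:ℝ) ≤ δ/4 + (w 3 - c 3)) (sq_nonneg (x1+x3)),
      mul_nonneg (by linarith : (0:ℝ) ≤ δ/4 - (w 3 - c 3)) (sq_nonneg (x1-x3))]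
  exact mem_interior.mpr ⟨Metric.ball c (δ/4), hball, Metric.isOpen_ball,
    Metric.mem_ball_self (by linarith)⟩

lemma quant_two {a b d e U V δ : ℝ} (hδ : 0 < δ)
    (hq : ∀ x0 x1 x2 x3 : ℝ, δ * (x0^2+x1^2+x2^2+x3^2) ≤ Pq a b d e U V x0 x1 x2 x3) :
    PSDq a b d e U V ∧ PSDq a b d e (U+δ) V := by
  constructor
  · intro x0 x1 x2 x3
    nlinarith [hq x0 x1 x2 x3, mul_nonneg hδ.le (sq_nonneg x0), mul_nonneg hδ.le (sq_nonneg x1),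
      mul_nonneg hδ.le (sq_nonneg x2), mul_nonneg hδ.le (sq_nonneg x3)]
  · intro x0 x1 x2 x3
    have iden : Pq a b d e (U+δ) V x0 x1 x2 x3
        = Pq a b d e U V x0 x1 x2 x3 + 2*δ*x0*x1 := by simp only [Pq]; ring
    rw [iden]
    nlinarith [hq x0 x1 x2 x3, mul_nonneg hδ.le (sq_nonneg (x0+x1)),
      mul_nonneg hδ.le (sq_nonneg x2), mul_nonneg hδ.le (sq_nonneg x3)]

lemma interior_to_pos (c : Fin 4 → ℝ) (hint : c ∈ interior Qbody) :
    ∃ U V : ℝ, Posq (c 0) (c 1) (c 2) (c 3) U V := by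
  obtain ⟨ε, hε, hball⟩ : ∃ ε > 0, Metric.ball c ε ⊆ Qbody :=
    Metric.mem_nhds_iff.mp (mem_interior_iff_mem_nhds.mp hint)
  have key : ∀ w : Fin 4 → ℝ, (∀ i, |w i - c i| < ε) →
      ∃ u v, PSDq (w 0) (w 1) (w 2) (w 3) u v := by
    intro w hw
    have hwball : w ∈ Metric.ball c ε := by
      rw [Metric.mem_ball, dist_pi_lt_iff hε]
      intro i; rw [Real.dist_eq]; exact hw i
    obtain ⟨u, v, hp⟩ := hball hwball
    exact ⟨u, v, (psd_iff w u v).mp hp⟩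
  set s := ε/2 with hsdef
  have hs : 0 < s := by simp only [hsdef]; linarith
  have hslt : |s| < ε := by rw [abs_of_pos hs]; simp only [hsdef]; linarith
  have hmem : ∀ w : Fin 4 → ℝ, (∀ i, w i = c i ∨ w i = c i + s ∨ w i = c i - s) →
      ∃ u v, PSDq (w 0) (w 1) (w 2) (w 3) u v := by
    intro w hw
    apply key
    intro i
    rcases hw i with h | h | h <;> rw [h]
    · simpa using hε
    · simpa using hslt
    · rw [show c i - s - c i = -s by ring, abs_neg]; exact hslt
  obtain ⟨u1, v1, h1⟩ := hmem ![c 0 + s, c 1, c 2, c 3]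
    (by intro i; fin_cases i <;> simp)
  obtain ⟨u2, v2, h2⟩ := hmem ![c 0 - s, c 1, c 2, c 3]
    (by intro i; fin_cases i <;> simp)
  obtain ⟨u3, v3, h3⟩ := hmem ![c 0, c 1 + s, c 2, c 3]
    (by intro i; fin_cases i <;> simp)
  obtain ⟨u4, v4, h4⟩ := hmem ![c 0, c 1 - s, c 2, c 3]
    (by intro i; fin_cases i <;> simp)
  obtain ⟨u5, v5, h5⟩ := hmem ![c 0, c 1, c 2 + s, c 3]
    (by intro i; fin_cases i <;> simp)
  obtain ⟨u6, v6, h6⟩ := hmem ![c 0, c 1, c 2 - s, c 3]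
    (by intro i; fin_cases i <;> simp)
  obtain ⟨u7, v7, h7⟩ := hmem ![c 0, c 1, c 2, c 3 + s]
    (by intro i; fin_cases i <;> simp)
  obtain ⟨u8, v8, h8⟩ := hmem ![c 0, c 1, c 2, c 3 - s]
    (by intro i; fin_cases i <;> simp)
  simp only [Matrix.cons_val_zero, Matrix.cons_val_one, Matrix.head_cons,
    Matrix.cons_val_two, Matrix.tail_cons, Matrix.cons_val_three] at h1 h2 h3 h4 h5 h6 h7 h8
  set U := (u1+u2+u3+u4+u5+u6+u7+u8)/8 with hU
  set V := (v1+v2+v3+v4+v5+v6+v7+v8)/8 with hV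
  refine ⟨U, V, ?_⟩
  intro x0 x1 x2 x3 hne
  by_contra hng
  push_neg at hng
  have hsum : Pq (c 0 + s) (c 1) (c 2) (c 3) u1 v1 x0 x1 x2 x3
      + Pq (c 0 - s) (c 1) (c 2) (c 3) u2 v2 x0 x1 x2 x3
      + Pq (c 0) (c 1 + s) (c 2) (c 3) u3 v3 x0 x1 x2 x3
      + Pq (c 0) (c 1 - s) (c 2) (c 3) u4 v4 x0 x1 x2 x3
      + Pq (c 0) (c 1) (c 2 + s) (c 3) u5 v5 x0 x1 x2 x3
      + Pq (c 0) (c 1) (c 2 - s) (c 3) u6 v6 x0 x1 x2 x3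
      + Pq (c 0) (c 1) (c 2) (c 3 + s) u7 v7 x0 x1 x2 x3
      + Pq (c 0) (c 1) (c 2) (c 3 - s) u8 v8 x0 x1 x2 x3
      = 8 * Pq (c 0) (c 1) (c 2) (c 3) U V x0 x1 x2 x3 := by
    simp only [Pq, hU, hV]; ring
  have n1 := h1 x0 x1 x2 x3
  have n2 := h2 x0 x1 x2 x3
  have n3 := h3 x0 x1 x2 x3
  have n4 := h4 x0 x1 x2 x3
  have n5 := h5 x0 x1 x2 x3
  have n6 := h6 x0 x1 x2 x3
  have n7 := h7 x0 x1 x2 x3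
  have n8 := h8 x0 x1 x2 x3
  have z1 : Pq (c 0 + s) (c 1) (c 2) (c 3) u1 v1 x0 x1 x2 x3 = 0 := by linarith
  have z2 : Pq (c 0 - s) (c 1) (c 2) (c 3) u2 v2 x0 x1 x2 x3 = 0 := by linarith
  have z3 : Pq (c 0) (c 1 + s) (c 2) (c 3) u3 v3 x0 x1 x2 x3 = 0 := by linarith
  have z4 : Pq (c 0) (c 1 - s) (c 2) (c 3) u4 v4 x0 x1 x2 x3 = 0 := by linarith
  have z5 : Pq (c 0) (c 1) (c 2 + s) (c 3) u5 v5 x0 x1 x2 x3 = 0 := by linarith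
  have z6 : Pq (c 0) (c 1) (c 2 - s) (c 3) u6 v6 x0 x1 x2 x3 = 0 := by linarith
  have z7 : Pq (c 0) (c 1) (c 2) (c 3 + s) u7 v7 x0 x1 x2 x3 = 0 := by linarith
  have z8 : Pq (c 0) (c 1) (c 2) (c 3 - s) u8 v8 x0 x1 x2 x3 = 0 := by linarith
  -- difference equations (from kernel equations of each completion)
  have d00 : (u1 - u2)*x1 + 2*s*x2 = 0 := by
    linear_combination (ker0 h1 z1) - (ker0 h2 z2)
  have d01 : (u1 - u2)*x0 = 0 := by
    linear_combination (ker1 h1 z1) - (ker1 h2 z2)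
  have d02 : 2*s*x0 + (v1 - v2)*x3 = 0 := by
    linear_combination (ker2 h1 z1) - (ker2 h2 z2)
  have d10 : (u3 - u4)*x1 + 2*s*x3 = 0 := by
    linear_combination (ker0 h3 z3) - (ker0 h4 z4)
  have d11 : (u3 - u4)*x0 = 0 := by
    linear_combination (ker1 h3 z3) - (ker1 h4 z4)
  have d20 : (u5 - u6)*x1 = 0 := by
    linear_combination (ker0 h5 z5) - (ker0 h6 z6)
  have d21 : (u5 - u6)*x0 + 2*s*x2 = 0 := by
    linear_combination (ker1 h5 z5) - (ker1 h6 z6)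
  have d22 : 2*s*x1 + (v5 - v6)*x3 = 0 := by
    linear_combination (ker2 h5 z5) - (ker2 h6 z6)
  have d30 : (u7 - u8)*x1 = 0 := by
    linear_combination (ker0 h7 z7) - (ker0 h8 z8)
  have d31 : (u7 - u8)*x0 + 2*s*x3 = 0 := by
    linear_combination (ker1 h7 z7) - (ker1 h8 z8)
  have hsne : (2:ℝ)*s ≠ 0 := by positivity
  have hx0 : x0 = 0 := by
    by_contra h0
    have e12 : u1 = u2 := by
      rcases mul_eq_zero.mp d01 with hh | hh
      · linarith
      · exact absurd hh h0
    have hx2 : x2 = 0 := by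
      rw [e12] at d00
      have : 2*s*x2 = 0 := by linarith [d00]
      exact (mul_eq_zero.mp this).resolve_left hsne
    have e34 : u3 = u4 := by
      rcases mul_eq_zero.mp d11 with hh | hh
      · linarith
      · exact absurd hh h0
    have hx3 : x3 = 0 := by
      rw [e34] at d10
      have : 2*s*x3 = 0 := by linarith [d10]
      exact (mul_eq_zero.mp this).resolve_left hsne
    have : 2*s*x0 = 0 := by rw [hx3] at d02; linarith [d02]
    exact h0 ((mul_eq_zero.mp this).resolve_left hsne)
  have hx1 : x1 = 0 := by
    by_contra h1'
    have e56 : u5 = u6 := by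
      rcases mul_eq_zero.mp d20 with hh | hh
      · linarith
      · exact absurd hh h1'
    have hx2 : x2 = 0 := by
      rw [e56, hx0] at d21
      have : 2*s*x2 = 0 := by linarith [d21]
      exact (mul_eq_zero.mp this).resolve_left hsne
    have e78 : u7 = u8 := by
      rcases mul_eq_zero.mp d30 with hh | hh
      · linarith
      · exact absurd hh h1'
    have hx3 : x3 = 0 := by
      rw [e78, hx0] at d31
      have : 2*s*x3 = 0 := by linarith [d31]
      exact (mul_eq_zero.mp this).resolve_left hsne
    have : 2*s*x1 = 0 := by rw [hx3] at d22; linarith [d22]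
    exact h1' ((mul_eq_zero.mp this).resolve_left hsne)
  have hx2 : x2 = 0 := by
    rw [hx1] at d00
    have : 2*s*x2 = 0 := by linarith [d00]
    exact (mul_eq_zero.mp this).resolve_left hsne
  have hx3 : x3 = 0 := by
    rw [hx1] at d10
    have : 2*s*x3 = 0 := by linarith [d10]
    exact (mul_eq_zero.mp this).resolve_left hsne
  exact hne ⟨hx0, hx1, hx2, hx3⟩

theorem stmt10 (c : Fin 4 → ℝ) (hc : c ∈ Qbody) :
    c ∈ frontier Qbody ↔ ∃! uv : ℝ × ℝ, (Cmat c uv.1 uv.2).PosSemidef := by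
  have hfr : c ∈ frontier Qbody ↔ c ∉ interior Qbody := by
    simp only [frontier, Set.mem_diff]
    have : c ∈ closure Qbody := subset_closure hc
    tauto
  rw [hfr]
  constructor
  · intro hni
    obtain ⟨u, v, hpsd⟩ := hc
    refine ⟨(u, v), hpsd, ?_⟩
    rintro ⟨u', v'⟩ hp'
    by_contra hne
    have hd : u' ≠ u ∨ v' ≠ v := by
      by_contra hcon
      push_neg at hcon
      exact hne (Prod.ext hcon.1 hcon.2)
    have hq1 := (psd_iff c u' v').mp hp'
    have hq2 := (psd_iff c u v).mp hpsd
    obtain ⟨U, V, hPos⟩ := two_to_pos hq1 hq2 hd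
    obtain ⟨δ, hδ, hquant⟩ := posq_quant hPos
    exact hni (quant_interior c U V δ hδ hquant)
  · rintro ⟨⟨u, v⟩, hp, huniq⟩ hint
    obtain ⟨U, V, hPos⟩ := interior_to_pos c hint
    obtain ⟨δ, hδ, hquant⟩ := posq_quant hPos
    obtain ⟨hA, hB⟩ := quant_two hδ hquant
    have e1 := huniq (U, V) ((psd_iff c U V).mpr hA)
    have e2 := huniq (U+δ, V) ((psd_iff c (U+δ) V).mpr hB)
    have hUU : U + δ = U := by
      have p1 : U = u := congrArg Prod.fst e1
      have p2 : U + δ = u := congrArg Prod.fst e2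
      linarith
    linarith
end

section
/- A point c ∈ Q lies in the interior of Q if and only if there exist u,v ∈ ℝ such that the matrix C(c,u,v) is positive semidefinite of rank 4 (equivalently, positive definite). -/
open Matrix

lemma psd_smul_s11 {n : Type*} [Fintype n] {A : Matrix n n ℝ} (hA : A.PosSemidef) {r : ℝ}
    (hr : 0 ≤ r) : (r • A).PosSemidef := by
  refine posSemidef_iff_dotProduct_mulVec.mpr ⟨?_, fun x => ?_⟩
  · rw [Matrix.IsHermitian, conjTranspose_smul, hA.1.eq]; simp
  · rw [smul_mulVec, dotProduct_smul, smul_eq_mul]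
    exact mul_nonneg hr ((posSemidef_iff_dotProduct_mulVec.mp hA).2 x)

lemma pd_smul {n : Type*} [Fintype n] {A : Matrix n n ℝ} (hA : A.PosDef) {r : ℝ}
    (hr : 0 < r) : (r • A).PosDef := by
  refine posDef_iff_dotProduct_mulVec.mpr ⟨?_, fun x hx => ?_⟩
  · rw [Matrix.IsHermitian, conjTranspose_smul, hA.1.eq]; simp
  · rw [smul_mulVec, dotProduct_smul, smul_eq_mul]
    exact mul_pos hr ((posDef_iff_dotProduct_mulVec.mp hA).2 hx)

/-- A positive definite real matrix dominates `ε • 1` for some positive `ε`. -/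
lemma pd_sub_smul_one {n : Type*} [Fintype n] [DecidableEq n] [Nonempty n]
    {M : Matrix n n ℝ} (hM : M.PosDef) : ∃ ε : ℝ, 0 < ε ∧ (M - ε • 1).PosSemidef := by
  classical
  set ε := Finset.univ.inf' Finset.univ_nonempty hM.1.eigenvalues with hεdef
  have hεpos : 0 < ε := by
    rw [hεdef, Finset.lt_inf'_iff]
    exact fun i _ => hM.eigenvalues_pos i
  refine ⟨ε, hεpos, ?_⟩
  have hU : (hM.1.eigenvectorUnitary : Matrix n n ℝ) *
      star (hM.1.eigenvectorUnitary : Matrix n n ℝ) = 1 :=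
    (Matrix.mem_unitaryGroup_iff).mp (hM.1.eigenvectorUnitary).2
  have hdiag : diagonal (fun i => hM.1.eigenvalues i - ε) =
      diagonal (RCLike.ofReal ∘ hM.1.eigenvalues) - ε • (1 : Matrix n n ℝ) := by
    ext i j
    by_cases h : i = j <;> simp [diagonal, Matrix.one_apply, h]
  have key : M - ε • 1 = (hM.1.eigenvectorUnitary : Matrix n n ℝ) *
      diagonal (fun i => hM.1.eigenvalues i - ε) *
      star (hM.1.eigenvectorUnitary : Matrix n n ℝ) := by
    rw [hdiag, mul_sub, sub_mul]
    have hs := hM.1.spectral_theorem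
    rw [Unitary.conjStarAlgAut_apply] at hs
    rw [← hs]
    congr 1
    rw [mul_smul_comm, smul_mul_assoc, mul_one, hU]
  rw [key]
  refine (posSemidef_diagonal_iff.mpr fun i => sub_nonneg.mpr ?_).mul_mul_conjTranspose_same _
  exact Finset.inf'_le _ (Finset.mem_univ i)

/-- The perturbation matrix is positive semidefinite when entries are small. -/
lemma psd_pert (ε d0 d1 d2 d3 : ℝ) (hε : 0 < ε)
    (h0 : |d0| ≤ ε / 4) (h1 : |d1| ≤ ε / 4) (h2 : |d2| ≤ ε / 4) (h3 : |d3| ≤ ε / 4) :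
    (!![ε, 0, d0, d1; 0, ε, d2, d3; d0, d2, ε, 0; d1, d3, 0, ε] :
      Matrix (Fin 4) (Fin 4) ℝ).PosSemidef := by
  obtain ⟨h0l, h0r⟩ := abs_le.mp h0
  obtain ⟨h1l, h1r⟩ := abs_le.mp h1
  obtain ⟨h2l, h2r⟩ := abs_le.mp h2
  obtain ⟨h3l, h3r⟩ := abs_le.mp h3
  refine posSemidef_iff_dotProduct_mulVec.mpr ⟨?_, fun x => ?_⟩
  · ext i j
    fin_cases i <;> fin_cases j <;> simp [Matrix.conjTranspose_apply]
  · simp only [star_trivial, dotProduct, Matrix.mulVec, Fin.sum_univ_four]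
    norm_num [Matrix.cons_val_zero, Matrix.cons_val_one, Matrix.head_cons, Matrix.cons_val_two, Matrix.cons_val_three, Matrix.tail_cons]
    nlinarith [mul_nonneg (by linarith : (0:ℝ) ≤ ε / 4 + d0) (sq_nonneg (x 0 + x 2)),
      mul_nonneg (by linarith : (0:ℝ) ≤ ε / 4 - d0) (sq_nonneg (x 0 - x 2)),
      mul_nonneg (by linarith : (0:ℝ) ≤ ε / 4 + d1) (sq_nonneg (x 0 + x 3)),
      mul_nonneg (by linarith : (0:ℝ) ≤ ε / 4 - d1) (sq_nonneg (x 0 - x 3)),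
      mul_nonneg (by linarith : (0:ℝ) ≤ ε / 4 + d2) (sq_nonneg (x 1 + x 2)),
      mul_nonneg (by linarith : (0:ℝ) ≤ ε / 4 - d2) (sq_nonneg (x 1 - x 2)),
      mul_nonneg (by linarith : (0:ℝ) ≤ ε / 4 + d3) (sq_nonneg (x 1 + x 3)),
      mul_nonneg (by linarith : (0:ℝ) ≤ ε / 4 - d3) (sq_nonneg (x 1 - x 3)),
      mul_nonneg hε.le (sq_nonneg (x 0)), mul_nonneg hε.le (sq_nonneg (x 1)),
      mul_nonneg hε.le (sq_nonneg (x 2)), mul_nonneg hε.le (sq_nonneg (x 3))]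

lemma pd_iff_psd_rank {A : Matrix (Fin 4) (Fin 4) ℝ} :
    A.PosDef ↔ A.PosSemidef ∧ A.rank = 4 := by
  constructor
  · intro hA
    exact ⟨hA.posSemidef, by rw [Matrix.rank_of_isUnit A hA.isUnit, Fintype.card_fin]⟩
  · rintro ⟨hA, hrank⟩
    have hrange : LinearMap.range A.mulVecLin = ⊤ := by
      apply Submodule.eq_top_of_finrank_eq
      rw [← Matrix.rank, hrank, Module.finrank_fin_fun]
    have hinj : Function.Injective A.mulVecLin :=
      (LinearMap.injective_iff_surjective (f := A.mulVecLin)).mpr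
        (LinearMap.range_eq_top.mp hrange)
    refine posDef_iff_dotProduct_mulVec.mpr ⟨hA.1, fun x hx => lt_of_le_of_ne ((posSemidef_iff_dotProduct_mulVec.mp hA).2 x) (Ne.symm fun hz => hx ?_)⟩
    have hmv : A *ᵥ x = 0 := (hA.dotProduct_mulVec_zero_iff x).mp hz
    have : A.mulVecLin x = A.mulVecLin 0 := by simpa [Matrix.mulVecLin_apply] using hmv
    exact hinj this

theorem stmt11 (c : Fin 4 → ℝ) (hc : c ∈ Qbody) :
    c ∈ interior Qbody ↔
      ∃ u v : ℝ, (Cmat c u v).PosSemidef ∧ (Cmat c u v).rank = 4 := by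
  constructor
  · intro hInt
    rw [mem_interior_iff_mem_nhds, Metric.mem_nhds_iff] at hInt
    obtain ⟨ε, hε, hball⟩ := hInt
    set t : ℝ := ε / (2 * (‖c‖ + 1)) with ht_def
    have hnc : (0:ℝ) ≤ ‖c‖ := norm_nonneg c
    have ht : 0 < t := div_pos hε (by linarith)
    have h1t : (0:ℝ) < 1 + t := by linarith
    have hmem : (1 + t) • c ∈ Qbody := by
      apply hball
      rw [Metric.mem_ball, dist_eq_norm]
      have : (1 + t) • c - c = t • c := by
        ext i; simp [Pi.smul_apply, smul_eq_mul]; ring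
      rw [this, norm_smul, Real.norm_eq_abs, abs_of_pos ht, ht_def]
      rw [div_mul_eq_mul_div, div_lt_iff₀ (by linarith)]
      nlinarith
    obtain ⟨u, v, hPSD⟩ := hmem
    refine ⟨u / (1 + t), v / (1 + t), ?_⟩
    rw [← pd_iff_psd_rank]
    have key : Cmat c (u / (1 + t)) (v / (1 + t)) =
        (1 + t)⁻¹ • Cmat ((1 + t) • c) u v + (t / (1 + t)) • (1 : Matrix (Fin 4) (Fin 4) ℝ) := by
      ext i j
      fin_cases i <;> fin_cases j <;>
        simp [Cmat, Matrix.one_apply, Pi.smul_apply, smul_eq_mul] <;>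
        (try field_simp) <;> (try ring)
    rw [key]
    exact Matrix.PosDef.posSemidef_add (psd_smul_s11 hPSD (inv_nonneg.mpr h1t.le))
      (pd_smul Matrix.PosDef.one (div_pos ht h1t))
  · rintro ⟨u, v, hPSD, hrank⟩
    have hPD : (Cmat c u v).PosDef := pd_iff_psd_rank.mpr ⟨hPSD, hrank⟩
    obtain ⟨ε, hε, hsub⟩ := pd_sub_smul_one hPD
    rw [mem_interior_iff_mem_nhds, Metric.mem_nhds_iff]
    refine ⟨ε / 4, by positivity, fun c' hc' => ?_⟩
    refine ⟨u, v, ?_⟩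
    have hbound : ∀ i, |c' i - c i| ≤ ε / 4 := by
      intro i
      have h1 : dist (c' i) (c i) ≤ dist c' c := dist_le_pi_dist c' c i
      have h2 : dist c' c < ε / 4 := Metric.mem_ball.mp hc'
      rw [Real.dist_eq] at h1
      linarith
    have key : Cmat c' u v = (Cmat c u v - ε • 1) +
        !![ε, 0, c' 0 - c 0, c' 1 - c 1; 0, ε, c' 2 - c 2, c' 3 - c 3;
           c' 0 - c 0, c' 2 - c 2, ε, 0; c' 1 - c 1, c' 3 - c 3, 0, ε] := by
      ext i j
      fin_cases i <;> fin_cases j <;>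
        simp [Cmat, Matrix.one_apply] <;> (try ring)
    rw [key]
    exact hsub.add (psd_pert ε _ _ _ _ hε (hbound 0) (hbound 1) (hbound 2) (hbound 3))
end

section
/- Let a₁, a₂, b₁, b₂ ∈ ℝ and consider the quadratic polynomials f₁(x) = b₁ − (x − a₁)² and f₂(x) = b₂ − (x − a₂)². There exists u ∈ ℝ with f₁(u) ≥ 0 and f₂(u) ≥ 0 if and only if b₁ ≥ 0 and b₂ ≥ 0 and ( b₁ + b₂ − (a₁ − a₂)² ≥ 0 or 4b₁b₂ − (b₁ + b₂ − (a₁ − a₂)²)² ≥ 0 ). Moreover, there exists u ∈ ℝ with f₁(u) > 0 and f₂(u) > 0 if and only if b₁ > 0 and b₂ > 0 and ( b₁ + b₂ − (a₁ − a₂)² ≥ 0 or 4b₁b₂ − (b₁ + b₂ − (a₁ − a₂)²)² > 0 ). -/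
-- forward direction key algebra
private lemma fwd_weak (b₁ b₂ x y : ℝ) (h1 : x ^ 2 ≤ b₁) (h2 : y ^ 2 ≤ b₂)
    (ht : b₁ + b₂ - (x - y) ^ 2 < 0) :
    (b₁ + b₂ - (x - y) ^ 2) ^ 2 ≤ 4 * b₁ * b₂ := by
  nlinarith [mul_nonneg (sub_nonneg.2 h1) (sub_nonneg.2 h2), sq_nonneg x, sq_nonneg y,
    sq_nonneg (x*y), mul_nonneg (sq_nonneg x) (sub_nonneg.2 h2),
    mul_nonneg (sq_nonneg y) (sub_nonneg.2 h1),
    mul_nonneg (sub_nonneg.2 (show 2*x*y ≤ b₁ + b₂ - (x-y)^2 by nlinarith))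
      (show (0:ℝ) ≤ -(2*x*y + (b₁ + b₂ - (x-y)^2)) by nlinarith)]

private lemma fwd_strict (b₁ b₂ x y : ℝ) (h1 : x ^ 2 < b₁) (h2 : y ^ 2 < b₂)
    (ht : b₁ + b₂ - (x - y) ^ 2 < 0) :
    (b₁ + b₂ - (x - y) ^ 2) ^ 2 < 4 * b₁ * b₂ := by
  nlinarith [mul_nonneg (sq_nonneg x) (sub_nonneg.2 h2.le),
    mul_nonneg (sq_nonneg y) (sub_nonneg.2 h1.le), sq_nonneg (x*y),
    mul_pos (sub_pos.2 h1) (sub_pos.2 h2),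
    mul_nonneg (sub_nonneg.2 (show 2*x*y ≤ b₁ + b₂ - (x-y)^2 by nlinarith))
      (show (0:ℝ) ≤ -(2*x*y + (b₁ + b₂ - (x-y)^2)) by nlinarith)]

theorem stmt13 (a₁ a₂ b₁ b₂ : ℝ) :
    ((∃ u : ℝ, 0 ≤ b₁ - (u - a₁) ^ 2 ∧ 0 ≤ b₂ - (u - a₂) ^ 2) ↔
      (0 ≤ b₁ ∧ 0 ≤ b₂ ∧
        (0 ≤ b₁ + b₂ - (a₁ - a₂) ^ 2 ∨
          0 ≤ 4 * b₁ * b₂ - (b₁ + b₂ - (a₁ - a₂) ^ 2) ^ 2))) ∧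
    ((∃ u : ℝ, 0 < b₁ - (u - a₁) ^ 2 ∧ 0 < b₂ - (u - a₂) ^ 2) ↔
      (0 < b₁ ∧ 0 < b₂ ∧
        (0 ≤ b₁ + b₂ - (a₁ - a₂) ^ 2 ∨
          0 < 4 * b₁ * b₂ - (b₁ + b₂ - (a₁ - a₂) ^ 2) ^ 2))) := by
  constructor
  · constructor
    · rintro ⟨u, h1, h2⟩
      have hb₁ : 0 ≤ b₁ := le_trans (sq_nonneg (u - a₁)) (by linarith)
      have hb₂ : 0 ≤ b₂ := le_trans (sq_nonneg (u - a₂)) (by linarith)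
      refine ⟨hb₁, hb₂, ?_⟩
      rcases le_or_gt 0 (b₁ + b₂ - (a₁ - a₂) ^ 2) with h | h
      · exact Or.inl h
      · right
        have := fwd_weak b₁ b₂ (u - a₁) (u - a₂) (by linarith) (by linarith)
          (by rw [show u - a₁ - (u - a₂) = -(a₁ - a₂) by ring, neg_sq]; linarith)
        rw [show u - a₁ - (u - a₂) = -(a₁ - a₂) by ring, neg_sq] at this
        linarith
    · rintro ⟨hb₁, hb₂, hc⟩
      set s₁ := Real.sqrt b₁ with hs₁
      set s₂ := Real.sqrt b₂ with hs₂
      have hs₁n : 0 ≤ s₁ := Real.sqrt_nonneg _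
      have hs₂n : 0 ≤ s₂ := Real.sqrt_nonneg _
      have hq₁ : s₁ ^ 2 = b₁ := Real.sq_sqrt hb₁
      have hq₂ : s₂ ^ 2 = b₂ := Real.sq_sqrt hb₂
      -- key: (a₁ - a₂)^2 ≤ (s₁ + s₂)^2
      have key : (a₁ - a₂) ^ 2 ≤ (s₁ + s₂) ^ 2 := by
        rcases hc with h | h
        · nlinarith [mul_nonneg hs₁n hs₂n]
        · -- t² ≤ 4b₁b₂ = (2 s₁ s₂)²
          rcases le_or_gt 0 (b₁ + b₂ - (a₁ - a₂) ^ 2) with h' | h'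
          · nlinarith [mul_nonneg hs₁n hs₂n]
          · have h2 : -(b₁ + b₂ - (a₁ - a₂) ^ 2) ≤ 2 * (s₁ * s₂) := by
              nlinarith [mul_nonneg hs₁n hs₂n]
            nlinarith
      have habs : |a₁ - a₂| ≤ s₁ + s₂ := by
        rw [← Real.sqrt_sq_eq_abs]
        calc Real.sqrt ((a₁ - a₂) ^ 2) ≤ Real.sqrt ((s₁ + s₂) ^ 2) :=
              Real.sqrt_le_sqrt key
          _ = s₁ + s₂ := Real.sqrt_sq (by linarith)
      rw [abs_le] at habs
      refine ⟨max (a₁ - s₁) (a₂ - s₂), ?_, ?_⟩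
      · have hl : -s₁ ≤ max (a₁ - s₁) (a₂ - s₂) - a₁ := by
          have := le_max_left (a₁ - s₁) (a₂ - s₂); linarith
        have hr : max (a₁ - s₁) (a₂ - s₂) - a₁ ≤ s₁ := by
          rcases max_cases (a₁ - s₁) (a₂ - s₂) with ⟨he, _⟩ | ⟨he, _⟩ <;>
            rw [he] <;> linarith [habs.1, habs.2]
        nlinarith [sq_le_sq' hl hr]
      · have hl : -s₂ ≤ max (a₁ - s₁) (a₂ - s₂) - a₂ := by
          have := le_max_right (a₁ - s₁) (a₂ - s₂); linarith
        have hr : max (a₁ - s₁) (a₂ - s₂) - a₂ ≤ s₂ := by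
          rcases max_cases (a₁ - s₁) (a₂ - s₂) with ⟨he, _⟩ | ⟨he, _⟩ <;>
            rw [he] <;> linarith [habs.1, habs.2]
        nlinarith [sq_le_sq' hl hr]
  · constructor
    · rintro ⟨u, h1, h2⟩
      have hb₁ : 0 < b₁ := lt_of_le_of_lt (sq_nonneg (u - a₁)) (by linarith)
      have hb₂ : 0 < b₂ := lt_of_le_of_lt (sq_nonneg (u - a₂)) (by linarith)
      refine ⟨hb₁, hb₂, ?_⟩
      rcases le_or_gt 0 (b₁ + b₂ - (a₁ - a₂) ^ 2) with h | h
      · exact Or.inl h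
      · right
        have := fwd_strict b₁ b₂ (u - a₁) (u - a₂) (by linarith) (by linarith)
          (by rw [show u - a₁ - (u - a₂) = -(a₁ - a₂) by ring, neg_sq]; linarith)
        rw [show u - a₁ - (u - a₂) = -(a₁ - a₂) by ring, neg_sq] at this
        linarith
    · rintro ⟨hb₁, hb₂, hc⟩
      set s₁ := Real.sqrt b₁ with hs₁
      set s₂ := Real.sqrt b₂ with hs₂
      have hs₁n : 0 < s₁ := Real.sqrt_pos.2 hb₁
      have hs₂n : 0 < s₂ := Real.sqrt_pos.2 hb₂
      have hq₁ : s₁ ^ 2 = b₁ := Real.sq_sqrt hb₁.le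
      have hq₂ : s₂ ^ 2 = b₂ := Real.sq_sqrt hb₂.le
      have key : (a₁ - a₂) ^ 2 < (s₁ + s₂) ^ 2 := by
        rcases hc with h | h
        · nlinarith [mul_pos hs₁n hs₂n]
        · rcases le_or_gt 0 (b₁ + b₂ - (a₁ - a₂) ^ 2) with h' | h'
          · nlinarith [mul_pos hs₁n hs₂n]
          · have h2 : -(b₁ + b₂ - (a₁ - a₂) ^ 2) < 2 * (s₁ * s₂) := by
              nlinarith [mul_pos hs₁n hs₂n]
            nlinarith
      have habs : |a₁ - a₂| < s₁ + s₂ := by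
        nlinarith [abs_nonneg (a₁ - a₂), sq_abs (a₁ - a₂)]
      rw [abs_lt] at habs
      set L := max (a₁ - s₁) (a₂ - s₂) with hL
      set R := min (a₁ + s₁) (a₂ + s₂) with hR
      have hLR : L < R := by
        apply max_lt <;> apply lt_min <;> linarith [habs.1, habs.2]
      refine ⟨(L + R) / 2, ?_, ?_⟩
      · have hl : a₁ - s₁ ≤ L := le_max_left _ _
        have hr : R ≤ a₁ + s₁ := min_le_left _ _
        have h1 : -s₁ < (L + R) / 2 - a₁ := by linarith
        have h2 : (L + R) / 2 - a₁ < s₁ := by linarith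
        nlinarith [sq_lt_sq' h1 h2]
      · have hl : a₂ - s₂ ≤ L := le_max_right _ _
        have hr : R ≤ a₂ + s₂ := min_le_right _ _
        have h1 : -s₂ < (L + R) / 2 - a₂ := by linarith
        have h2 : (L + R) / 2 - a₂ < s₂ := by linarith
        nlinarith [sq_lt_sq' h1 h2]
end

section
/- Let c = (c₁₁,c₁₂,c₂₁,c₂₂) ∈ ℝ⁴ and suppose there exists u ∈ ℝ such that both 3×3 matrices [[1,u,c₁₁],[u,1,c₂₁],[c₁₁,c₂₁,1]] and [[1,u,c₁₂],[u,1,c₂₂],[c₁₂,c₂₂,1]] are positive semidefinite. Then there exists v ∈ ℝ such that the 4×4 matrix C(c,u,v) is positive semidefinite; in particular c ∈ Q. -/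
set_option maxHeartbeats 1000000

lemma quad3 {u p q : ℝ}
    (h : (!![1, u, p; u, 1, q; p, q, 1] : Matrix (Fin 3) (Fin 3) ℝ).PosSemidef)
    (x y z : ℝ) : 0 ≤ x^2+y^2+z^2+2*u*x*y+2*p*x*z+2*q*y*z := by
  have := h.dotProduct_mulVec_nonneg ![x, y, z]
  simp [Matrix.mulVec, dotProduct, Fin.sum_univ_three] at this
  nlinarith [this]

lemma psd4 (c : Fin 4 → ℝ) (u v : ℝ)
    (h : ∀ a b s t : ℝ, 0 ≤ a^2+b^2+s^2+t^2+2*u*a*b+2*(c 0)*a*s+2*(c 1)*a*t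
          +2*(c 2)*b*s+2*(c 3)*b*t+2*v*s*t) :
    (Cmat c u v).PosSemidef := by
  refine Matrix.PosSemidef.of_dotProduct_mulVec_nonneg ?_ ?_
  · ext i j
    fin_cases i <;> fin_cases j <;> simp [Cmat]
  · intro x
    have := h (x 0) (x 1) (x 2) (x 3)
    simp [Cmat, Matrix.mulVec, dotProduct, Fin.sum_univ_four]
    nlinarith [this]

theorem stmt14 (c : Fin 4 → ℝ) (u : ℝ)
    (h1 : (!![1, u, c 0; u, 1, c 2; c 0, c 2, 1] : Matrix (Fin 3) (Fin 3) ℝ).PosSemidef)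
    (h2 : (!![1, u, c 1; u, 1, c 3; c 1, c 3, 1] : Matrix (Fin 3) (Fin 3) ℝ).PosSemidef) :
    (∃ v : ℝ, (Cmat c u v).PosSemidef) ∧ c ∈ Qbody := by
  have hu : 0 ≤ 1 - u^2 := by nlinarith [quad3 h1 1 (-u) 0]
  have key : ∃ v : ℝ, (Cmat c u v).PosSemidef := by
    rcases eq_or_lt_of_le hu with hD | hD
    · -- u^2 = 1
      have hu2 : u = 1 ∨ u = -1 := by
        have h0 : (u-1)*(u+1) = 0 := by nlinarith
        rcases mul_eq_zero.mp h0 with h | h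
        · exact Or.inl (by linarith)
        · exact Or.inr (by linarith)
      have hc0 : c 0^2 ≤ 1 := by nlinarith [quad3 h1 1 0 (-(c 0))]
      have hc1 : c 1^2 ≤ 1 := by nlinarith [quad3 h2 1 0 (-(c 1))]
      rcases hu2 with rfl | rfl
      · have e0 : c 0 = c 2 := by
          have h' := quad3 h1 1 (-1) (-(c 0 - c 2))
          have hle : (c 0 - c 2)^2 ≤ 0 := by nlinarith
          have h3 : c 0 - c 2 = 0 :=
            pow_eq_zero_iff two_ne_zero |>.mp (le_antisymm hle (sq_nonneg _))
          linarith
        have e1 : c 1 = c 3 := by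
          have h' := quad3 h2 1 (-1) (-(c 1 - c 3))
          have hle : (c 1 - c 3)^2 ≤ 0 := by nlinarith
          have h3 : c 1 - c 3 = 0 :=
            pow_eq_zero_iff two_ne_zero |>.mp (le_antisymm hle (sq_nonneg _))
          linarith
        refine ⟨c 0 * c 1, psd4 c 1 _ ?_⟩
        intro a b s t
        rw [← e0, ← e1]
        nlinarith [sq_nonneg (a+b+c 0*s+c 1*t),
          mul_nonneg (by nlinarith : (0:ℝ) ≤ 1 - c 0^2) (sq_nonneg s),
          mul_nonneg (by nlinarith : (0:ℝ) ≤ 1 - c 1^2) (sq_nonneg t)]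
      · have e0 : c 0 = -c 2 := by
          have h' := quad3 h1 1 1 (-(c 0 + c 2))
          have hle : (c 0 + c 2)^2 ≤ 0 := by nlinarith
          have h3 : c 0 + c 2 = 0 :=
            pow_eq_zero_iff two_ne_zero |>.mp (le_antisymm hle (sq_nonneg _))
          linarith
        have e1 : c 1 = -c 3 := by
          have h' := quad3 h2 1 1 (-(c 1 + c 3))
          have hle : (c 1 + c 3)^2 ≤ 0 := by nlinarith
          have h3 : c 1 + c 3 = 0 :=
            pow_eq_zero_iff two_ne_zero |>.mp (le_antisymm hle (sq_nonneg _))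
          linarith
        refine ⟨c 0 * c 1, psd4 c (-1) _ ?_⟩
        intro a b s t
        have e0' : c 2 = -c 0 := by linarith
        have e1' : c 3 = -c 1 := by linarith
        rw [e0', e1']
        nlinarith [sq_nonneg (a-b+c 0*s+c 1*t),
          mul_nonneg (by nlinarith : (0:ℝ) ≤ 1 - c 0^2) (sq_nonneg s),
          mul_nonneg (by nlinarith : (0:ℝ) ≤ 1 - c 1^2) (sq_nonneg t)]
    · -- 1 - u^2 > 0
      set D := 1 - u^2 with hDdef
      refine ⟨(c 0*c 1 + c 2*c 3 - u*(c 0*c 3 + c 1*c 2))/D, psd4 c u _ ?_⟩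
      intro a b s t
      have det1 : 0 ≤ D - (c 0^2 + c 2^2 - 2*u*(c 0)*(c 2)) := by
        have := quad3 h1 (-(c 0 - u*c 2)) (-(c 2 - u*c 0)) D
        nlinarith [this, hD]
      have det2 : 0 ≤ D - (c 1^2 + c 3^2 - 2*u*(c 1)*(c 3)) := by
        have := quad3 h2 (-(c 1 - u*c 3)) (-(c 3 - u*c 1)) D
        nlinarith [this, hD]
      set P1 := D*a + s*(c 0 - u*c 2) + t*(c 1 - u*c 3) with hP1
      set P2 := D*b + s*(c 2 - u*c 0) + t*(c 3 - u*c 1) with hP2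
      have key2 : D^2 * (a^2+b^2+s^2+t^2+2*u*a*b+2*(c 0)*a*s+2*(c 1)*a*t
          +2*(c 2)*b*s+2*(c 3)*b*t+2*((c 0*c 1 + c 2*c 3 - u*(c 0*c 3 + c 1*c 2))/D)*s*t)
          = (P1 + u*P2)^2 + D*P2^2 + D*s^2*(D - (c 0^2 + c 2^2 - 2*u*(c 0)*(c 2)))
            + D*t^2*(D - (c 1^2 + c 3^2 - 2*u*(c 1)*(c 3))) := by
        rw [hP1, hP2, hDdef]
        have hD' : (1 - u^2) ≠ 0 := by linarith
        field_simp
        ring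
      have h9 : 0 ≤ D^2 * (a^2+b^2+s^2+t^2+2*u*a*b+2*(c 0)*a*s+2*(c 1)*a*t
          +2*(c 2)*b*s+2*(c 3)*b*t+2*((c 0*c 1 + c 2*c 3 - u*(c 0*c 3 + c 1*c 2))/D)*s*t) := by
        rw [key2]
        have n1 := mul_nonneg hD.le (sq_nonneg P2)
        have n2 := mul_nonneg (mul_nonneg hD.le (sq_nonneg s)) det1
        have n3 := mul_nonneg (mul_nonneg hD.le (sq_nonneg t)) det2
        nlinarith [sq_nonneg (P1 + u*P2)]
      exact (mul_nonneg_iff_of_pos_left (by positivity : (0:ℝ) < D^2)).mp h9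
  obtain ⟨v, hv⟩ := key
  exact ⟨⟨v, hv⟩, u, v, hv⟩
end

section
/- A point c = (c₁₁,c₁₂,c₂₁,c₂₂) ∈ ℝ⁴ lies in the quantum correlation body Q if and only if there exist complex 4×4 matrices ρ, A₁, A₂, B₁, B₂ such that ρ is positive semidefinite with trace 1, each A_i and B_j is Hermitian with both 1−A_i, 1+A_i, 1−B_j, 1+B_j positive semidefinite, A_iB_j = B_jA_i for all i,j ∈ {1,2}, and tr(ρ A_i B_j) = c_{ij} for all i,j ∈ {1,2}. (In other words, every point of Q is realized by a quantum model on a Hilbert space of dimension 4.) -/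
open ComplexOrder Matrix Complex

lemma trace_nonneg' {n : Type*} [Fintype n] [DecidableEq n] {M : Matrix n n ℂ}
    (hM : M.PosSemidef) : 0 ≤ M.trace := by
  rw [Matrix.trace]
  apply Finset.sum_nonneg
  intro i _
  have := hM.dotProduct_mulVec_nonneg (Pi.single i 1)
  simpa [dotProduct, Matrix.mulVec, Pi.single_apply, Finset.sum_ite_eq] using this

open scoped MatrixOrder in
lemma trace_mul_nonneg' {n : Type*} [Fintype n] [DecidableEq n] {ρ M : Matrix n n ℂ}
    (hρ : ρ.PosSemidef) (hM : M.PosSemidef) : 0 ≤ (ρ * M).trace := by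
  obtain ⟨R, hR⟩ := CStarAlgebra.nonneg_iff_eq_star_mul_self.mp hρ.nonneg
  rw [hR, Matrix.mul_assoc, Matrix.trace_mul_comm]
  exact trace_nonneg' (by simpa [Matrix.mul_assoc, Matrix.star_eq_conjTranspose] using hM.mul_mul_conjTranspose_same R)

lemma psd_of_two_smul {n : Type*} [Fintype n] [DecidableEq n] {M : Matrix n n ℂ}
    (hM : ((2:ℂ) • M).PosSemidef) : M.PosSemidef := by
  refine Matrix.PosSemidef.of_dotProduct_mulVec_nonneg ?_ ?_
  · have h : ((2:ℂ) • M)ᴴ = (2:ℂ) • M := hM.1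
    have h2 : ((2:ℂ) • M)ᴴ = (2:ℂ) • Mᴴ := by
      simp [Matrix.conjTranspose_smul]
    rw [h2] at h
    exact smul_right_injective (Matrix n n ℂ) (by norm_num : (2:ℂ) ≠ 0) h
  · intro x
    have h := hM.dotProduct_mulVec_nonneg x
    rw [Matrix.smul_mulVec, dotProduct_smul] at h
    rw [Complex.le_def] at h ⊢
    constructor
    · have := h.1; simp at this ⊢; linarith
    · have := h.2; simp at this ⊢; linarith

lemma psd_one_sub_sq {n : Type*} [Fintype n] [DecidableEq n] {X : Matrix n n ℂ}
    (hX : X.IsHermitian) (h1 : (1 - X).PosSemidef) (h2 : (1 + X).PosSemidef) :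
    (1 - X * X).PosSemidef := by
  apply psd_of_two_smul
  have key : (1+X)ᴴ * (1 - X) * (1+X) + (1-X)ᴴ * (1+X) * (1-X) = (2:ℂ) • (1 - X*X) := by
    rw [Matrix.conjTranspose_add, Matrix.conjTranspose_sub, Matrix.conjTranspose_one, hX.eq]
    rw [two_smul]
    noncomm_ring
  rw [← key]
  exact (h1.conjTranspose_mul_mul_same (1+X)).add (h2.conjTranspose_mul_mul_same (1-X))

lemma psd_of_sq {n : Type*} [Fintype n] [DecidableEq n] {M : Matrix n n ℂ}
    (hM : M.IsHermitian) (h : M * M = (2:ℂ) • M) : M.PosSemidef := by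
  have hr : ((Real.sqrt 2)⁻¹ * (Real.sqrt 2)⁻¹ * 2 : ℝ) = 1 := by
    rw [← mul_inv, Real.mul_self_sqrt (by norm_num)]
    norm_num
  have key : M = ((((Real.sqrt 2)⁻¹ : ℝ) : ℂ) • M)ᴴ * ((((Real.sqrt 2)⁻¹ : ℝ) : ℂ) • M) := by
    rw [Matrix.conjTranspose_smul, hM.eq, Matrix.smul_mul, Matrix.mul_smul, h, smul_smul, smul_smul]
    have hs : (star ((((Real.sqrt 2)⁻¹ : ℝ)) : ℂ)) = ((((Real.sqrt 2)⁻¹ : ℝ)) : ℂ) := by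
      rw [Complex.star_def, Complex.conj_ofReal]
    rw [hs]
    have h2 : (((((Real.sqrt 2)⁻¹ : ℝ)) : ℂ) * ((((Real.sqrt 2)⁻¹ : ℝ)) : ℂ)) * (2:ℂ) = 1 := by
      exact_mod_cast hr
    rw [h2, one_smul]
  rw [key]
  exact posSemidef_conjTranspose_mul_self _

lemma psd_one_sub' {M : Matrix (Fin 4) (Fin 4) ℂ} (hH : M.IsHermitian) (hsq : M * M = 1) :
    (1 - M).PosSemidef := by
  apply psd_of_sq (Matrix.isHermitian_one.sub hH)
  calc (1 - M) * (1 - M) = 1 - M - M + M * M := by noncomm_ring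
    _ = (2:ℂ) • (1 - M) := by rw [hsq, two_smul]; abel

lemma psd_one_add' {M : Matrix (Fin 4) (Fin 4) ℂ} (hH : M.IsHermitian) (hsq : M * M = 1) :
    (1 + M).PosSemidef := by
  apply psd_of_sq (Matrix.isHermitian_one.add hH)
  calc (1 + M) * (1 + M) = 1 + M + M + M * M := by noncomm_ring
    _ = (2:ℂ) • (1 + M) := by rw [hsq, two_smul]; abel

lemma trace_herm_real {n : Type*} [Fintype n] [DecidableEq n] {ρ H : Matrix n n ℂ}
    (hρ : ρ.IsHermitian) (hH : H.IsHermitian) :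
    (ρ * H).trace = (((ρ * H).trace.re : ℝ) : ℂ) := by
  have hconj : (starRingEnd ℂ) ((ρ * H).trace) = (ρ * H).trace := by
    have h1 : (starRingEnd ℂ) ((ρ * H).trace) = ((ρ * H)ᴴ).trace := by
      rw [Matrix.trace_conjTranspose]
      rfl
    rw [h1, Matrix.conjTranspose_mul, hρ.eq, hH.eq, Matrix.trace_mul_comm]
  exact (Complex.conj_eq_iff_re.mp hconj).symm

noncomputable def Amat (a₁ a₂ a₃ : ℝ) : Matrix (Fin 4) (Fin 4) ℂ :=
  !![(a₃:ℂ), 0, (a₁:ℂ) - (a₂:ℂ)*I, 0;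
     0, (a₃:ℂ), 0, (a₁:ℂ) - (a₂:ℂ)*I;
     (a₁:ℂ) + (a₂:ℂ)*I, 0, -(a₃:ℂ), 0;
     0, (a₁:ℂ) + (a₂:ℂ)*I, 0, -(a₃:ℂ)]

noncomputable def Bmat (b₁ b₂ b₃ : ℝ) : Matrix (Fin 4) (Fin 4) ℂ :=
  !![(b₃:ℂ), (b₁:ℂ) - (b₂:ℂ)*I, 0, 0;
     (b₁:ℂ) + (b₂:ℂ)*I, -(b₃:ℂ), 0, 0;
     0, 0, (b₃:ℂ), (b₁:ℂ) - (b₂:ℂ)*I;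
     0, 0, (b₁:ℂ) + (b₂:ℂ)*I, -(b₃:ℂ)]

noncomputable def rhoM : Matrix (Fin 4) (Fin 4) ℂ :=
  !![1/2,0,0,1/2; 0,0,0,0; 0,0,0,0; 1/2,0,0,1/2]

lemma Amat_herm (a₁ a₂ a₃ : ℝ) : (Amat a₁ a₂ a₃).IsHermitian := by
  ext i j
  fin_cases i <;> fin_cases j <;>
    simp [Amat, Matrix.conjTranspose_apply, Complex.ext_iff, Matrix.vecHead, Matrix.vecTail]

lemma Bmat_herm (b₁ b₂ b₃ : ℝ) : (Bmat b₁ b₂ b₃).IsHermitian := by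
  ext i j
  fin_cases i <;> fin_cases j <;>
    simp [Bmat, Matrix.conjTranspose_apply, Complex.ext_iff, Matrix.vecHead, Matrix.vecTail]

lemma Amat_sq (a₁ a₂ a₃ : ℝ) (h : a₁^2 + a₂^2 + a₃^2 = 1) :
    Amat a₁ a₂ a₃ * Amat a₁ a₂ a₃ = 1 := by
  have hc : (a₁:ℂ)^2 + (a₂:ℂ)^2 + (a₃:ℂ)^2 = 1 := by exact_mod_cast h
  ext i j
  fin_cases i <;> fin_cases j <;>
    simp [Amat, Matrix.mul_apply, Fin.sum_univ_four, Matrix.one_apply, Matrix.vecHead,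
      Matrix.vecTail] <;>
    first
    | rfl
    | ring1
    | linear_combination hc - (a₂:ℂ)^2 * Complex.I_sq

lemma Bmat_sq (b₁ b₂ b₃ : ℝ) (h : b₁^2 + b₂^2 + b₃^2 = 1) :
    Bmat b₁ b₂ b₃ * Bmat b₁ b₂ b₃ = 1 := by
  have hc : (b₁:ℂ)^2 + (b₂:ℂ)^2 + (b₃:ℂ)^2 = 1 := by exact_mod_cast h
  ext i j
  fin_cases i <;> fin_cases j <;>
    simp [Bmat, Matrix.mul_apply, Fin.sum_univ_four, Matrix.one_apply, Matrix.vecHead,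
      Matrix.vecTail] <;>
    first
    | rfl
    | ring1
    | linear_combination hc - (b₂:ℂ)^2 * Complex.I_sq

lemma AB_comm (a₁ a₂ a₃ b₁ b₂ b₃ : ℝ) :
    Amat a₁ a₂ a₃ * Bmat b₁ b₂ b₃ = Bmat b₁ b₂ b₃ * Amat a₁ a₂ a₃ := by
  ext i j
  fin_cases i <;> fin_cases j <;>
    simp [Amat, Bmat, Matrix.mul_apply, Fin.sum_univ_four, Matrix.vecHead, Matrix.vecTail] <;>
    ring

lemma rho_herm : rhoM.IsHermitian := by
  ext i j
  fin_cases i <;> fin_cases j <;>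
    simp [rhoM, Matrix.conjTranspose_apply, Matrix.vecHead, Matrix.vecTail]

lemma rho_sq : rhoM * rhoM = rhoM := by
  ext i j
  fin_cases i <;> fin_cases j <;>
    norm_num [rhoM, Matrix.mul_apply, Fin.sum_univ_four, Matrix.vecHead, Matrix.vecTail, Matrix.cons_val_two, Matrix.cons_val_three]

lemma rho_psd : rhoM.PosSemidef := by
  have : rhoM = rhoMᴴ * rhoM := by rw [rho_herm.eq, rho_sq]
  rw [this]
  exact posSemidef_conjTranspose_mul_self _

lemma rho_trace : rhoM.trace = 1 := by
  simp [rhoM, Matrix.trace, Fin.sum_univ_four, Matrix.vecHead, Matrix.vecTail]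
  norm_num

lemma trace_formula (a₁ a₂ a₃ b₁ b₂ b₃ : ℝ) :
    (rhoM * Amat a₁ a₂ a₃ * Bmat b₁ b₂ b₃).trace
      = ((a₁*b₁ - a₂*b₂ + a₃*b₃ : ℝ) : ℂ) := by
  simp [rhoM, Amat, Bmat, Matrix.trace, Matrix.mul_apply, Fin.sum_univ_four, Matrix.diag,
    Matrix.vecHead, Matrix.vecTail]
  linear_combination (a₂:ℂ)*b₂ * Complex.I_sq

set_option maxHeartbeats 1000000 in
private lemma forward_dir (c : Fin 4 → ℝ) (u v : ℝ) (hC : (Cmat c u v).PosSemidef) :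
    ∃ (ρ : Matrix (Fin 4) (Fin 4) ℂ) (A B : Fin 2 → Matrix (Fin 4) (Fin 4) ℂ),
      ρ.PosSemidef ∧ ρ.trace = 1 ∧
      (∀ i, (A i).IsHermitian) ∧ (∀ j, (B j).IsHermitian) ∧
      (∀ i, (1 - A i).PosSemidef) ∧ (∀ i, (1 + A i).PosSemidef) ∧
      (∀ j, (1 - B j).PosSemidef) ∧ (∀ j, (1 + B j).PosSemidef) ∧
      (∀ i j, A i * B j = B j * A i) ∧
      (ρ * A 0 * B 0).trace = (c 0 : ℂ) ∧
      (ρ * A 0 * B 1).trace = (c 1 : ℂ) ∧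
      (ρ * A 1 * B 0).trace = (c 2 : ℂ) ∧
      (ρ * A 1 * B 1).trace = (c 3 : ℂ) := by
  have q := hC.dotProduct_mulVec_nonneg
  have hu2 : u^2 ≤ 1 := by
    have := q ![1, -u, 0, 0]
    simp [Cmat, dotProduct, Matrix.mulVec, Fin.sum_univ_four,
      Matrix.vecHead, Matrix.vecTail] at this
    nlinarith [this]
  have h0 : (c 0)^2 ≤ 1 := by
    have := q ![1, 0, -(c 0), 0]
    simp [Cmat, dotProduct, Matrix.mulVec, Fin.sum_univ_four,
      Matrix.vecHead, Matrix.vecTail] at this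
    nlinarith [this]
  have h1 : (c 1)^2 ≤ 1 := by
    have := q ![1, 0, 0, -(c 1)]
    simp [Cmat, dotProduct, Matrix.mulVec, Fin.sum_univ_four,
      Matrix.vecHead, Matrix.vecTail] at this
    nlinarith [this]
  have key0 : (c 2 - u * c 0)^2 ≤ (1-u^2)*(1-(c 0)^2) := by
    rcases eq_or_lt_of_le hu2 with h | h
    · have h' := q ![1, -u, -(c 0 - u * c 2), 0]
      simp [Cmat, dotProduct, Matrix.mulVec, Fin.sum_univ_four,
        Matrix.vecHead, Matrix.vecTail] at h'
      have hs : (c 0 - u * c 2)^2 ≤ 0 := by nlinarith [h']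
      have hs0 : c 0 - u * c 2 = 0 := by nlinarith [hs, sq_nonneg (c 0 - u * c 2)]
      have hz : c 2 - u * c 0 = 0 := by
        linear_combination (-u) * hs0 + (-(c 2)) * h
      rw [hz]
      nlinarith [h, h0]
    · have := q ![u * c 2 - c 0, c 0 * u - c 2, 1 - u^2, 0]
      simp [Cmat, dotProduct, Matrix.mulVec, Fin.sum_univ_four,
        Matrix.vecHead, Matrix.vecTail] at this
      nlinarith [this, sq_nonneg (c 2 - u * c 0)]
  have key1 : (c 3 - u * c 1)^2 ≤ (1-u^2)*(1-(c 1)^2) := by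
    rcases eq_or_lt_of_le hu2 with h | h
    · have h' := q ![1, -u, 0, -(c 1 - u * c 3)]
      simp [Cmat, dotProduct, Matrix.mulVec, Fin.sum_univ_four,
        Matrix.vecHead, Matrix.vecTail] at h'
      have hs : (c 1 - u * c 3)^2 ≤ 0 := by nlinarith [h']
      have hs0 : c 1 - u * c 3 = 0 := by nlinarith [hs, sq_nonneg (c 1 - u * c 3)]
      have hz : c 3 - u * c 1 = 0 := by
        linear_combination (-u) * hs0 + (-(c 3)) * h
      rw [hz]
      nlinarith [h, h1]
    · have := q ![u * c 3 - c 1, c 1 * u - c 3, 0, 1 - u^2]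
      simp [Cmat, dotProduct, Matrix.mulVec, Fin.sum_univ_four,
        Matrix.vecHead, Matrix.vecTail] at this
      nlinarith [this, sq_nonneg (c 3 - u * c 1)]
  -- construct the vectors
  set w : ℝ := Real.sqrt (1 - u^2) with hw
  have hw2 : w^2 = 1 - u^2 := Real.sq_sqrt (by nlinarith)
  set q0 : ℝ := (c 2 - u * c 0) / w with hq0
  set q1 : ℝ := (c 3 - u * c 1) / w with hq1
  have hq0le : (c 0)^2 + q0^2 ≤ 1 := by
    by_cases hw0 : w = 0
    · rw [hq0, hw0, div_zero]
      nlinarith [h0]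
    · have hwpos : 0 < w^2 := by positivity
      have hd : q0^2 ≤ 1 - (c 0)^2 := by
        rw [hq0, div_pow, div_le_iff₀ hwpos]
        nlinarith [key0, hw2]
      linarith
  have hq1le : (c 1)^2 + q1^2 ≤ 1 := by
    by_cases hw0 : w = 0
    · rw [hq1, hw0, div_zero]
      nlinarith [h1]
    · have hwpos : 0 < w^2 := by positivity
      have hd : q1^2 ≤ 1 - (c 1)^2 := by
        rw [hq1, div_pow, div_le_iff₀ hwpos]
        nlinarith [key1, hw2]
      linarith
  set t0 : ℝ := Real.sqrt (1 - (c 0)^2 - q0^2) with ht0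
  set t1 : ℝ := Real.sqrt (1 - (c 1)^2 - q1^2) with ht1
  have ht02 : t0^2 = 1 - (c 0)^2 - q0^2 := Real.sq_sqrt (by nlinarith [hq0le])
  have ht12 : t1^2 = 1 - (c 1)^2 - q1^2 := Real.sq_sqrt (by nlinarith [hq1le])
  have htr2 : u * c 0 + w * q0 = c 2 := by
    by_cases hw0 : w = 0
    · have : 1 - u^2 = 0 := by rw [← hw2, hw0]; ring
      have hz : (c 2 - u * c 0)^2 ≤ 0 := by nlinarith [key0, this]
      have : c 2 - u * c 0 = 0 := by nlinarith [hz, sq_nonneg (c 2 - u * c 0)]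
      rw [hq0, hw0]
      simp
      linarith
    · rw [hq0, mul_div_cancel₀ _ hw0]
      ring
  have htr3 : u * c 1 + w * q1 = c 3 := by
    by_cases hw0 : w = 0
    · have : 1 - u^2 = 0 := by rw [← hw2, hw0]; ring
      have hz : (c 3 - u * c 1)^2 ≤ 0 := by nlinarith [key1, this]
      have : c 3 - u * c 1 = 0 := by nlinarith [hz, sq_nonneg (c 3 - u * c 1)]
      rw [hq1, hw0]
      simp
      linarith
    · rw [hq1, mul_div_cancel₀ _ hw0]
      ring
  -- quantum model
  refine ⟨rhoM, ![Amat 1 0 0, Amat u w 0], ![Bmat (c 0) (-q0) t0, Bmat (c 1) (-q1) t1],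
    rho_psd, rho_trace, ?_, ?_, ?_, ?_, ?_, ?_, ?_, ?_, ?_, ?_, ?_⟩
  · intro i; fin_cases i <;> simp <;> exact Amat_herm _ _ _
  · intro j; fin_cases j <;> simp <;> exact Bmat_herm _ _ _
  · intro i
    fin_cases i <;> simp <;>
      exact psd_one_sub' (Amat_herm _ _ _) (Amat_sq _ _ _ (by nlinarith [hw2]))
  · intro i
    fin_cases i <;> simp <;>
      exact psd_one_add' (Amat_herm _ _ _) (Amat_sq _ _ _ (by nlinarith [hw2]))
  · intro j
    fin_cases j <;> simp
    · exact psd_one_sub' (Bmat_herm _ _ _) (Bmat_sq _ _ _ (by nlinarith [ht02]))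
    · exact psd_one_sub' (Bmat_herm _ _ _) (Bmat_sq _ _ _ (by nlinarith [ht12]))
  · intro j
    fin_cases j <;> simp
    · exact psd_one_add' (Bmat_herm _ _ _) (Bmat_sq _ _ _ (by nlinarith [ht02]))
    · exact psd_one_add' (Bmat_herm _ _ _) (Bmat_sq _ _ _ (by nlinarith [ht12]))
  · intro i j; fin_cases i <;> fin_cases j <;> simp <;> exact AB_comm _ _ _ _ _ _
  · simp
    rw [trace_formula]
    norm_num
  · simp
    rw [trace_formula]
    norm_num
  · simp
    rw [trace_formula]
    have : u * c 0 - w * (-q0) + 0 * t0 = c 2 := by rw [← htr2]; ring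
    rw [this]
  · simp
    rw [trace_formula]
    have : u * c 1 - w * (-q1) + 0 * t1 = c 3 := by rw [← htr3]; ring
    rw [this]


set_option maxHeartbeats 1000000 in
private lemma backward_dir (c : Fin 4 → ℝ)
    (ρ : Matrix (Fin 4) (Fin 4) ℂ) (A B : Fin 2 → Matrix (Fin 4) (Fin 4) ℂ)
    (hρ : ρ.PosSemidef) (hρtr : ρ.trace = 1)
    (hAh : ∀ i, (A i).IsHermitian) (hBh : ∀ j, (B j).IsHermitian)
    (hA1 : ∀ i, (1 - A i).PosSemidef) (hA2 : ∀ i, (1 + A i).PosSemidef)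
    (hB1 : ∀ j, (1 - B j).PosSemidef) (hB2 : ∀ j, (1 + B j).PosSemidef)
    (hcomm : ∀ i j, A i * B j = B j * A i)
    (h00 : (ρ * A 0 * B 0).trace = (c 0 : ℂ)) (h01 : (ρ * A 0 * B 1).trace = (c 1 : ℂ))
    (h10 : (ρ * A 1 * B 0).trace = (c 2 : ℂ)) (h11 : (ρ * A 1 * B 1).trace = (c 3 : ℂ)) :
    ∃ u v : ℝ, (Cmat c u v).PosSemidef := by
  set zu : ℂ := (ρ * (A 0 * A 1 + A 1 * A 0)).trace with hzu
  set zv : ℂ := (ρ * (B 0 * B 1 + B 1 * B 0)).trace with hzv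
  have hzureal : zu = ((zu.re : ℝ) : ℂ) := by
    apply trace_herm_real hρ.1
    have := (hAh 0).eq
    have := (hAh 1).eq
    unfold Matrix.IsHermitian
    rw [Matrix.conjTranspose_add, Matrix.conjTranspose_mul, Matrix.conjTranspose_mul,
      (hAh 0).eq, (hAh 1).eq]
    abel
  have hzvreal : zv = ((zv.re : ℝ) : ℂ) := by
    apply trace_herm_real hρ.1
    unfold Matrix.IsHermitian
    rw [Matrix.conjTranspose_add, Matrix.conjTranspose_mul, Matrix.conjTranspose_mul,
      (hBh 0).eq, (hBh 1).eq]
    abel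
  refine ⟨zu.re / 2, zv.re / 2, Matrix.PosSemidef.of_dotProduct_mulVec_nonneg ?_ ?_⟩
  · -- Hermitian (symmetric real)
    unfold Matrix.IsHermitian
    ext i j
    fin_cases i <;> fin_cases j <;>
      simp [Cmat, Matrix.conjTranspose_apply, Matrix.vecHead, Matrix.vecTail]
  · intro x
    have hstar : star x = x := by
      funext i; simp
    rw [hstar]
    -- trace facts
    have hexpu : zu = (ρ * (A 0 * A 1)).trace + (ρ * (A 1 * A 0)).trace := by
      rw [hzu, Matrix.mul_add, Matrix.trace_add]
    have hexpv : zv = (ρ * (B 0 * B 1)).trace + (ρ * (B 1 * B 0)).trace := by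
      rw [hzv, Matrix.mul_add, Matrix.trace_add]
    have f1 : (ρ * (A 0 * A 1)).trace + (ρ * (A 1 * A 0)).trace = ((2 * (zu.re/2) : ℝ) : ℂ) := by
      rw [← hexpu]
      nth_rewrite 1 [hzureal]
      push_cast
      ring
    have f2 : (ρ * (B 0 * B 1)).trace + (ρ * (B 1 * B 0)).trace = ((2 * (zv.re/2) : ℝ) : ℂ) := by
      rw [← hexpv]
      nth_rewrite 1 [hzvreal]
      push_cast
      ring
    have g00 : (ρ * (A 0 * B 0)).trace = ((c 0 : ℝ) : ℂ) := by
      rw [← Matrix.mul_assoc]; exact h00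
    have g01 : (ρ * (A 0 * B 1)).trace = ((c 1 : ℝ) : ℂ) := by
      rw [← Matrix.mul_assoc]; exact h01
    have g10 : (ρ * (A 1 * B 0)).trace = ((c 2 : ℝ) : ℂ) := by
      rw [← Matrix.mul_assoc]; exact h10
    have g11 : (ρ * (A 1 * B 1)).trace = ((c 3 : ℝ) : ℂ) := by
      rw [← Matrix.mul_assoc]; exact h11
    have g00' : (ρ * (B 0 * A 0)).trace = ((c 0 : ℝ) : ℂ) := by rw [← hcomm 0 0]; exact g00
    have g01' : (ρ * (B 1 * A 0)).trace = ((c 1 : ℝ) : ℂ) := by rw [← hcomm 0 1]; exact g01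
    have g10' : (ρ * (B 0 * A 1)).trace = ((c 2 : ℝ) : ℂ) := by rw [← hcomm 1 0]; exact g10
    have g11' : (ρ * (B 1 * A 1)).trace = ((c 3 : ℝ) : ℂ) := by rw [← hcomm 1 1]; exact g11
    -- sigma terms
    have hσA : ∀ i, 0 ≤ (ρ * (1 - A i * A i)).trace := fun i =>
      trace_mul_nonneg' hρ (psd_one_sub_sq (hAh i) (hA1 i) (hA2 i))
    have hσB : ∀ j, 0 ≤ (ρ * (1 - B j * B j)).trace := fun j =>
      trace_mul_nonneg' hρ (psd_one_sub_sq (hBh j) (hB1 j) (hB2 j))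
    have dA : ∀ i, (ρ * (A i * A i)).trace = 1 - (ρ * (1 - A i * A i)).trace := by
      intro i
      rw [Matrix.mul_sub, Matrix.mul_one, Matrix.trace_sub, hρtr]
      ring
    have dB : ∀ j, (ρ * (B j * B j)).trace = 1 - (ρ * (1 - B j * B j)).trace := by
      intro j
      rw [Matrix.mul_sub, Matrix.mul_one, Matrix.trace_sub, hρtr]
      ring
    -- real representations of sigma terms
    have hσA0 := hσA 0; have hσA1 := hσA 1; have hσB0 := hσB 0; have hσB1 := hσB 1
    rw [Complex.le_def] at hσA0 hσA1 hσB0 hσB1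
    set σ0 : ℂ := (ρ * (1 - A 0 * A 0)).trace with hσ0
    set σ1 : ℂ := (ρ * (1 - A 1 * A 1)).trace with hσ1
    set σ2 : ℂ := (ρ * (1 - B 0 * B 0)).trace with hσ2
    set σ3 : ℂ := (ρ * (1 - B 1 * B 1)).trace with hσ3
    -- Y and its trace
    set Y : Matrix (Fin 4) (Fin 4) ℂ :=
      ((x 0 : ℝ) : ℂ) • A 0 + ((x 1 : ℝ) : ℂ) • A 1 + ((x 2 : ℝ) : ℂ) • B 0
        + ((x 3 : ℝ) : ℂ) • B 1 with hYdef
    have hYherm : Yᴴ = Y := by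
      rw [hYdef]
      simp only [Matrix.conjTranspose_add, Matrix.conjTranspose_smul, Complex.star_def,
        Complex.conj_ofReal, (hAh 0).eq, (hAh 1).eq, (hBh 0).eq, (hBh 1).eq]
    have hYY : (Y * Y).PosSemidef := by
      nth_rewrite 1 [← hYherm]
      exact posSemidef_conjTranspose_mul_self Y
    have hTY : 0 ≤ (ρ * (Y * Y)).trace := trace_mul_nonneg' hρ hYY
    -- the master identity
    have hexp : ((x 0 : ℝ) : ℂ)^2 + ((x 1 : ℝ) : ℂ)^2 + ((x 2 : ℝ) : ℂ)^2 + ((x 3 : ℝ) : ℂ)^2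
        + 2*(((x 0 : ℝ) : ℂ)*((x 1 : ℝ) : ℂ)*((2 * (zu.re/2) : ℝ) : ℂ)/2
          + ((x 0 : ℝ) : ℂ)*((x 2 : ℝ) : ℂ)*((c 0 : ℝ) : ℂ)
          + ((x 0 : ℝ) : ℂ)*((x 3 : ℝ) : ℂ)*((c 1 : ℝ) : ℂ)
          + ((x 1 : ℝ) : ℂ)*((x 2 : ℝ) : ℂ)*((c 2 : ℝ) : ℂ)
          + ((x 1 : ℝ) : ℂ)*((x 3 : ℝ) : ℂ)*((c 3 : ℝ) : ℂ)
          + ((x 2 : ℝ) : ℂ)*((x 3 : ℝ) : ℂ)*((2 * (zv.re/2) : ℝ) : ℂ)/2)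
        = (ρ * (Y * Y)).trace + ((x 0 : ℝ) : ℂ)^2 * σ0 + ((x 1 : ℝ) : ℂ)^2 * σ1
          + ((x 2 : ℝ) : ℂ)^2 * σ2 + ((x 3 : ℝ) : ℂ)^2 * σ3 := by
      rw [hYdef]
      simp only [Matrix.mul_add, Matrix.add_mul, Matrix.smul_mul, Matrix.mul_smul,
        Matrix.trace_add, Matrix.trace_smul, smul_smul, smul_eq_mul]
      rw [hσ0, hσ1, hσ2, hσ3]
      linear_combination (-((x 0 : ℝ) : ℂ)*((x 1 : ℝ) : ℂ)) * f1
        + (-((x 2 : ℝ) : ℂ)*((x 3 : ℝ) : ℂ)) * f2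
        + (-((x 0 : ℝ) : ℂ)*((x 2 : ℝ) : ℂ)) * (g00 + g00')
        + (-((x 0 : ℝ) : ℂ)*((x 3 : ℝ) : ℂ)) * (g01 + g01')
        + (-((x 1 : ℝ) : ℂ)*((x 2 : ℝ) : ℂ)) * (g10 + g10')
        + (-((x 1 : ℝ) : ℂ)*((x 3 : ℝ) : ℂ)) * (g11 + g11')
        + (-((x 0 : ℝ) : ℂ)^2) * dA 0 + (-((x 1 : ℝ) : ℂ)^2) * dA 1
        + (-((x 2 : ℝ) : ℂ)^2) * dB 0 + (-((x 3 : ℝ) : ℂ)^2) * dB 1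
    -- conclude
    have hQval : x ⬝ᵥ (Cmat c (zu.re/2) (zv.re/2)) *ᵥ x
        = (x 0)^2 + (x 1)^2 + (x 2)^2 + (x 3)^2
        + 2*((x 0)*(x 1)*(2 * (zu.re/2))/2 + (x 0)*(x 2)*(c 0) + (x 0)*(x 3)*(c 1)
          + (x 1)*(x 2)*(c 2) + (x 1)*(x 3)*(c 3) + (x 2)*(x 3)*(2 * (zv.re/2))/2) := by
      simp [Cmat, dotProduct, Matrix.mulVec, Fin.sum_univ_four, Matrix.vecHead,
        Matrix.vecTail]
      ring
    rw [hQval]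
    have hσ0r : σ0 = ((σ0.re : ℝ) : ℂ) := by
      rw [Complex.ext_iff]; constructor <;> simp [hσA0.2.symm]
    have hσ1r : σ1 = ((σ1.re : ℝ) : ℂ) := by
      rw [Complex.ext_iff]; constructor <;> simp [hσA1.2.symm]
    have hσ2r : σ2 = ((σ2.re : ℝ) : ℂ) := by
      rw [Complex.ext_iff]; constructor <;> simp [hσB0.2.symm]
    have hσ3r : σ3 = ((σ3.re : ℝ) : ℂ) := by
      rw [Complex.ext_iff]; constructor <;> simp [hσB1.2.symm]
    have hrhs : 0 ≤ (ρ * (Y * Y)).trace + ((x 0 : ℝ) : ℂ)^2 * σ0 + ((x 1 : ℝ) : ℂ)^2 * σ1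
          + ((x 2 : ℝ) : ℂ)^2 * σ2 + ((x 3 : ℝ) : ℂ)^2 * σ3 := by
      have t0 : 0 ≤ ((x 0 : ℝ) : ℂ)^2 * σ0 := by
        rw [hσ0r, ← Complex.ofReal_pow, ← Complex.ofReal_mul]
        rw [Complex.zero_le_real]
        exact mul_nonneg (sq_nonneg _) hσA0.1
      have t1 : 0 ≤ ((x 1 : ℝ) : ℂ)^2 * σ1 := by
        rw [hσ1r, ← Complex.ofReal_pow, ← Complex.ofReal_mul]
        rw [Complex.zero_le_real]
        exact mul_nonneg (sq_nonneg _) hσA1.1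
      have t2 : 0 ≤ ((x 2 : ℝ) : ℂ)^2 * σ2 := by
        rw [hσ2r, ← Complex.ofReal_pow, ← Complex.ofReal_mul]
        rw [Complex.zero_le_real]
        exact mul_nonneg (sq_nonneg _) hσB0.1
      have t3 : 0 ≤ ((x 3 : ℝ) : ℂ)^2 * σ3 := by
        rw [hσ3r, ← Complex.ofReal_pow, ← Complex.ofReal_mul]
        rw [Complex.zero_le_real]
        exact mul_nonneg (sq_nonneg _) hσB1.1
      exact add_nonneg (add_nonneg (add_nonneg (add_nonneg hTY t0) t1) t2) t3
    rw [← hexp] at hrhs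
    have : (0:ℂ) ≤ (((x 0)^2 + (x 1)^2 + (x 2)^2 + (x 3)^2
        + 2*((x 0)*(x 1)*(2 * (zu.re/2))/2 + (x 0)*(x 2)*(c 0) + (x 0)*(x 3)*(c 1)
          + (x 1)*(x 2)*(c 2) + (x 1)*(x 3)*(c 3) + (x 2)*(x 3)*(2 * (zv.re/2))/2) : ℝ) : ℂ) := by
      convert hrhs using 1
      push_cast
      ring
    exact_mod_cast this


theorem stmt18 (c : Fin 4 → ℝ) :
    c ∈ Qbody ↔
      ∃ (ρ : Matrix (Fin 4) (Fin 4) ℂ) (A B : Fin 2 → Matrix (Fin 4) (Fin 4) ℂ),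
        ρ.PosSemidef ∧ ρ.trace = 1 ∧
        (∀ i, (A i).IsHermitian) ∧ (∀ j, (B j).IsHermitian) ∧
        (∀ i, (1 - A i).PosSemidef) ∧ (∀ i, (1 + A i).PosSemidef) ∧
        (∀ j, (1 - B j).PosSemidef) ∧ (∀ j, (1 + B j).PosSemidef) ∧
        (∀ i j, A i * B j = B j * A i) ∧
        (ρ * A 0 * B 0).trace = (c 0 : ℂ) ∧
        (ρ * A 0 * B 1).trace = (c 1 : ℂ) ∧
        (ρ * A 1 * B 0).trace = (c 2 : ℂ) ∧
        (ρ * A 1 * B 1).trace = (c 3 : ℂ) := by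
  constructor
  · rintro ⟨u, v, hC⟩
    exact forward_dir c u v hC
  · rintro ⟨ρ, A, B, hρ, hρtr, hAh, hBh, hA1, hA2, hB1, hB2, hcomm, h00, h01, h10, h11⟩
    exact backward_dir c ρ A B hρ hρtr hAh hBh hA1 hA2 hB1 hB2 hcomm h00 h01 h10 h11
end
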